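/- arXiv:1007.0804 — 14 statements merged into one kernel-verified Lean document; each statement's English description precedes it below -/
import Mathlib

section
/- Let f be an overlap representation of a graph G and S a set of elements. Then the assignment v ↦ f(v) \ S is an overlap representation of G if and only if S does not contain f(u) ∩ f(v), f(u) \ f(v), or f(v) \ f(u) for any edge uv of G. -/
/-- An overlap representation of `G`: vertices are adjacent iff their assigned
finite sets intersect and neither is contained in the other. -/
def IsOverlapRep {V : Type*} (G : SimpleGraph V) (f : V → Finset ℕ) : Prop :=
  ∀ u v : V, u ≠ v →
    (G.Adj u v ↔ ((f u ∩ f v).Nonempty ∧ ¬ f u ⊆ f v ∧ ¬ f v ⊆ f u))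

/-- A pure overlap representation: adjacency iff intersection, and no assigned
set contains another. -/
def IsPureOverlapRep {V : Type*} (G : SimpleGraph V) (f : V → Finset ℕ) : Prop :=
  (∀ u v : V, u ≠ v → (G.Adj u v ↔ (f u ∩ f v).Nonempty)) ∧
  (∀ u v : V, u ≠ v → ¬ f u ⊆ f v)

/-- The size of a representation: cardinality of the union of the assigned sets. -/
noncomputable def repSize {V : Type*} (f : V → Finset ℕ) : ℕ :=
  (⋃ v, (f v : Set ℕ)).ncard

/-- The overlap number of `G`. -/
noncomputable def overlapNumber {V : Type*} (G : SimpleGraph V) : ℕ :=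
  sInf {n | ∃ f : V → Finset ℕ, IsOverlapRep G f ∧ repSize f = n}

/-- The pure overlap number of `G`. -/
noncomputable def pureOverlapNumber {V : Type*} (G : SimpleGraph V) : ℕ :=
  sInf {n | ∃ f : V → Finset ℕ, IsPureOverlapRep G f ∧ repSize f = n}

theorem stmt_1 {V : Type*} (G : SimpleGraph V) (f : V → Finset ℕ)
    (hf : IsOverlapRep G f) (S : Finset ℕ) :
    IsOverlapRep G (fun v => f v \ S) ↔
      ∀ u v : V, G.Adj u v →
        ¬ (f u ∩ f v ⊆ S) ∧ ¬ (f u \ f v ⊆ S) ∧ ¬ (f v \ f u ⊆ S) := by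
  constructor
  · intro h u v hadj
    obtain ⟨⟨x, hx⟩, h1, h2⟩ := (h u v hadj.ne).mp hadj
    rw [Finset.not_subset] at h1 h2
    obtain ⟨y, hy, hy'⟩ := h1
    obtain ⟨z, hz, hz'⟩ := h2
    simp only [Finset.mem_inter, Finset.mem_sdiff, not_and, not_not] at hx hy hy' hz hz'
    refine ⟨Finset.not_subset.mpr ⟨x, Finset.mem_inter.mpr ⟨hx.1.1, hx.2.1⟩, hx.1.2⟩,
      Finset.not_subset.mpr ⟨y, Finset.mem_sdiff.mpr ⟨hy.1, fun hv => hy.2 (hy' hv)⟩, hy.2⟩,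
      Finset.not_subset.mpr ⟨z, Finset.mem_sdiff.mpr ⟨hz.1, fun hv => hz.2 (hz' hv)⟩, hz.2⟩⟩
  · intro h u v hne
    constructor
    · intro hadj
      obtain ⟨h1, h2, h3⟩ := h u v hadj
      rw [Finset.not_subset] at h1 h2 h3
      obtain ⟨x, hx, hx'⟩ := h1
      obtain ⟨y, hy, hy'⟩ := h2
      obtain ⟨z, hz, hz'⟩ := h3
      simp only [Finset.mem_inter, Finset.mem_sdiff] at hx hy hz
      refine ⟨⟨x, Finset.mem_inter.mpr ⟨Finset.mem_sdiff.mpr ⟨hx.1, hx'⟩,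
        Finset.mem_sdiff.mpr ⟨hx.2, hx'⟩⟩⟩,
        Finset.not_subset.mpr ⟨y, Finset.mem_sdiff.mpr ⟨hy.1, hy'⟩, ?_⟩,
        Finset.not_subset.mpr ⟨z, Finset.mem_sdiff.mpr ⟨hz.1, hz'⟩, ?_⟩⟩
      · simp only [Finset.mem_sdiff, not_and]
        intro hv; exact absurd hv hy.2
      · simp only [Finset.mem_sdiff, not_and]
        intro hv; exact absurd hv hz.2
    · rintro ⟨⟨x, hx⟩, h1, h2⟩
      rw [Finset.not_subset] at h1 h2
      obtain ⟨y, hy, hy'⟩ := h1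
      obtain ⟨z, hz, hz'⟩ := h2
      simp only [Finset.mem_inter, Finset.mem_sdiff, not_and, not_not] at hx hy hy' hz hz'
      exact (hf u v hne).mpr ⟨⟨x, Finset.mem_inter.mpr ⟨hx.1.1, hx.2.1⟩⟩,
        Finset.not_subset.mpr ⟨y, hy.1, fun hv => hy.2 (hy' hv)⟩,
        Finset.not_subset.mpr ⟨z, hz.1, fun hv => hz.2 (hz' hv)⟩⟩
end

section
/- Let v be a vertex of a graph G such that N(v) is an independent set and every vertex in N(v) has degree at least 2 in G. Let f be an overlap representation of G, let f' be its restriction to G − v, and suppose {a,b} is f'-uniform (every set assigned to a vertex of G − v contains both a and b or neither). Then either v ↦ f(v)\{a} (applied to all vertices) or v ↦ f(v)\{b} is an overlap representation of G. -/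
section AuxOverlap

variable {V : Type*} {G : SimpleGraph V} {v : V} {f : V → Finset ℕ} {a b : ℕ}

/-- "Good a x": deleting `a` keeps the overlap conditions for the pair `(v, x)`. -/
def GoodDel (f : V → Finset ℕ) (v : V) (a : ℕ) (x : V) : Prop :=
  ((f v \ {a}) ∩ (f x \ {a})).Nonempty ∧
    ¬ (f v \ {a}) ⊆ (f x \ {a}) ∧ ¬ (f x \ {a}) ⊆ (f v \ {a})

lemma not_subset_sdiff (hab : a ≠ b)
    {s t : Finset ℕ} (hs : a ∈ s → b ∈ s) (ht : b ∈ t → a ∈ t)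
    (h : ¬ s ⊆ t) : ¬ (s \ {a}) ⊆ (t \ {a}) := by
  intro hsub
  apply h
  intro e he
  by_cases hea : e = a
  · have hb : b ∈ s := hs (hea ▸ he)
    have hb' : b ∈ t \ {a} := hsub (by simp [Finset.mem_sdiff, hb, Ne.symm hab])
    rw [hea]
    exact ht (Finset.mem_sdiff.mp hb').1
  · have : e ∈ t \ {a} := hsub (by simp [Finset.mem_sdiff, he, hea])
    exact (Finset.mem_sdiff.mp this).1

/-- If all pairs involving `v` remain good when deleting `a`, and `a,b` occur
together in all other sets, then deleting `a` gives an overlap representation. -/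
lemma rep_of_good (hf : IsOverlapRep G f) (hab : a ≠ b)
    (hcd : ∀ u : V, u ≠ v → (a ∈ f u ↔ b ∈ f u))
    (hgood : ∀ x : V, G.Adj v x → GoodDel f v a x) :
    IsOverlapRep G (fun x => f x \ {a}) := by
  intro u w huw
  constructor
  · intro hadj
    by_cases hu : u = v
    · subst hu; exact hgood w hadj
    by_cases hw : w = v
    · subst hw
      obtain ⟨h1, h2, h3⟩ := hgood u hadj.symm
      exact ⟨by rwa [Finset.inter_comm], h3, h2⟩
    obtain ⟨hne, hs1, hs2⟩ := (hf u w huw).mp hadj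
    refine ⟨?_, ?_, ?_⟩
    · obtain ⟨e, he⟩ := hne
      rw [Finset.mem_inter] at he
      by_cases hea : e = a
      · subst hea
        refine ⟨b, ?_⟩
        simp only [Finset.mem_inter, Finset.mem_sdiff, Finset.mem_singleton]
        exact ⟨⟨(hcd u hu).mp he.1, Ne.symm hab⟩, ⟨(hcd w hw).mp he.2, Ne.symm hab⟩⟩
      · refine ⟨e, ?_⟩
        simp only [Finset.mem_inter, Finset.mem_sdiff, Finset.mem_singleton]
        exact ⟨⟨he.1, hea⟩, ⟨he.2, hea⟩⟩
    · exact not_subset_sdiff hab (fun h => (hcd u hu).mp h)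
        (fun h => (hcd w hw).mpr h) hs1
    · exact not_subset_sdiff hab (fun h => (hcd w hw).mp h)
        (fun h => (hcd u hu).mpr h) hs2
  · rintro ⟨hne, hq1, hq2⟩
    apply (hf u w huw).mpr
    refine ⟨?_, ?_, ?_⟩
    · obtain ⟨e, he⟩ := hne
      simp only [Finset.mem_inter, Finset.mem_sdiff, Finset.mem_singleton] at he
      exact ⟨e, Finset.mem_inter.mpr ⟨he.1.1, he.2.1⟩⟩
    · intro h; exact hq1 (Finset.sdiff_subset_sdiff h (Finset.Subset.refl _))
    · intro h; exact hq2 (Finset.sdiff_subset_sdiff h (Finset.Subset.refl _))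

/-- Every neighbour of `v` whose set contains both `a` and `b` contains a third element. -/
lemma third_elt (hf : IsOverlapRep G f)
    (hdeg : ∀ x ∈ G.neighborSet v, ∃ y z : V, y ≠ z ∧ G.Adj x y ∧ G.Adj x z)
    (hcd : ∀ u : V, u ≠ v → (a ∈ f u ↔ b ∈ f u))
    {z : V} (hz : G.Adj v z) :
    ∃ d ∈ f z, d ≠ a ∧ d ≠ b := by
  obtain ⟨y₁, y₂, hy12, h1, h2⟩ := hdeg z hz
  obtain ⟨w, hwv, hzw⟩ : ∃ w : V, w ≠ v ∧ G.Adj z w := by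
    by_cases h : y₁ = v
    · exact ⟨y₂, fun hv => hy12 (h.trans hv.symm), h2⟩
    · exact ⟨y₁, h, h1⟩
  obtain ⟨hne, hs1, _⟩ := (hf z w hzw.ne).mp hzw
  by_cases haw : a ∈ f w
  · have hbw : b ∈ f w := (hcd w hwv).mp haw
    obtain ⟨d, hd, hd2⟩ := Finset.not_subset.mp hs1
    exact ⟨d, hd, fun h => hd2 (h ▸ haw), fun h => hd2 (h ▸ hbw)⟩
  · have hbw : b ∉ f w := fun h => haw ((hcd w hwv).mpr h)
    obtain ⟨e, he⟩ := hne
    rw [Finset.mem_inter] at he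
    exact ⟨e, he.1, fun h => haw (h ▸ he.2), fun h => hbw (h ▸ he.2)⟩

/-- Classification of how deleting `a` can fail for the pair `(v,x)`. -/
lemma notgood_cases (hf : IsOverlapRep G f) (hab : a ≠ b)
    (hcd : ∀ u : V, u ≠ v → (a ∈ f u ↔ b ∈ f u))
    {x : V} (hx : G.Adj v x) (h : ¬ GoodDel f v a x) :
    (a ∈ f v ∧ b ∉ f v ∧ (f v ∩ f x ⊆ {a} ∨ f v \ f x ⊆ {a})) ∨
    (a ∉ f v ∧ b ∈ f v ∧ f x \ f v ⊆ {a}) := by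
  have hxv : x ≠ v := hx.ne'
  obtain ⟨hne, hs1, hs2⟩ := (hf v x hx.ne).mp hx
  rw [GoodDel, not_and_or, not_and_or] at h
  rcases h with h | h | h
  · -- intersection becomes empty: f v ∩ f x ⊆ {a}
    have hsub : f v ∩ f x ⊆ {a} := by
      intro e he
      rw [Finset.mem_inter] at he
      by_contra hea
      rw [Finset.mem_singleton] at hea
      exact h ⟨e, by simp [Finset.mem_inter, Finset.mem_sdiff, he.1, he.2, hea]⟩
    obtain ⟨e, he⟩ := hne
    have hea : e = a := Finset.mem_singleton.mp (hsub he)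
    subst hea
    rw [Finset.mem_inter] at he
    have hbx : b ∈ f x := (hcd x hxv).mp he.2
    have hbv : b ∉ f v := by
      intro hbv
      exact hab.symm (Finset.mem_singleton.mp (hsub (Finset.mem_inter.mpr ⟨hbv, hbx⟩)))
    exact Or.inl ⟨he.1, hbv, Or.inl hsub⟩
  · rw [not_not] at h
    have hsub : f v \ f x ⊆ {a} := by
      intro e he
      rw [Finset.mem_sdiff] at he
      by_contra hea
      rw [Finset.mem_singleton] at hea
      exact he.2 (Finset.mem_sdiff.mp (h (by simp [Finset.mem_sdiff, he.1, hea]))).1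
    obtain ⟨e, he1, he2⟩ := Finset.not_subset.mp hs1
    have hea : e = a := Finset.mem_singleton.mp (hsub (Finset.mem_sdiff.mpr ⟨he1, he2⟩))
    subst hea
    have hbx : b ∉ f x := fun hb => he2 ((hcd x hxv).mpr hb)
    have hbv : b ∉ f v := by
      intro hbv
      exact hab.symm (Finset.mem_singleton.mp (hsub (Finset.mem_sdiff.mpr ⟨hbv, hbx⟩)))
    exact Or.inl ⟨he1, hbv, Or.inr hsub⟩
  · rw [not_not] at h
    have hsub : f x \ f v ⊆ {a} := by
      intro e he
      rw [Finset.mem_sdiff] at he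
      by_contra hea
      rw [Finset.mem_singleton] at hea
      exact he.2 (Finset.mem_sdiff.mp (h (by simp [Finset.mem_sdiff, he.1, hea]))).1
    obtain ⟨e, he1, he2⟩ := Finset.not_subset.mp hs2
    have hea : e = a := Finset.mem_singleton.mp (hsub (Finset.mem_sdiff.mpr ⟨he1, he2⟩))
    subst hea
    have hbx : b ∈ f x := (hcd x hxv).mp he1
    have hbv : b ∈ f v := by
      by_contra hbv
      exact hab.symm (Finset.mem_singleton.mp (hsub (Finset.mem_sdiff.mpr ⟨hbx, hbv⟩)))
    exact Or.inr ⟨he2, hbv, hsub⟩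

/-- The core contradiction: a failure of type I/E for `a` and of type C for `b`
cannot coexist. -/
lemma core2 (hf : IsOverlapRep G f) (hab : a ≠ b)
    (hind : ∀ x ∈ G.neighborSet v, ∀ y ∈ G.neighborSet v, ¬ G.Adj x y)
    (hdeg : ∀ x ∈ G.neighborSet v, ∃ y z : V, y ≠ z ∧ G.Adj x y ∧ G.Adj x z)
    (hcd : ∀ u : V, u ≠ v → (a ∈ f u ↔ b ∈ f u))
    {x y : V} (hx : G.Adj v x) (hy : G.Adj v y)
    (hav : a ∈ f v) (hbv : b ∉ f v)
    (hEx : f v ∩ f x ⊆ {a} ∨ f v \ f x ⊆ {a})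
    (hCy : f y \ f v ⊆ {b}) : False := by
  have hxv : x ≠ v := hx.ne'
  have hyv : y ≠ v := hy.ne'
  obtain ⟨hneY, hsvY, hsYv⟩ := (hf v y hy.ne).mp hy
  obtain ⟨hneX, hsvX, hsXv⟩ := (hf v x hx.ne).mp hx
  -- b ∈ f y
  obtain ⟨e, he1, he2⟩ := Finset.not_subset.mp hsYv
  have heb : e = b := Finset.mem_singleton.mp (hCy (Finset.mem_sdiff.mpr ⟨he1, he2⟩))
  have hby : b ∈ f y := heb ▸ he1
  have hay : a ∈ f y := (hcd y hyv).mpr hby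
  have hysub : ∀ e ∈ f y, e ≠ b → e ∈ f v := by
    intro e he hne
    by_contra h
    exact hne (Finset.mem_singleton.mp (hCy (Finset.mem_sdiff.mpr ⟨he, h⟩)))
  -- third element of f y
  obtain ⟨d, hdy, hda, hdb⟩ := third_elt hf hdeg hcd hy
  have hdv : d ∈ f v := hysub d hdy hdb
  rcases hEx with hE | hI
  · -- type E : f v ∩ f x ⊆ {a}
    have hax : a ∈ f x := by
      obtain ⟨e, he⟩ := hneX
      have : e = a := Finset.mem_singleton.mp (hE he)
      subst this
      exact (Finset.mem_inter.mp he).2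
    have hbx : b ∈ f x := (hcd x hxv).mp hax
    by_cases hxy : x = y
    · subst hxy
      exact hda (Finset.mem_singleton.mp (hE (Finset.mem_inter.mpr ⟨hdv, hdy⟩)))
    · have hnadj : ¬ G.Adj x y := hind x hx y hy
      have h3 := (hf x y hxy)
      have hcases : ¬ ((f x ∩ f y).Nonempty ∧ ¬ f x ⊆ f y ∧ ¬ f y ⊆ f x) :=
        fun hc => hnadj (h3.mpr hc)
      rw [not_and_or, not_and_or, not_not, not_not] at hcases
      rcases hcases with h | h | h
    -- intersection empty impossible: a in both
      · exact h ⟨a, Finset.mem_inter.mpr ⟨hax, hay⟩⟩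
      · -- f x ⊆ f y : then f x ⊆ {a, b}, contradiction via third element of x
        obtain ⟨d', hd'x, hd'a, hd'b⟩ := third_elt hf hdeg hcd hx
        have : d' ∈ f v := hysub d' (h hd'x) hd'b
        exact hd'a (Finset.mem_singleton.mp (hE (Finset.mem_inter.mpr ⟨this, hd'x⟩)))
      · -- f y ⊆ f x : d ∈ f x ∩ f v contradiction
        exact hda (Finset.mem_singleton.mp (hE (Finset.mem_inter.mpr ⟨hdv, h hdy⟩)))
  · -- type I : f v \ f x ⊆ {a}
    have hax : a ∉ f x := by
      obtain ⟨e, he1, he2⟩ := Finset.not_subset.mp hsvX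
      have : e = a := Finset.mem_singleton.mp (hI (Finset.mem_sdiff.mpr ⟨he1, he2⟩))
      subst this
      exact he2
    have hbx : b ∉ f x := fun h => hax ((hcd x hxv).mpr h)
    have hxy : x ≠ y := fun h => hbx (h ▸ hby)
    have hnadj : ¬ G.Adj x y := hind x hx y hy
    have hcases : ¬ ((f x ∩ f y).Nonempty ∧ ¬ f x ⊆ f y ∧ ¬ f y ⊆ f x) :=
      fun hc => hnadj ((hf x y hxy).mpr hc)
    rw [not_and_or, not_and_or, not_not, not_not] at hcases
    rcases hcases with h | h | h
    · -- intersection empty: but d ∈ f x ∩ f y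
      have hdx : d ∈ f x := by
        by_contra hdx
        exact hda (Finset.mem_singleton.mp (hI (Finset.mem_sdiff.mpr ⟨hdv, hdx⟩)))
      exact h ⟨d, Finset.mem_inter.mpr ⟨hdx, hdy⟩⟩
    · -- f x ⊆ f y : then f x ⊆ f v, contradicting adjacency v–x
      apply hsXv
      intro e he
      exact hysub e (h he) (fun hb => hbx (hb ▸ he))
    · -- f y ⊆ f x : b ∈ f x, contradiction
      exact hbx (h hby)

end AuxOverlap

theorem stmt_3 {V : Type*} (G : SimpleGraph V) (v : V)
    (hind : ∀ x ∈ G.neighborSet v, ∀ y ∈ G.neighborSet v, ¬ G.Adj x y)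
    (hdeg : ∀ x ∈ G.neighborSet v, ∃ y z : V, y ≠ z ∧ G.Adj x y ∧ G.Adj x z)
    (f : V → Finset ℕ) (hf : IsOverlapRep G f)
    (a b : ℕ) (hab : a ≠ b)
    (hunif : ∀ u : V, u ≠ v → ({a, b} : Finset ℕ) ⊆ f u ∨ Disjoint ({a, b} : Finset ℕ) (f u)) :
    IsOverlapRep G (fun x => f x \ {a}) ∨ IsOverlapRep G (fun x => f x \ {b}) := by
  have hcd : ∀ u : V, u ≠ v → (a ∈ f u ↔ b ∈ f u) := by
    intro u hu
    rcases hunif u hu with h | h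
    · constructor
      · intro _; exact h (by simp)
      · intro _; exact h (by simp)
    · constructor
      · intro ha; exact absurd ha (Finset.disjoint_left.mp h (by simp))
      · intro hb; exact absurd hb (Finset.disjoint_left.mp h (by simp))
  have hcd' : ∀ u : V, u ≠ v → (b ∈ f u ↔ a ∈ f u) := fun u hu => (hcd u hu).symm
  by_contra hcon
  push_neg at hcon
  obtain ⟨hA, hB⟩ := hcon
  have hxA : ∃ x : V, G.Adj v x ∧ ¬ GoodDel f v a x := by
    by_contra h'
    push_neg at h'
    exact hA (rep_of_good hf hab hcd (fun x hx => h' x hx))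
  have hxB : ∃ y : V, G.Adj v y ∧ ¬ GoodDel f v b y := by
    by_contra h'
    push_neg at h'
    exact hB (rep_of_good hf hab.symm hcd' (fun x hx => h' x hx))
  obtain ⟨x, hx, hgx⟩ := hxA
  obtain ⟨y, hy, hgy⟩ := hxB
  rcases notgood_cases hf hab hcd hx hgx with ⟨hav, hbv, htx⟩ | ⟨hav, hbv, htx⟩ <;>
    rcases notgood_cases hf hab.symm hcd' hy hgy with ⟨hbv', hav', hty⟩ | ⟨hbv', hav', hty⟩
  · exact hbv hbv'
  · exact core2 hf hab hind hdeg hcd hx hy hav hbv htx hty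
  · exact core2 hf hab.symm hind hdeg hcd' hy hx hbv' hav' hty htx
  · exact hav hav'
end

section
/- Let T be a caterpillar whose longest path has vertices v_1,...,v_l in order, with l ≥ 3. Then T has an overlap representation of size l. -/
namespace OverlapAux
open SimpleGraph SimpleGraph.Walk

variable {V : Type*} {G : SimpleGraph V}

lemma getVert_mem_support {x y : V} (p : G.Walk x y) {i : ℕ} (hi : i ≤ p.length) :
    p.getVert i ∈ p.support :=
  Walk.mem_support_iff_exists_getVert.mpr ⟨i, rfl, hi⟩

lemma getVert_inj {x y : V} (p : G.Walk x y) :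
    p.IsPath → ∀ i j, i ≤ p.length → j ≤ p.length → p.getVert i = p.getVert j → i = j := by
  induction p with
  | nil => intro _ i j hi hj _; simp only [Walk.length_nil, Nat.le_zero] at hi hj; omega
  | cons h q ih =>
    intro hp i j hi hj hij
    rw [Walk.cons_isPath_iff] at hp
    match i, j with
    | 0, 0 => rfl
    | 0, j + 1 =>
      exfalso
      apply hp.2
      rw [Walk.getVert_zero, Walk.getVert_cons_succ] at hij
      rw [hij]
      exact getVert_mem_support q (by simpa using hj)
    | i + 1, 0 =>
      exfalso
      apply hp.2
      rw [Walk.getVert_zero, Walk.getVert_cons_succ] at hij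
      rw [← hij]
      exact getVert_mem_support q (by simpa using hi)
    | i + 1, j + 1 =>
      simp only [Walk.getVert_cons_succ] at hij
      have := ih hp.1 i j (by simpa using hi) (by simpa using hj) hij
      omega

lemma adj_getVert_eq_zero {x b y : V} (hac : G.IsAcyclic) (hxb : G.Adj x b)
    (q : G.Walk b y) (hq : q.IsPath) (hx : x ∉ q.support)
    {j : ℕ} (hj : j ≤ q.length) (hadj : G.Adj x (q.getVert j)) : j = 0 := by
  classical
  have hu : q.getVert j ∈ q.support := getVert_mem_support q hj
  have htU : (q.takeUntil _ hu).IsPath := hq.takeUntil hu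
  have hxtU : x ∉ (q.takeUntil _ hu).support := fun h => hx (Walk.support_takeUntil_subset _ hu h)
  have heq := isAcyclic_iff_path_unique.mp hac
    (⟨Walk.cons hxb (q.takeUntil _ hu), htU.cons hxtU⟩ : G.Path x (q.getVert j))
    (SimpleGraph.Path.singleton hadj)
  have hlen := congrArg (fun P : G.Path x (q.getVert j) => P.1.length) heq
  simp only [SimpleGraph.Path.singleton, Walk.length_cons, Walk.length_nil] at hlen
  have hb : b = q.getVert j := Walk.eq_of_length_eq_zero (p := q.takeUntil _ hu) (by omega)
  exact (getVert_inj q hq 0 j (Nat.zero_le _) hj (by rw [Walk.getVert_zero]; exact hb)).symm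

lemma adj_getVert_iff_aux {x y : V} (hac : G.IsAcyclic) (p : G.Walk x y) :
    p.IsPath → ∀ i j, i ≤ p.length → j ≤ p.length →
      G.Adj (p.getVert i) (p.getVert j) → j = i + 1 ∨ i = j + 1 := by
  induction p with
  | nil =>
    intro _ i j hi hj hadj
    simp only [Walk.length_nil, Nat.le_zero] at hi hj
    subst hi; subst hj
    exact absurd rfl hadj.ne
  | cons h q ih =>
    intro hp i j hi hj hadj
    rw [Walk.cons_isPath_iff] at hp
    match i, j with
    | 0, 0 => exact absurd rfl hadj.ne
    | 0, j + 1 =>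
      left
      have : j = 0 := adj_getVert_eq_zero hac h q hp.1 hp.2 (by simpa using hj)
        (by simpa using hadj)
      omega
    | i + 1, 0 =>
      right
      have : i = 0 := adj_getVert_eq_zero hac h q hp.1 hp.2 (by simpa using hi)
        (by simpa using hadj.symm)
      omega
    | i + 1, j + 1 =>
      have := ih hp.1 i j (by simpa using hi) (by simpa using hj) (by simpa using hadj)
      omega

lemma exists_segment {x y : V} (p : G.Walk x y) (hp : p.IsPath) {u w : V}
    (hu : u ∈ p.support) (hw : w ∈ p.support) :
    ∃ q : G.Walk u w, q.IsPath ∧ ∀ z ∈ q.support, z ∈ p.support := by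
  classical
  have hsplit : w ∈ (p.takeUntil u hu).support ∨ w ∈ (p.dropUntil u hu).support := by
    rw [← p.take_spec hu] at hw
    exact (Walk.mem_support_append_iff _ _).mp hw
  rcases hsplit with h1 | h2
  · refine ⟨((p.takeUntil u hu).dropUntil w h1).reverse, ((hp.takeUntil hu).dropUntil h1).reverse,
      fun z hz => ?_⟩
    rw [Walk.support_reverse, List.mem_reverse] at hz
    exact Walk.support_takeUntil_subset p hu (Walk.support_dropUntil_subset _ h1 hz)
  · exact ⟨(p.dropUntil u hu).takeUntil w h2, (hp.dropUntil hu).takeUntil h2,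
      fun z hz => Walk.support_dropUntil_subset p hu (Walk.support_takeUntil_subset _ h2 hz)⟩

lemma unique_attach {x y : V} (hac : G.IsAcyclic) (p : G.Walk x y) (hp : p.IsPath)
    {wl u u' : V} (hwl : wl ∉ p.support) (hu : u ∈ p.support) (hu' : u' ∈ p.support)
    (h1 : G.Adj wl u) (h2 : G.Adj wl u') : u = u' := by
  obtain ⟨q, hq, hsub⟩ := exists_segment p hp hu hu'
  have hwq : wl ∉ q.support := fun h => hwl (hsub _ h)
  have heq := isAcyclic_iff_path_unique.mp hac
    (⟨Walk.cons h1 q, hq.cons hwq⟩ : G.Path wl u') (SimpleGraph.Path.singleton h2)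
  have hlen := congrArg (fun P : G.Path wl u' => P.1.length) heq
  simp only [SimpleGraph.Path.singleton, Walk.length_cons, Walk.length_nil] at hlen
  exact Walk.eq_of_length_eq_zero (p := q) (by omega)



def spineSet (n i : ℕ) : Finset ℕ :=
  if i = 0 then Finset.Icc 1 2 else if i = n then Finset.Icc 1 n
  else Finset.Icc 1 i ∪ {i + 2}

lemma mem_spineSet {n i m : ℕ} (hn : 2 ≤ n) (hi : i ≤ n) :
    m ∈ spineSet n i ↔ ((1 ≤ m ∧ m ≤ i) ∨ (i = 0 ∧ 1 ≤ m ∧ m ≤ 2) ∨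
      (i ≠ 0 ∧ i ≠ n ∧ m = i + 2) ∨ (i = n ∧ 1 ≤ m ∧ m ≤ n)) := by
  unfold spineSet
  split_ifs with h0 hn' <;>
    simp only [Finset.mem_union, Finset.mem_Icc, Finset.mem_singleton] <;> omega

lemma condSwap {A B : Finset ℕ} :
    ((A ∩ B).Nonempty ∧ ¬A ⊆ B ∧ ¬B ⊆ A) ↔ ((B ∩ A).Nonempty ∧ ¬B ⊆ A ∧ ¬A ⊆ B) := by
  rw [Finset.inter_comm]; tauto

lemma spine_cond_lt {n i j : ℕ} (hn : 2 ≤ n) (hj : j ≤ n) (hlt : i < j) :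
    (j = i + 1) ↔ ((spineSet n i ∩ spineSet n j).Nonempty ∧
      ¬spineSet n i ⊆ spineSet n j ∧ ¬spineSet n j ⊆ spineSet n i) := by
  have hi : i ≤ n := by omega
  constructor
  · rintro rfl
    refine ⟨⟨1, Finset.mem_inter.mpr ⟨by rw [mem_spineSet hn hi]; omega,
        by rw [mem_spineSet hn hj]; omega⟩⟩, fun hs => ?_, fun hs => ?_⟩
    · by_cases h0 : i = 0
      · have h2 : (2 : ℕ) ∈ spineSet n i := by rw [mem_spineSet hn hi]; omega
        have := hs h2
        rw [mem_spineSet hn hj] at this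
        omega
      · have h2 : i + 2 ∈ spineSet n i := by rw [mem_spineSet hn hi]; omega
        have := hs h2
        rw [mem_spineSet hn hj] at this
        omega
    · by_cases h0 : i = 0
      · have h2 : (3 : ℕ) ∈ spineSet n (i + 1) := by rw [mem_spineSet hn hj]; omega
        have := hs h2
        rw [mem_spineSet hn hi] at this
        omega
      · have h2 : i + 1 ∈ spineSet n (i + 1) := by rw [mem_spineSet hn hj]; omega
        have := hs h2
        rw [mem_spineSet hn hi] at this
        omega
  · intro hcond
    by_contra hne
    refine hcond.2.1 fun m hm => ?_
    rw [mem_spineSet hn hi] at hm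
    rw [mem_spineSet hn hj]
    omega

lemma leaf_cond {n i k : ℕ} (hn : 2 ≤ n) (hi : i ≤ n) (hk1 : 1 ≤ k) (hk2 : k + 1 ≤ n) :
    (i = k) ↔ ((spineSet n i ∩ Finset.Icc 1 (k + 1)).Nonempty ∧
      ¬spineSet n i ⊆ Finset.Icc 1 (k + 1) ∧ ¬Finset.Icc 1 (k + 1) ⊆ spineSet n i) := by
  constructor
  · rintro rfl
    refine ⟨⟨1, Finset.mem_inter.mpr ⟨by rw [mem_spineSet hn hi]; omega,
        by rw [Finset.mem_Icc]; omega⟩⟩, fun hs => ?_, fun hs => ?_⟩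
    · have h2 : i + 2 ∈ spineSet n i := by rw [mem_spineSet hn hi]; omega
      have := hs h2
      rw [Finset.mem_Icc] at this
      omega
    · have h2 : i + 1 ∈ Finset.Icc 1 (i + 1) := by rw [Finset.mem_Icc]; omega
      have := hs h2
      rw [mem_spineSet hn hi] at this
      omega
  · intro hcond
    by_contra hne
    rcases lt_or_gt_of_ne hne with h | h
    · exact hcond.2.1 fun m hm => by
        rw [mem_spineSet hn hi] at hm; rw [Finset.mem_Icc]; omega
    · exact hcond.2.2 fun m hm => by
        rw [Finset.mem_Icc] at hm; rw [mem_spineSet hn hi]; omega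

end OverlapAux

theorem stmt_4 {V : Type*} [Fintype V] (T : SimpleGraph V) (hT : T.IsTree)
    (x y : V) (p : T.Walk x y) (hp : p.IsPath)
    (hlongest : ∀ (a b : V) (q : T.Walk a b), q.IsPath → q.length ≤ p.length)
    (hcat : ∀ e ∈ T.edgeSet, ∃ w ∈ p.support, w ∈ e)
    (hl : 3 ≤ p.length + 1) :
    ∃ f : V → Finset ℕ, IsOverlapRep T f ∧ repSize f = p.length + 1 := by
  classical
  have hac := hT.IsAcyclic
  set n := p.length with hndef
  have hn : 2 ≤ n := by omega
  have hgy : p.getVert n = y := by rw [hndef]; exact p.getVert_length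
  -- every vertex off the spine has a neighbour on the spine
  have hex : ∀ w : V, w ∉ p.support → ∃ k, T.Adj w (p.getVert k) ∧ k ≤ n := by
    intro w hw
    have hwx : w ≠ x := fun h => hw (h ▸ p.start_mem_support)
    obtain ⟨r⟩ := hT.isConnected.preconnected w x
    cases r with
    | nil => exact absurd rfl hwx
    | @cons _ c _ hadj r' =>
      obtain ⟨z, hz, hze⟩ := hcat _ ((T.mem_edgeSet).mpr hadj)
      rw [Sym2.mem_iff] at hze
      rcases hze with rfl | rfl
      · exact absurd hz hw
      · obtain ⟨k, hk1, hk2⟩ := SimpleGraph.Walk.mem_support_iff_exists_getVert.mp hz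
        exact ⟨k, by rw [hk1]; exact hadj, by omega⟩
  -- the endpoints of the spine have no neighbours off the spine
  have hCx : ∀ w, w ∉ p.support → ¬T.Adj w x := by
    intro w hw hadj
    have hq : (SimpleGraph.Walk.cons hadj p).IsPath := hp.cons hw
    have := hlongest _ _ _ hq
    rw [SimpleGraph.Walk.length_cons] at this
    omega
  have hCy : ∀ w, w ∉ p.support → ¬T.Adj w y := by
    intro w hw hadj
    have hw' : w ∉ p.reverse.support := by
      rwa [SimpleGraph.Walk.support_reverse, List.mem_reverse]
    have hq : (SimpleGraph.Walk.cons hadj p.reverse).IsPath := hp.reverse.cons hw'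
    have := hlongest _ _ _ hq
    rw [SimpleGraph.Walk.length_cons, SimpleGraph.Walk.length_reverse] at this
    omega
  -- attachment index of an off-spine vertex
  let a : ∀ w : V, w ∉ p.support → ℕ := fun w hw => Classical.choose (hex w hw)
  have ha1 : ∀ (w) (hw : w ∉ p.support), T.Adj w (p.getVert (a w hw)) ∧ a w hw ≤ n :=
    fun w hw => Classical.choose_spec (hex w hw)
  have ha2 : ∀ (w) (hw : w ∉ p.support), 1 ≤ a w hw ∧ a w hw + 1 ≤ n := by
    intro w hw
    obtain ⟨had, hle⟩ := ha1 w hw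
    constructor
    · rcases Nat.eq_zero_or_pos (a w hw) with h | h
      · exfalso
        apply hCx w hw
        rw [h, SimpleGraph.Walk.getVert_zero] at had
        exact had
      · exact h
    · rcases Nat.lt_or_ge (a w hw) n with h | h
      · omega
      · exfalso
        apply hCy w hw
        have : a w hw = n := by omega
        rw [this, hgy] at had
        exact had
  have hau : ∀ (w) (hw : w ∉ p.support) (k), k ≤ n → T.Adj w (p.getVert k) → k = a w hw := by
    intro w hw k hk had
    have hle := (ha1 w hw).2
    have heq := OverlapAux.unique_attach hac p hp hw
      (OverlapAux.getVert_mem_support p (by omega))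
      (OverlapAux.getVert_mem_support p (by omega : a w hw ≤ p.length)) had (ha1 w hw).1
    exact OverlapAux.getVert_inj p hp k (a w hw) (by omega) (by omega) heq
  -- the representation
  let f : V → Finset ℕ := fun w =>
    if hw : w ∈ p.support then
      OverlapAux.spineSet n (Classical.choose (SimpleGraph.Walk.mem_support_iff_exists_getVert.mp hw))
    else Finset.Icc 1 (a w hw + 1)
  have hfs : ∀ (i : ℕ), i ≤ n → f (p.getVert i) = OverlapAux.spineSet n i := by
    intro i hi
    have hw : p.getVert i ∈ p.support := OverlapAux.getVert_mem_support p (by omega)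
    have h1 : f (p.getVert i) = OverlapAux.spineSet n
        (Classical.choose (SimpleGraph.Walk.mem_support_iff_exists_getVert.mp hw)) := dif_pos hw
    rw [h1]
    congr 1
    obtain ⟨h2, h3⟩ := Classical.choose_spec (SimpleGraph.Walk.mem_support_iff_exists_getVert.mp hw)
    exact OverlapAux.getVert_inj p hp _ i (by omega) (by omega) h2
  have hfl : ∀ (w) (hw : w ∉ p.support), f w = Finset.Icc 1 (a w hw + 1) :=
    fun w hw => dif_neg hw
  have spine_adj : ∀ i j, i ≤ n → j ≤ n →
      (T.Adj (p.getVert i) (p.getVert j) ↔ (j = i + 1 ∨ i = j + 1)) := by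
    intro i j hi hj
    constructor
    · exact fun h => OverlapAux.adj_getVert_iff_aux hac p hp i j (by omega) (by omega) h
    · rintro (rfl | rfl)
      · exact p.adj_getVert_succ (by omega)
      · exact (p.adj_getVert_succ (by omega)).symm
  have leaf_adj : ∀ (i), i ≤ n → ∀ (w) (hw : w ∉ p.support),
      (T.Adj (p.getVert i) w ↔ i = a w hw) := by
    intro i hi w hw
    constructor
    · intro h
      exact hau w hw i (by omega) h.symm
    · rintro rfl
      exact (ha1 w hw).1.symm
  refine ⟨f, ?_, ?_⟩
  · intro u v huv
    by_cases hu : u ∈ p.support <;> by_cases hv : v ∈ p.support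
    · obtain ⟨i, hiu, hi⟩ := SimpleGraph.Walk.mem_support_iff_exists_getVert.mp hu
      obtain ⟨j, hjv, hj⟩ := SimpleGraph.Walk.mem_support_iff_exists_getVert.mp hv
      subst hiu; subst hjv
      have hij : i ≠ j := fun h => huv (by rw [h])
      rw [spine_adj i j (by omega) (by omega), hfs i (by omega), hfs j (by omega)]
      rcases lt_or_gt_of_ne hij with h | h
      · have hiff := OverlapAux.spine_cond_lt hn (by omega : j ≤ n) h
        constructor
        · rintro (h1 | h1)
          · exact hiff.mp h1
          · omega
        · exact fun hc => Or.inl (hiff.mpr hc)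
      · have hiff := OverlapAux.spine_cond_lt (i := j) (j := i) hn (by omega : i ≤ n) h
        rw [OverlapAux.condSwap]
        constructor
        · rintro (h1 | h1)
          · omega
          · exact hiff.mp h1
        · exact fun hc => Or.inr (hiff.mpr hc)
    · obtain ⟨i, hiu, hi⟩ := SimpleGraph.Walk.mem_support_iff_exists_getVert.mp hu
      subst hiu
      rw [leaf_adj i (by omega) v hv, hfs i (by omega), hfl v hv]
      exact OverlapAux.leaf_cond hn (by omega) (ha2 v hv).1 (ha2 v hv).2
    · obtain ⟨j, hjv, hj⟩ := SimpleGraph.Walk.mem_support_iff_exists_getVert.mp hv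
      subst hjv
      rw [T.adj_comm, OverlapAux.condSwap,
        leaf_adj j (by omega) u hu, hfs j (by omega), hfl u hu]
      exact OverlapAux.leaf_cond hn (by omega) (ha2 u hu).1 (ha2 u hu).2
    · have hna : ¬T.Adj u v := by
        intro hadj
        obtain ⟨z, hz, hze⟩ := hcat _ ((T.mem_edgeSet).mpr hadj)
        rw [Sym2.mem_iff] at hze
        rcases hze with rfl | rfl
        exacts [hu hz, hv hz]
      rw [hfl u hu, hfl v hv]
      apply iff_of_false hna
      rintro ⟨-, h1, h2⟩
      rcases le_total (a u hu) (a v hv) with h | h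
      · exact h1 (Finset.Icc_subset_Icc le_rfl (by omega))
      · exact h2 (Finset.Icc_subset_Icc le_rfl (by omega))
  · have hun : (⋃ w, ((f w : Finset ℕ) : Set ℕ)) = ↑(Finset.Icc 1 (n + 1)) := by
      apply Set.Subset.antisymm
      · refine Set.iUnion_subset fun w => ?_
        intro m hm
        simp only [Finset.mem_coe] at hm ⊢
        rw [Finset.mem_Icc]
        by_cases hw : w ∈ p.support
        · obtain ⟨i, hiu, hi⟩ := SimpleGraph.Walk.mem_support_iff_exists_getVert.mp hw
          subst hiu
          rw [hfs i (by omega), OverlapAux.mem_spineSet hn (by omega)] at hm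
          omega
        · rw [hfl w hw, Finset.mem_Icc] at hm
          have := (ha2 w hw).2
          omega
      · intro m hm
        simp only [Finset.mem_coe, Finset.mem_Icc] at hm
        rcases le_or_gt m n with h | h
        · refine Set.mem_iUnion.mpr ⟨p.getVert n, ?_⟩
          simp only [Finset.mem_coe]
          rw [hfs n le_rfl, OverlapAux.mem_spineSet hn le_rfl]
          omega
        · refine Set.mem_iUnion.mpr ⟨p.getVert (n - 1), ?_⟩
          simp only [Finset.mem_coe]
          rw [hfs (n - 1) (by omega), OverlapAux.mem_spineSet hn (by omega)]
          omega
    simp only [repSize]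
    rw [hun, Set.ncard_coe_finset, Nat.card_Icc]
    omega
end

section
/- In any overlap representation f of a skeleton T (a tree where every leaf's neighbor has degree 2), at most one leaf of T is nonminimal, i.e., at most one leaf x has f(x) properly containing the set assigned to some other vertex. -/
open SimpleGraph

/-- An interior vertex of a path has two distinct neighbors on the path. -/
lemma interior_two_nbrs {V : Type*} {T : SimpleGraph V} {s t m : V}
    (p : T.Walk s t) (hp : p.IsPath) (hm : m ∈ p.support) (hms : m ≠ s) (hmt : m ≠ t) :
    ∃ n₁ n₂ : V, n₁ ≠ n₂ ∧ T.Adj m n₁ ∧ T.Adj m n₂ ∧ n₁ ∈ p.support ∧ n₂ ∈ p.support := by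
  classical
  set p₁ := p.takeUntil m hm with hp₁def
  set p₂ := p.dropUntil m hm with hp₂def
  have hspec : p₁.append p₂ = p := p.take_spec hm
  have hp₁ : p₁.IsPath := hp.takeUntil hm
  have hp₂ : p₂.IsPath := hp.dropUntil hm
  have h1nil : ¬ p₁.reverse.Nil := Walk.not_nil_of_ne hms
  obtain ⟨n₁, h₁, q₁, hq₁⟩ := Walk.not_nil_iff.mp h1nil
  have h2nil : ¬ p₂.Nil := Walk.not_nil_of_ne hmt
  obtain ⟨n₂, h₂, q₂, hq₂⟩ := Walk.not_nil_iff.mp h2nil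
  have hn₁p₁ : n₁ ∈ p₁.support := by
    have : n₁ ∈ p₁.reverse.support := by rw [hq₁]; simp
    rwa [Walk.support_reverse, List.mem_reverse] at this
  have hn₂tail : n₂ ∈ p₂.support.tail := by
    rw [hq₂]; simp
  have hsupp : p.support = p₁.support ++ p₂.support.tail := by
    rw [← hspec, Walk.support_append]
  have hne : n₁ ≠ n₂ := by
    intro h
    have hnodup : (p₁.support ++ p₂.support.tail).Nodup := by
      rw [← hsupp]; exact hp.support_nodup
    exact (List.disjoint_of_nodup_append hnodup) hn₁p₁ (h ▸ hn₂tail)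
  refine ⟨n₁, n₂, hne, h₁, h₂, ?_, ?_⟩
  · rw [hsupp]; exact List.mem_append_left _ hn₁p₁
  · rw [hsupp]; exact List.mem_append_right _ hn₂tail

/-- Containment in `f x` spreads along walks avoiding `x` and its unique neighbor `a`. -/
lemma spread {V : Type*} {T : SimpleGraph V} {f : V → Finset ℕ}
    (hf : IsOverlapRep T f) {x a : V}
    (hax : ∀ v, T.Adj x v ↔ v = a) :
    ∀ {s t : V} (p : T.Walk s t), x ∉ p.support → a ∉ p.support →
      f s ⊆ f x → f t ⊆ f x := by
  intro s t p
  induction p with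
  | nil => exact fun _ _ h => h
  | @cons s v t h p ih =>
    intro hxs has hs
    rw [Walk.support_cons, List.mem_cons, not_or] at hxs has
    have hvx : v ≠ x := fun hv => hxs.2 (hv ▸ p.start_mem_support)
    have hva : v ≠ a := fun hv => has.2 (hv ▸ p.start_mem_support)
    obtain ⟨hne, hnsv, _⟩ := (hf s v h.ne).mp h
    have hnadj : ¬ T.Adj x v := fun had => hva ((hax v).mp had)
    have hxv := (hf x v (Ne.symm hvx)).not.mp hnadj
    push_neg at hxv
    obtain ⟨e, he⟩ := hne
    rw [Finset.mem_inter] at he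
    have hmem : (f x ∩ f v).Nonempty := ⟨e, Finset.mem_inter.mpr ⟨hs he.1, he.2⟩⟩
    have hfvx : f v ⊆ f x := by
      by_cases hc : f x ⊆ f v
      · exact absurd (fun i hi => hc (hs hi)) hnsv
      · exact hxv hmem hc
    exact ih hxs.2 has.2 hfvx

/-- If a leaf `x` (with unique neighbor `a` of degree 2) is nonminimal,
then every vertex other than `x` and `a` has its set contained in `f x`. -/
lemma leaf_spread {V : Type*} {T : SimpleGraph V} (hT : T.IsTree) {f : V → Finset ℕ}
    (hf : IsOverlapRep T f) {x a u : V}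
    (hnx : T.neighborSet x = {a}) (hdega : (T.neighborSet a).ncard = 2)
    (hu : u ≠ x) (huu : f u ⊂ f x) :
    ∀ v : V, v ≠ x → v ≠ a → f v ⊆ f x := by
  classical
  have hax : ∀ v, T.Adj x v ↔ v = a := by
    intro v
    rw [← mem_neighborSet, hnx, Set.mem_singleton_iff]
  have hadjxa : T.Adj x a := (hax a).mpr rfl
  have hxa : x ≠ a := hadjxa.ne
  have hnfa : ¬ f a ⊆ f x := ((hf x a hxa).mp hadjxa).2.2
  have hua : u ≠ a := fun h => hnfa (h ▸ huu.subset)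
  intro v hvx hva
  rcases eq_or_ne v u with rfl | hvu
  · exact huu.subset
  -- get a path from u to v
  obtain ⟨w⟩ := hT.isConnected.preconnected u v
  set p : T.Walk u v := (w.toPath : T.Walk u v) with hpdef
  have hp : p.IsPath := w.toPath.2
  -- x is not on p
  have hxp : x ∉ p.support := by
    intro hmem
    obtain ⟨n₁, n₂, hne, h₁, h₂, _, _⟩ :=
      interior_two_nbrs p hp hmem (Ne.symm hu) (Ne.symm hvx)
    exact hne (((hax n₁).mp h₁).trans (((hax n₂).mp h₂)).symm)
  -- a is not on p
  have hap : a ∉ p.support := by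
    intro hmem
    obtain ⟨n₁, n₂, hne, h₁, h₂, hs₁, hs₂⟩ :=
      interior_two_nbrs p hp hmem (Ne.symm hua) (Ne.symm hva)
    obtain ⟨c, d, hcd, hset⟩ := Set.ncard_eq_two.mp hdega
    have hx' : x ∈ ({c, d} : Set V) := hset ▸ (mem_neighborSet T a x).mpr hadjxa.symm
    have h1' : n₁ ∈ ({c, d} : Set V) := hset ▸ (mem_neighborSet T a n₁).mpr h₁
    have h2' : n₂ ∈ ({c, d} : Set V) := hset ▸ (mem_neighborSet T a n₂).mpr h₂
    have hn₁x : n₁ ≠ x := fun h => hxp (h ▸ hs₁)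
    have hn₂x : n₂ ≠ x := fun h => hxp (h ▸ hs₂)
    simp only [Set.mem_insert_iff, Set.mem_singleton_iff] at hx' h1' h2'
    rcases hx' with rfl | rfl <;> rcases h1' with rfl | rfl <;> rcases h2' with rfl | rfl <;>
      simp_all
  exact spread hf hax p hxp hap huu.subset

theorem stmt_7 {V : Type*} (T : SimpleGraph V) (hT : T.IsTree)
    (hskel : ∀ x : V, (T.neighborSet x).ncard = 1 →
      ∀ y : V, T.Adj x y → (T.neighborSet y).ncard = 2)
    (f : V → Finset ℕ) (hf : IsOverlapRep T f) :
    ∀ x y : V, (T.neighborSet x).ncard = 1 → (T.neighborSet y).ncard = 1 →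
      (∃ u : V, u ≠ x ∧ f u ⊂ f x) → (∃ u : V, u ≠ y ∧ f u ⊂ f y) → x = y := by
  classical
  rintro x y hx1 hy1 ⟨u, hu, hux⟩ ⟨w, hw, hwy⟩
  by_contra hxy
  obtain ⟨a, hax⟩ := Set.ncard_eq_one.mp hx1
  obtain ⟨b, hby⟩ := Set.ncard_eq_one.mp hy1
  have hadjxa : T.Adj x a := (mem_neighborSet T x a).mp (hax ▸ rfl)
  have hadjyb : T.Adj y b := (mem_neighborSet T y b).mp (hby ▸ rfl)
  have hdega : (T.neighborSet a).ncard = 2 := hskel x hx1 a hadjxa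
  have hdegb : (T.neighborSet b).ncard = 2 := hskel y hy1 b hadjyb
  have hnadjxy : ¬ T.Adj x y := fun h => by
    have := hskel x hx1 y h; omega
  have hya : y ≠ a := fun h => hnadjxy (h ▸ hadjxa)
  have hxb : x ≠ b := fun h => hnadjxy (by subst h; exact hadjyb.symm)
  have hfyx : f y ⊆ f x :=
    leaf_spread hT hf hax hdega hu hux y (Ne.symm hxy) hya
  have hfxy : f x ⊆ f y :=
    leaf_spread hT hf hby hdegb hw hwy x hxy hxb
  have hnfa : ¬ f a ⊆ f x := ((hf x a hadjxa.ne).mp hadjxa).2.2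
  rcases eq_or_ne a b with rfl | hab
  · -- a = b : T is essentially a path x - a - y
    have hfeq : f x = f y := Finset.Subset.antisymm hfxy hfyx
    have hua : u ≠ a := fun h => hnfa (h ▸ hux.subset)
    rcases eq_or_ne u y with rfl | huy
    · exact hux.not_subset (hfeq.symm ▸ Finset.Subset.refl (f x) : f x ⊆ f u)
    · -- path from u to x must pass through a, then through y : contradiction
      obtain ⟨w'⟩ := hT.isConnected.preconnected u x
      set p : T.Walk u x := (w'.toPath : T.Walk u x) with hpdef
      have hp : p.IsPath := w'.toPath.2
      have hap : a ∈ p.support := by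
        have hnil : ¬ p.reverse.Nil := Walk.not_nil_of_ne (Ne.symm hu)
        obtain ⟨n, hn, q, hq⟩ := Walk.not_nil_iff.mp hnil
        have hna : n = a := by
          have := (mem_neighborSet T x n).mpr hn
          rw [hax, Set.mem_singleton_iff] at this; exact this
        have : n ∈ p.reverse.support := by rw [hq]; simp
        rw [Walk.support_reverse, List.mem_reverse] at this
        exact hna ▸ this
      obtain ⟨n₁, n₂, hne, h₁, h₂, hs₁, hs₂⟩ :=
        interior_two_nbrs p hp hap (Ne.symm hua) hadjxa.ne.symm
      obtain ⟨c, d, hcd, hset⟩ := Set.ncard_eq_two.mp hdega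
      have hx' : x ∈ ({c, d} : Set V) := hset ▸ (mem_neighborSet T a x).mpr hadjxa.symm
      have hy' : y ∈ ({c, d} : Set V) := hset ▸ (mem_neighborSet T a y).mpr hadjyb.symm
      have h1' : n₁ ∈ ({c, d} : Set V) := hset ▸ (mem_neighborSet T a n₁).mpr h₁
      have h2' : n₂ ∈ ({c, d} : Set V) := hset ▸ (mem_neighborSet T a n₂).mpr h₂
      have hyp : y ∈ p.support := by
        simp only [Set.mem_insert_iff, Set.mem_singleton_iff] at hx' hy' h1' h2'
        rcases hx' with rfl | rfl <;> rcases hy' with rfl | rfl <;>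
          rcases h1' with rfl | rfl <;> rcases h2' with rfl | rfl <;> simp_all
      obtain ⟨m₁, m₂, hmne, hm₁, hm₂, _, _⟩ :=
        interior_two_nbrs p hp hyp (Ne.symm huy) (Ne.symm hxy)
      have e₁ : m₁ = a := by
        have := (mem_neighborSet T y m₁).mpr hm₁
        rw [hby, Set.mem_singleton_iff] at this; exact this
      have e₂ : m₂ = a := by
        have := (mem_neighborSet T y m₂).mpr hm₂
        rw [hby, Set.mem_singleton_iff] at this; exact this
      exact hmne (e₁.trans e₂.symm)
  · -- a ≠ b
    have hfab : f a ⊆ f y :=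
      leaf_spread hT hf hby hdegb hw hwy a (Ne.symm hya) hab
    exact hnfa (hfab.trans hfyx)
end

section
/- Let G be a graph with minimum degree at least k (where k ≥ 2) and let F be a decomposition of G into pairwise edge-disjoint complete subgraphs, each with at most k vertices, whose union covers all edges. Then G has a pure overlap representation of size |F|; in particular, if δ(G) ≥ 2, then Φ(G) ≤ |E(G)|. -/
theorem pure_main {V : Type*} [Fintype V] (G : SimpleGraph V) (k : ℕ) (hk : 2 ≤ k)
    (hδ : ∀ v : V, k ≤ (G.neighborSet v).ncard)
    (F : Finset (Finset V))
    (hclique : ∀ c ∈ F, G.IsClique (c : Set V) ∧ c.card ≤ k)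
    (hdecomp : ∀ u v : V, G.Adj u v → ∃! c, c ∈ F ∧ u ∈ c ∧ v ∈ c) :
    ∃ f : V → Finset ℕ, IsPureOverlapRep G f ∧ repSize f ≤ F.card := by
  classical
  set f : V → Finset ℕ :=
    fun v => (F.filter (fun c => v ∈ c)).image (fun c => F.toList.idxOf c) with hf
  have hmem : ∀ v n, n ∈ f v ↔ ∃ c ∈ F, v ∈ c ∧ F.toList.idxOf c = n := by
    intro v n
    simp [hf, Finset.mem_image, Finset.mem_filter, and_assoc]
  have hinj : ∀ c ∈ F, ∀ d ∈ F, F.toList.idxOf c = F.toList.idxOf d → c = d := by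
    intro c hc d hd h
    exact (List.idxOf_inj (Finset.mem_toList.mpr hc)).mp h
  have hlt : ∀ c ∈ F, F.toList.idxOf c < F.card := by
    intro c hc
    have := List.idxOf_lt_length_iff.mpr (Finset.mem_toList.mpr hc)
    rwa [Finset.length_toList] at this
  have hadj_of : ∀ u v : V, u ≠ v → ∀ c ∈ F, u ∈ c → v ∈ c → G.Adj u v := by
    intro u v huv c hc hu hv
    exact (hclique c hc).1 (Finset.mem_coe.mpr hu) (Finset.mem_coe.mpr hv) huv
  have key : ∀ u v : V, u ≠ v → (G.Adj u v ↔ (f u ∩ f v).Nonempty) := by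
    intro u v huv
    constructor
    · intro hadj
      obtain ⟨c, ⟨hc, hu, hv⟩, -⟩ := hdecomp u v hadj
      exact ⟨F.toList.idxOf c, Finset.mem_inter.mpr
        ⟨(hmem u _).mpr ⟨c, hc, hu, rfl⟩, (hmem v _).mpr ⟨c, hc, hv, rfl⟩⟩⟩
    · rintro ⟨n, hn⟩
      obtain ⟨hnu, hnv⟩ := Finset.mem_inter.mp hn
      obtain ⟨c, hc, huc, hidxc⟩ := (hmem u n).mp hnu
      obtain ⟨d, hd, hvd, hidxd⟩ := (hmem v n).mp hnv
      have : c = d := hinj c hc d hd (hidxc.trans hidxd.symm)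
      exact hadj_of u v huv c hc huc (this ▸ hvd)
  have hA : ∀ w : V, ∃ c ∈ F, w ∈ c := by
    intro w
    have h0 : (G.neighborSet w).ncard ≠ 0 := by have := hδ w; omega
    obtain ⟨x, hx⟩ := Set.nonempty_of_ncard_ne_zero h0
    obtain ⟨c, ⟨hc, hw, -⟩, -⟩ := hdecomp w x hx
    exact ⟨c, hc, hw⟩
  have hout : ∀ w : V, ∀ c ∈ F, w ∈ c → ∃ x ∈ G.neighborSet w, x ∉ c := by
    intro w c hc hw
    by_contra h
    push_neg at h
    have hsub : G.neighborSet w ⊆ ↑(c.erase w) := by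
      intro x hx
      exact Finset.mem_coe.mpr (Finset.mem_erase.mpr ⟨(G.ne_of_adj hx).symm, h x hx⟩)
    have h1 : (G.neighborSet w).ncard ≤ (c.erase w).card := by
      rw [← Set.ncard_coe_finset]
      exact Set.ncard_le_ncard hsub (Finset.finite_toSet _)
    have h2 : (c.erase w).card = c.card - 1 := Finset.card_erase_of_mem hw
    have h3 : c.card ≤ k := (hclique c hc).2
    have h4 : 1 ≤ c.card := Finset.card_pos.mpr ⟨w, hw⟩
    have h5 := hδ w
    omega
  have hB : ∀ w : V, ∃ c ∈ F, ∃ d ∈ F, c ≠ d ∧ w ∈ c ∧ w ∈ d := by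
    intro w
    obtain ⟨c, hc, hw⟩ := hA w
    obtain ⟨x, hx, hxc⟩ := hout w c hc hw
    obtain ⟨d, ⟨hd, hwd, hxd⟩, -⟩ := hdecomp w x hx
    exact ⟨c, hc, d, hd, fun h => hxc (h ▸ hxd), hw, hwd⟩
  have hpure : ∀ u v : V, u ≠ v → ¬ f u ⊆ f v := by
    intro u v huv hsub
    obtain ⟨c, hc, d, hd, hcd, huc, hud⟩ := hB u
    have hvmem : ∀ e ∈ F, u ∈ e → v ∈ e := by
      intro e he hue
      have : F.toList.idxOf e ∈ f v := hsub ((hmem u _).mpr ⟨e, he, hue, rfl⟩)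
      obtain ⟨e', he', hve', hidx⟩ := (hmem v _).mp this
      rwa [hinj e' he' e he hidx] at hve'
    have hvc : v ∈ c := hvmem c hc huc
    have hvd : v ∈ d := hvmem d hd hud
    have hadj : G.Adj u v := hadj_of u v huv c hc huc hvc
    obtain ⟨e, -, hun⟩ := hdecomp u v hadj
    exact hcd ((hun c ⟨hc, huc, hvc⟩).trans (hun d ⟨hd, hud, hvd⟩).symm)
  refine ⟨f, ⟨key, hpure⟩, ?_⟩
  have hsub : (⋃ v, (f v : Set ℕ)) ⊆ ↑(Finset.range F.card) := by
    intro n hn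
    simp only [Set.mem_iUnion, Finset.mem_coe] at hn
    obtain ⟨v, hv⟩ := hn
    obtain ⟨c, hc, -, hidx⟩ := (hmem v n).mp hv
    simp only [Finset.coe_range, Set.mem_Iio]
    exact hidx ▸ hlt c hc
  calc repSize f ≤ (↑(Finset.range F.card) : Set ℕ).ncard :=
        Set.ncard_le_ncard hsub (Finset.finite_toSet _)
    _ = F.card := by rw [Set.ncard_coe_finset, Finset.card_range]

theorem stmt_8 {V : Type*} [Fintype V] (G : SimpleGraph V) (k : ℕ) (hk : 2 ≤ k)
    (hδ : ∀ v : V, k ≤ (G.neighborSet v).ncard)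
    (F : Finset (Finset V))
    (hclique : ∀ c ∈ F, G.IsClique (c : Set V) ∧ c.card ≤ k)
    (hdecomp : ∀ u v : V, G.Adj u v → ∃! c, c ∈ F ∧ u ∈ c ∧ v ∈ c) :
    (∃ f : V → Finset ℕ, IsPureOverlapRep G f ∧ repSize f ≤ F.card) ∧
    (∀ (H : SimpleGraph V), (∀ v : V, 2 ≤ (H.neighborSet v).ncard) →
      pureOverlapNumber H ≤ H.edgeSet.ncard) := by
  classical
  refine ⟨pure_main G k hk hδ F hclique hdecomp, ?_⟩
  intro H hH
  set g : Sym2 V → Finset V :=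
    Sym2.lift ⟨fun a b => ({a, b} : Finset V), fun a b => Finset.pair_comm a b⟩ with hg
  have hfin : H.edgeSet.Finite := Set.toFinite _
  set F' : Finset (Finset V) := hfin.toFinset.image g with hF'
  have hgmk : ∀ a b : V, g s(a, b) = {a, b} := fun a b => rfl
  have hclique' : ∀ c ∈ F', H.IsClique (c : Set V) ∧ c.card ≤ 2 := by
    intro c hc
    obtain ⟨e, he, rfl⟩ := Finset.mem_image.mp hc
    have he' : e ∈ H.edgeSet := hfin.mem_toFinset.mp he
    induction e with
    | _ a b =>
      have hab : H.Adj a b := he'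
      rw [hgmk]
      constructor
      · intro x hx y hy hxy
        simp only [Finset.coe_insert, Finset.coe_singleton, Set.mem_insert_iff,
          Set.mem_singleton_iff] at hx hy
        rcases hx with rfl | rfl <;> rcases hy with rfl | rfl <;>
          first | exact absurd rfl hxy | exact hab | exact hab.symm
      · exact Finset.card_insert_le _ _ |>.trans (by simp)
  have hdecomp' : ∀ u v : V, H.Adj u v → ∃! c, c ∈ F' ∧ u ∈ c ∧ v ∈ c := by
    intro u v hadj
    refine ⟨{u, v}, ⟨Finset.mem_image.mpr ⟨s(u, v), hfin.mem_toFinset.mpr hadj, hgmk u v⟩,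
      by simp, by simp⟩, ?_⟩
    rintro c ⟨hcF, huc, hvc⟩
    have hsub : ({u, v} : Finset V) ⊆ c := by
      intro x hx
      rcases Finset.mem_insert.mp hx with rfl | hx
      · exact huc
      · exact (Finset.mem_singleton.mp hx) ▸ hvc
    have hcard : c.card ≤ ({u, v} : Finset V).card := by
      rw [Finset.card_pair hadj.ne]
      exact (hclique' c hcF).2
    exact (Finset.eq_of_subset_of_card_le hsub hcard).symm
  obtain ⟨f, hrep, hsz⟩ := pure_main H 2 le_rfl hH F' hclique' hdecomp'
  have h1 : pureOverlapNumber H ≤ repSize f := Nat.sInf_le ⟨f, hrep, rfl⟩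
  have h2 : F'.card ≤ H.edgeSet.ncard := by
    rw [Set.ncard_eq_toFinset_card' ]
    calc F'.card ≤ hfin.toFinset.card := Finset.card_image_le
      _ = H.edgeSet.toFinset.card := by rw [Set.Finite.toFinset_eq_toFinset]
  exact h1.trans (hsz.trans h2)
end

section
/- If G is triangle-free, then Φ(G) ≥ |E(G)|; moreover if additionally δ(G) ≥ 2, then Φ(G) = |E(G)|. -/
lemma mk_out' {V : Type*} (e : Sym2 V) : s(e.out.1, e.out.2) = e := by
  rw [Sym2.mk, Prod.mk.eta, e.out_eq]

lemma shared_elem_eq {V : Type*} (G : SimpleGraph V) (hfree : G.CliqueFree 3)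
    (f : V → Finset ℕ) (hf : IsPureOverlapRep G f) {a b c d : V} {x : ℕ}
    (hab : G.Adj a b) (hcd : G.Adj c d)
    (ha : x ∈ f a) (hb : x ∈ f b) (hc : x ∈ f c) (hd : x ∈ f d) :
    s(a, b) = s(c, d) := by
  classical
  have hadj_of_mem : ∀ {p q : V}, p ≠ q → x ∈ f p → x ∈ f q → G.Adj p q := by
    intro p q hpq hp hq
    exact (hf.1 p q hpq).2 ⟨x, Finset.mem_inter.2 ⟨hp, hq⟩⟩
  by_cases hc1 : c ≠ a ∧ c ≠ b
  · exact (hfree {a, b, c} (SimpleGraph.is3Clique_triple_iff.2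
      ⟨hab, hadj_of_mem hc1.1.symm ha hc, hadj_of_mem hc1.2.symm hb hc⟩)).elim
  by_cases hd1 : d ≠ a ∧ d ≠ b
  · exact (hfree {a, b, d} (SimpleGraph.is3Clique_triple_iff.2
      ⟨hab, hadj_of_mem hd1.1.symm ha hd, hadj_of_mem hd1.2.symm hb hd⟩)).elim
  rw [not_and_or, not_ne_iff, not_ne_iff] at hc1 hd1
  rcases hc1 with rfl | rfl <;> rcases hd1 with rfl | rfl
  · exact absurd rfl hcd.ne
  · rfl
  · exact Sym2.eq_swap
  · exact absurd rfl hcd.ne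

open Classical in
lemma lower_bound {V : Type*} [Fintype V] (G : SimpleGraph V) (hfree : G.CliqueFree 3)
    (f : V → Finset ℕ) (hf : IsPureOverlapRep G f) : G.edgeSet.ncard ≤ repSize f := by
  classical
  have hUfin : (⋃ v, ((f v : Set ℕ))).Finite := Set.finite_iUnion fun v => (f v).finite_toSet
  have hadjout : ∀ e ∈ G.edgeSet, G.Adj e.out.1 e.out.2 := by
    intro e he
    rw [← SimpleGraph.mem_edgeSet, mk_out' e]; exact he
  have hpick : ∀ e ∈ G.edgeSet, ((f e.out.1) ∩ (f e.out.2)).Nonempty := fun e he =>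
    (hf.1 _ _ (hadjout e he).ne).1 (hadjout e he)
  set φ : Sym2 V → ℕ := fun e =>
    if h : ((f e.out.1) ∩ (f e.out.2)).Nonempty then h.choose else 0 with hφ
  have hφmem : ∀ e ∈ G.edgeSet, φ e ∈ f e.out.1 ∧ φ e ∈ f e.out.2 := by
    intro e he
    have h := hpick e he
    simpa only [hφ, dif_pos h, ← Finset.mem_inter] using h.choose_spec
  apply Set.ncard_le_ncard_of_injOn φ ?_ ?_ hUfin
  · intro e he
    exact Set.mem_iUnion.2 ⟨e.out.1, (hφmem e he).1⟩
  · intro e he e' he' heq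
    have h := hφmem e he
    have h' := hφmem e' he'
    rw [heq] at h
    rw [← mk_out' e, ← mk_out' e']
    exact shared_elem_eq G hfree f hf (hadjout e he) (hadjout e' he') h.1 h.2 h'.1 h'.2

-- existence of some pure overlap rep (any finite graph)
lemma exists_rep {V : Type*} [Fintype V] (G : SimpleGraph V) :
    ∃ f : V → Finset ℕ, IsPureOverlapRep G f := by
  classical
  set enc : Sym2 V → ℕ := fun e => 2 * (Fintype.equivFin (Sym2 V) e : ℕ) with henc
  set tag : V → ℕ := fun v => 2 * (Fintype.equivFin V v : ℕ) + 1 with htag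
  have henc_inj : Function.Injective enc := fun e e' h => by
    simpa [henc, Fin.val_eq_val] using h
  have htag_inj : Function.Injective tag := fun v v' h => by
    simpa [htag, Fin.val_eq_val] using h
  have hne_te : ∀ v e, tag v ≠ enc e := by
    intro v e h
    simp only [htag, henc] at h
    omega
  refine ⟨fun v => insert (tag v) ((G.incidenceFinset v).image enc), ?_, ?_⟩
  · intro u v huv
    constructor
    · intro hadj
      refine ⟨enc s(u, v), Finset.mem_inter.2 ⟨?_, ?_⟩⟩
      · refine Finset.mem_insert_of_mem (Finset.mem_image_of_mem enc ?_)
        rw [SimpleGraph.mem_incidenceFinset]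
        exact (G.mem_incidenceSet u v).2 hadj
      · refine Finset.mem_insert_of_mem (Finset.mem_image_of_mem enc ?_)
        rw [SimpleGraph.mem_incidenceFinset, Sym2.eq_swap]
        exact (G.mem_incidenceSet v u).2 hadj.symm
    · rintro ⟨x, hx⟩
      rw [Finset.mem_inter, Finset.mem_insert, Finset.mem_insert] at hx
      obtain ⟨h1, h2⟩ := hx
      rcases h1 with rfl | h1
      · rcases h2 with h2 | h2
        · exact absurd (htag_inj h2) huv
        · obtain ⟨e, _, he2⟩ := Finset.mem_image.1 h2
          exact absurd he2.symm (hne_te u e)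
      · rcases h2 with rfl | h2
        · obtain ⟨e, _, he2⟩ := Finset.mem_image.1 h1
          exact absurd he2.symm (hne_te v e)
        · obtain ⟨e, he1, rfl⟩ := Finset.mem_image.1 h1
          obtain ⟨e', he1', he2'⟩ := Finset.mem_image.1 h2
          obtain rfl := henc_inj he2'
          rw [SimpleGraph.mem_incidenceFinset (G := G)] at he1 he1'
          exact G.adj_of_mem_incidenceSet huv he1 he1'
  · intro u v huv hsub
    have := hsub (Finset.mem_insert_self (tag u) _)
    rw [Finset.mem_insert] at this
    rcases this with h | h
    · exact huv (htag_inj h)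
    · obtain ⟨e, _, he2⟩ := Finset.mem_image.1 h
      exact hne_te u e he2.symm

lemma optimal_rep {V : Type*} [Fintype V] (G : SimpleGraph V)
    (hmin : ∀ v : V, 2 ≤ (G.neighborSet v).ncard) :
    ∃ f : V → Finset ℕ, IsPureOverlapRep G f ∧ repSize f = G.edgeSet.ncard := by
  classical
  set enc : Sym2 V → ℕ := fun e => (Fintype.equivFin (Sym2 V) e : ℕ) with henc
  have henc_inj : Function.Injective enc := fun e e' h => by
    simpa [henc, Fin.val_eq_val] using h
  refine ⟨fun v => (G.incidenceFinset v).image enc, ⟨?_, ?_⟩, ?_⟩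
  · intro u v huv
    constructor
    · intro hadj
      refine ⟨enc s(u, v), Finset.mem_inter.2 ⟨?_, ?_⟩⟩
      · refine Finset.mem_image_of_mem enc ?_
        rw [SimpleGraph.mem_incidenceFinset]
        exact (G.mem_incidenceSet u v).2 hadj
      · refine Finset.mem_image_of_mem enc ?_
        rw [SimpleGraph.mem_incidenceFinset, Sym2.eq_swap]
        exact (G.mem_incidenceSet v u).2 hadj.symm
    · rintro ⟨x, hx⟩
      rw [Finset.mem_inter] at hx
      obtain ⟨h1, h2⟩ := hx
      obtain ⟨e, he1, rfl⟩ := Finset.mem_image.1 h1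
      obtain ⟨e', he1', he2'⟩ := Finset.mem_image.1 h2
      obtain rfl := henc_inj he2'
      rw [SimpleGraph.mem_incidenceFinset] at he1 he1'
      exact G.adj_of_mem_incidenceSet huv he1 he1'
  · intro u v huv hsub
    -- pick a neighbor w of u with w ≠ v
    have hw : ∃ w ∈ G.neighborSet u, w ≠ v := by
      by_contra h
      push_neg at h
      have hsub' : G.neighborSet u ⊆ {v} := fun w hw => h w hw
      have := (hmin u).trans (Set.ncard_le_ncard hsub' (Set.finite_singleton v))
      simp [Set.ncard_singleton] at this
    obtain ⟨w, hw1, hw2⟩ := hw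
    have hadj : G.Adj u w := hw1
    have hmem : enc s(u, w) ∈ (G.incidenceFinset u).image enc := by
      refine Finset.mem_image_of_mem enc ?_
      rw [SimpleGraph.mem_incidenceFinset]
      exact (G.mem_incidenceSet u w).2 hadj
    have hmem' := hsub hmem
    obtain ⟨e', he1', he2'⟩ := Finset.mem_image.1 hmem'
    obtain rfl := henc_inj he2'
    rw [SimpleGraph.mem_incidenceFinset] at he1'
    have hv : v ∈ s(u, w) := he1'.2
    rw [Sym2.mem_iff] at hv
    rcases hv with rfl | rfl
    · exact huv rfl
    · exact hw2 rfl
  · have himg : (⋃ v, (((G.incidenceFinset v).image enc : Finset ℕ) : Set ℕ))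
        = enc '' G.edgeSet := by
      ext x
      simp only [Set.mem_iUnion, Finset.coe_image, Set.mem_image, Finset.mem_coe]
      constructor
      · rintro ⟨v, e, he, rfl⟩
        rw [SimpleGraph.mem_incidenceFinset] at he
        exact ⟨e, he.1, rfl⟩
      · rintro ⟨e, he, rfl⟩
        refine ⟨e.out.1, e, ?_, rfl⟩
        rw [SimpleGraph.mem_incidenceFinset]
        exact ⟨he, Sym2.out_fst_mem e⟩
    rw [repSize, himg, Set.ncard_image_of_injective _ henc_inj]

theorem stmt_9 {V : Type*} [Fintype V] (G : SimpleGraph V) (hfree : G.CliqueFree 3) :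
    G.edgeSet.ncard ≤ pureOverlapNumber G ∧
    ((∀ v : V, 2 ≤ (G.neighborSet v).ncard) → pureOverlapNumber G = G.edgeSet.ncard) := by
  have hlow : G.edgeSet.ncard ≤ pureOverlapNumber G := by
    apply le_csInf
    · obtain ⟨f, hf⟩ := exists_rep G
      exact ⟨repSize f, f, hf, rfl⟩
    · rintro n ⟨f, hf, rfl⟩
      exact lower_bound G hfree f hf
  refine ⟨hlow, fun hmin => ?_⟩
  obtain ⟨f, hf, hsize⟩ := optimal_rep G hmin
  exact le_antisymm (Nat.sInf_le ⟨f, hf, hsize⟩) hlow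
end

section
/- If v is a vertex of degree at most 2 in a graph G with at least three vertices, then Φ(G) ≤ Φ(G − v) + 2, with strict inequality when v is isolated. -/
open Classical in
noncomputable def canonRep {V : Type*} [Fintype V] (G : SimpleGraph V) (u : V) : Finset ℕ :=
  insert ((Fintype.equivFin V u : ℕ))
    ((G.neighborFinset u).image fun w =>
      Fintype.card V + Nat.pair (min (Fintype.equivFin V u : ℕ) (Fintype.equivFin V w : ℕ))
        (max (Fintype.equivFin V u : ℕ) (Fintype.equivFin V w : ℕ)))

lemma canonRep_pure {V : Type*} [Fintype V] (G : SimpleGraph V) :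
    IsPureOverlapRep G (canonRep G) := by
  classical
  set e := Fintype.equivFin V with he
  have hlt : ∀ u : V, (e u : ℕ) < Fintype.card V := fun u => (e u).isLt
  have hmem : ∀ u x, x ∈ canonRep G u ↔ x = (e u : ℕ) ∨
      ∃ w, G.Adj u w ∧ x = Fintype.card V + Nat.pair (min (e u : ℕ) (e w : ℕ)) (max (e u : ℕ) (e w : ℕ)) := by
    intro u x
    simp [canonRep, SimpleGraph.mem_neighborFinset, eq_comm, ← he]
  constructor
  · intro u w huw
    constructor
    · intro hadj
      refine ⟨Fintype.card V + Nat.pair (min (e u : ℕ) (e w : ℕ)) (max (e u : ℕ) (e w : ℕ)), ?_⟩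
      rw [Finset.mem_inter, hmem, hmem]
      exact ⟨Or.inr ⟨w, hadj, rfl⟩, Or.inr ⟨u, hadj.symm, by rw [min_comm, max_comm]⟩⟩
    · rintro ⟨z, hz⟩
      rw [Finset.mem_inter, hmem, hmem] at hz
      obtain ⟨h1, h2⟩ := hz
      rcases h1 with h1 | ⟨a, haa, h1⟩ <;> rcases h2 with h2 | ⟨b, hbb, h2⟩
      · exact absurd (e.injective (Fin.val_injective (h1 ▸ h2))) huw
      · subst h1; have := hlt u; omega
      · subst h2; have := hlt w; omega
      · subst h1
        have hp : Nat.pair (min (e u : ℕ) (e a : ℕ)) (max (e u : ℕ) (e a : ℕ))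
            = Nat.pair (min (e w : ℕ) (e b : ℕ)) (max (e w : ℕ) (e b : ℕ)) := by omega
        rw [Nat.pair_eq_pair] at hp
        have hne : (e u : ℕ) ≠ (e w : ℕ) := fun h =>
          huw (e.injective (Fin.val_injective h))
        have : (e w : ℕ) = (e a : ℕ) := by omega
        have : w = a := e.injective (Fin.val_injective this)
        subst this
        exact haa
  · intro u w huw hsub
    have hx : (e u : ℕ) ∈ canonRep G u := (hmem u _).mpr (Or.inl rfl)
    have := (hmem w _).mp (hsub hx)
    rcases this with h | ⟨b, _, h⟩
    · exact huw (e.injective (Fin.val_injective h))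
    · have := hlt u; omega

lemma pureOverlapNumber_exists_min {V : Type*} [Fintype V] (G : SimpleGraph V) :
    ∃ f : V → Finset ℕ, IsPureOverlapRep G f ∧ repSize f = pureOverlapNumber G := by
  have hne : {n | ∃ f : V → Finset ℕ, IsPureOverlapRep G f ∧ repSize f = n}.Nonempty :=
    ⟨repSize (canonRep G), canonRep G, canonRep_pure G, rfl⟩
  exact Nat.sInf_mem hne

lemma pureOverlapNumber_le {V : Type*} (G : SimpleGraph V) (f : V → Finset ℕ)
    (hf : IsPureOverlapRep G f) : pureOverlapNumber G ≤ repSize f :=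
  Nat.sInf_le ⟨f, hf, rfl⟩

lemma finset_subset_pair {α : Type*} [DecidableEq α] (s : Finset α) (hs : s.card ≤ 2) (d : α) :
    ∃ a b : α, s ⊆ {a, b} := by
  rcases s.eq_empty_or_nonempty with h | ⟨a, ha⟩
  · exact ⟨d, d, by simp [h]⟩
  rcases (s.erase a).eq_empty_or_nonempty with h | ⟨b, hb⟩
  · refine ⟨a, a, fun c hc => ?_⟩
    rcases eq_or_ne c a with rfl | hca
    · simp
    · exact absurd (Finset.mem_erase.mpr ⟨hca, hc⟩) (by simp [h])
  refine ⟨a, b, fun c hc => ?_⟩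
  rcases eq_or_ne c a with rfl | hca
  · simp
  · have h1 : (s.erase a).card ≤ 1 := by
      have := Finset.card_erase_of_mem ha; omega
    have := Finset.card_le_one.mp h1 c (Finset.mem_erase.mpr ⟨hca, hc⟩) b hb
    simp [this]

theorem stmt_10 {V : Type*} [Fintype V] (G : SimpleGraph V) (v : V)
    (hdeg : (G.neighborSet v).ncard ≤ 2) (hcard : 3 ≤ Fintype.card V) :
    pureOverlapNumber G ≤ pureOverlapNumber (G.induce {u : V | u ≠ v}) + 2 ∧
    (G.neighborSet v = ∅ →
      pureOverlapNumber G < pureOverlapNumber (G.induce {u : V | u ≠ v}) + 2) := by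
  classical
  set s : Set V := {u : V | u ≠ v} with hs
  haveI : Fintype ↥s := Fintype.ofFinite _
  obtain ⟨f₀, hf₀, hsize⟩ := pureOverlapNumber_exists_min (G.induce s)
  -- every vertex of the subtype has a distinct companion
  have hex : ∀ w : ↥s, ∃ w' : ↥s, w' ≠ w := by
    rintro ⟨u, hu⟩
    have hu' : u ≠ v := hu
    have h1 : u ∈ Finset.univ.erase v := Finset.mem_erase.mpr ⟨hu', Finset.mem_univ u⟩
    have h2 : ((Finset.univ.erase v).erase u).Nonempty := by
      rw [← Finset.card_pos, Finset.card_erase_of_mem h1,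
        Finset.card_erase_of_mem (Finset.mem_univ v), Finset.card_univ]
      omega
    obtain ⟨u', hu'2⟩ := h2
    rw [Finset.mem_erase, Finset.mem_erase] at hu'2
    exact ⟨⟨u', hu'2.2.1⟩, fun h => hu'2.1 (congrArg Subtype.val h)⟩
  -- all assigned sets are nonempty
  have hne0 : ∀ w : ↥s, (f₀ w).Nonempty := by
    intro w
    rw [Finset.nonempty_iff_ne_empty]
    intro h
    obtain ⟨w', hw'⟩ := hex w
    exact hf₀.2 w w' (Ne.symm hw') (by rw [h]; exact Finset.empty_subset _)
  -- bound on old elements, fresh elements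
  set B : Finset ℕ := Finset.univ.sup f₀ with hB
  have hBsub : ∀ w, f₀ w ⊆ B := fun w => Finset.le_sup (Finset.mem_univ w)
  set M : ℕ := B.sup id with hM
  have hold : ∀ w z, z ∈ f₀ w → z ≤ M := fun w z hz => Finset.le_sup (f := id) (hBsub w hz)
  set x : ℕ := M + 1 with hxdef
  set y : ℕ := M + 2 with hydef
  have hxf : ∀ w, x ∉ f₀ w := fun w h => by have := hold w _ h; omega
  have hyf : ∀ w, y ∉ f₀ w := fun w h => by have := hold w _ h; omega
  have hxy : x ≠ y := by omega
  -- the union of the old representation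
  set A : Set ℕ := ⋃ w : ↥s, (f₀ w : Set ℕ) with hA
  have hAfin : A.Finite := Set.finite_iUnion fun w => (f₀ w).finite_toSet
  have hAcard : A.ncard = pureOverlapNumber (G.induce s) := hsize
  -- neighbors of v
  obtain ⟨a, b, hab⟩ : ∃ a b : V, ∀ u, G.Adj v u → u = a ∨ u = b := by
    have hfin := (G.neighborSet v).toFinite
    have hc : hfin.toFinset.card ≤ 2 := by
      rwa [← Set.ncard_eq_toFinset_card _ hfin]
    obtain ⟨a, b, hab⟩ := finset_subset_pair hfin.toFinset hc v
    refine ⟨a, b, fun u hu => ?_⟩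
    have : u ∈ hfin.toFinset := hfin.mem_toFinset.mpr hu
    simpa using hab this
  -- the extension sets
  set E : V → Finset ℕ := fun u => if u = a ∧ G.Adj v u then {x}
      else if u = b ∧ G.Adj v u then {y} else ∅ with hE
  have hEcases : ∀ u, E u = ∅ ∨ (E u = {x} ∧ u = a) ∨ (E u = {y} ∧ u = b) := by
    intro u
    simp only [hE]
    split_ifs with h1 h2
    · exact Or.inr (Or.inl ⟨rfl, h1.1⟩)
    · exact Or.inr (Or.inr ⟨rfl, h2.1⟩)
    · exact Or.inl rfl
  have hEsub : ∀ u z, z ∈ E u → z = x ∨ z = y := by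
    intro u z hz
    rcases hEcases u with h | ⟨h, _⟩ | ⟨h, _⟩ <;> rw [h] at hz <;> simp_all
  have hEadj : ∀ u, (E u).Nonempty → G.Adj v u := by
    intro u h
    simp only [hE] at h
    split_ifs at h with h1 h2
    · exact h1.2
    · exact h2.2
    · simp at h
  have hadjE : ∀ u, G.Adj v u → (E u).Nonempty := by
    intro u h
    simp only [hE]
    split_ifs with h1 h2
    · simp
    · simp
    · rcases hab u h with rfl | rfl
      · exact absurd ⟨rfl, h⟩ h1
      · exact absurd ⟨rfl, h⟩ h2
  set g : V → Finset ℕ := fun u => if h : u ≠ v then f₀ ⟨u, h⟩ ∪ E u else {x, y} with hg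
  have hgv : g v = {x, y} := by simp [hg]
  have hgu : ∀ (u) (h : u ≠ v), g u = f₀ ⟨u, h⟩ ∪ E u := by intro u h; simp [hg, h]
  -- adjacency with v
  have key : ∀ u, u ≠ v → (G.Adj v u ↔ (g v ∩ g u).Nonempty) := by
    intro u hu
    rw [hgv, hgu u hu]
    constructor
    · intro h
      obtain ⟨z, hz⟩ := hadjE u h
      refine ⟨z, Finset.mem_inter.mpr ⟨?_, Finset.mem_union_right _ hz⟩⟩
      rcases hEsub u z hz with rfl | rfl <;> simp
    · rintro ⟨z, hz⟩
      rw [Finset.mem_inter, Finset.mem_union] at hz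
      obtain ⟨hz1, hz2⟩ := hz
      have hzxy : z = x ∨ z = y := by simpa using hz1
      rcases hz2 with hz2 | hz2
      · exfalso; rcases hzxy with rfl | rfl
        exacts [hxf _ hz2, hyf _ hz2]
      · exact hEadj u ⟨z, hz2⟩
  -- adjacency between old vertices
  have adj2 : ∀ u w (hu : u ≠ v) (hw : w ≠ v), u ≠ w →
      (G.Adj u w ↔ (g u ∩ g w).Nonempty) := by
    intro u w hu hw huw
    have hsub : (⟨u, hu⟩ : ↥s) ≠ ⟨w, hw⟩ := fun h => huw (congrArg Subtype.val h)
    have hadj' : G.Adj u w ↔ (f₀ ⟨u, hu⟩ ∩ f₀ ⟨w, hw⟩).Nonempty := hf₀.1 _ _ hsub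
    rw [hgu u hu, hgu w hw, hadj']
    constructor
    · rintro ⟨z, hz⟩
      rw [Finset.mem_inter] at hz
      exact ⟨z, Finset.mem_inter.mpr ⟨Finset.mem_union_left _ hz.1,
        Finset.mem_union_left _ hz.2⟩⟩
    · rintro ⟨z, hz⟩
      rw [Finset.mem_inter, Finset.mem_union, Finset.mem_union] at hz
      obtain ⟨h1, h2⟩ := hz
      rcases h1 with h1 | h1
      · rcases h2 with h2 | h2
        · exact ⟨z, Finset.mem_inter.mpr ⟨h1, h2⟩⟩
        · exfalso
          have := hold _ _ h1
          rcases hEsub w z h2 with rfl | rfl <;> omega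
      · rcases h2 with h2 | h2
        · exfalso
          have := hold _ _ h2
          rcases hEsub u z h1 with rfl | rfl <;> omega
        · exfalso
          rcases hEcases u with hc | ⟨hc, rfl⟩ | ⟨hc, rfl⟩ <;>
            rcases hEcases w with hd | ⟨hd, hw2⟩ | ⟨hd, hw2⟩ <;>
              rw [hc] at h1 <;> rw [hd] at h2 <;>
                simp only [Finset.notMem_empty, Finset.mem_singleton] at h1 h2 <;> subst_vars <;> have := hxy.symm <;> contradiction
  have pure_g : IsPureOverlapRep G g := by
    constructor
    · intro u w huw
      by_cases hu : u = v
      · replace hu := hu.symm; subst hu; exact key w (Ne.symm huw)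
      · by_cases hw : w = v
        · replace hw := hw.symm; subst hw; rw [G.adj_comm, Finset.inter_comm]; exact key u hu
        · exact adj2 u w hu hw huw
    · intro u w huw hsub
      by_cases hu : u = v
      · replace hu := hu.symm; subst hu
        have hw : w ≠ v := Ne.symm huw
        rw [hgv, hgu w hw] at hsub
        have hx' := hsub (Finset.mem_insert_self x {y})
        have hy' := hsub (Finset.mem_insert_of_mem (Finset.mem_singleton_self y))
        rw [Finset.mem_union] at hx' hy'
        have hxE : x ∈ E w := hx'.resolve_left (hxf _)
        have hyE : y ∈ E w := hy'.resolve_left (hyf _)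
        rcases hEcases w with h | ⟨h, _⟩ | ⟨h, _⟩ <;> rw [h] at hxE hyE <;>
          simp only [Finset.notMem_empty, Finset.mem_singleton] at hxE hyE <;> omega
      · by_cases hw : w = v
        · replace hw := hw.symm; subst hw
          rw [hgu u hu, hgv] at hsub
          obtain ⟨z, hz⟩ := hne0 ⟨u, hu⟩
          have hzin := hsub (Finset.mem_union_left _ hz)
          have hzM := hold _ _ hz
          have : z = x ∨ z = y := by simpa using hzin
          omega
        · rw [hgu u hu, hgu w hw] at hsub
          refine hf₀.2 ⟨u, hu⟩ ⟨w, hw⟩ (fun h => huw (congrArg Subtype.val h)) ?_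
          intro z hz
          have hzin := hsub (Finset.mem_union_left _ hz)
          rw [Finset.mem_union] at hzin
          rcases hzin with h | h
          · exact h
          · exfalso
            have := hold _ _ hz
            rcases hEsub w z h with rfl | rfl <;> omega
  -- size bound
  have hgsub : (⋃ u, (g u : Set ℕ)) ⊆ A ∪ {x, y} := by
    intro z hz
    simp only [Set.mem_iUnion] at hz
    obtain ⟨u, hz⟩ := hz
    by_cases hu : u = v
    · replace hu := hu.symm; subst hu; rw [hgv] at hz; right; simpa using hz
    · rw [hgu u hu] at hz
      rcases Finset.mem_union.mp hz with h | h
      · exact Or.inl (Set.mem_iUnion.mpr ⟨⟨u, hu⟩, h⟩)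
      · right; rcases hEsub u z h with rfl | rfl <;> simp
  have hsize_g : repSize g ≤ pureOverlapNumber (G.induce s) + 2 := by
    have h1 : repSize g ≤ (A ∪ {x, y}).ncard :=
      Set.ncard_le_ncard hgsub (hAfin.union ((Set.finite_singleton y).insert x))
    have h2 : (A ∪ ({x, y} : Set ℕ)).ncard ≤ A.ncard + ({x, y} : Set ℕ).ncard :=
      Set.ncard_union_le _ _
    have h3 : ({x, y} : Set ℕ).ncard ≤ 2 := by
      have := Set.ncard_insert_le x ({y} : Set ℕ)
      simpa [Set.ncard_singleton] using this
    omega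
  have hmain : pureOverlapNumber G ≤ pureOverlapNumber (G.induce s) + 2 :=
    (pureOverlapNumber_le G g pure_g).trans hsize_g
  refine ⟨hmain, fun hiso => ?_⟩
  -- the isolated case
  have hnoadj : ∀ u, ¬ G.Adj v u := by
    intro u h
    have : u ∈ G.neighborSet v := h
    rw [hiso] at this
    exact this
  set g' : V → Finset ℕ := fun u => if h : u ≠ v then f₀ ⟨u, h⟩ else {x} with hg'
  have hg'v : g' v = {x} := by simp [hg']
  have hg'u : ∀ (u) (h : u ≠ v), g' u = f₀ ⟨u, h⟩ := by intro u h; simp [hg', h]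
  have key' : ∀ u, u ≠ v → (G.Adj v u ↔ (g' v ∩ g' u).Nonempty) := by
    intro u hu
    rw [hg'v, hg'u u hu]
    constructor
    · intro h; exact absurd h (hnoadj u)
    · rintro ⟨z, hz⟩
      rw [Finset.mem_inter, Finset.mem_singleton] at hz
      obtain ⟨rfl, hz2⟩ := hz
      exact absurd hz2 (hxf _)
  have pure_g' : IsPureOverlapRep G g' := by
    constructor
    · intro u w huw
      by_cases hu : u = v
      · replace hu := hu.symm; subst hu; exact key' w (Ne.symm huw)
      · by_cases hw : w = v
        · replace hw := hw.symm; subst hw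
          rw [G.adj_comm, Finset.inter_comm]; exact key' u hu
        · have hsub : (⟨u, hu⟩ : ↥s) ≠ ⟨w, hw⟩ := fun h => huw (congrArg Subtype.val h)
          have hadj' : G.Adj u w ↔ (f₀ ⟨u, hu⟩ ∩ f₀ ⟨w, hw⟩).Nonempty := hf₀.1 _ _ hsub
          rw [hg'u u hu, hg'u w hw]
          exact hadj'
    · intro u w huw hsub
      by_cases hu : u = v
      · replace hu := hu.symm; subst hu
        have hw : w ≠ v := Ne.symm huw
        rw [hg'v, hg'u w hw] at hsub
        exact hxf _ (hsub (Finset.mem_singleton_self x))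
      · by_cases hw : w = v
        · replace hw := hw.symm; subst hw
          rw [hg'u u hu, hg'v] at hsub
          obtain ⟨z, hz⟩ := hne0 ⟨u, hu⟩
          have hzin := hsub hz
          rw [Finset.mem_singleton] at hzin
          subst hzin
          exact hxf _ hz
        · rw [hg'u u hu, hg'u w hw] at hsub
          exact hf₀.2 ⟨u, hu⟩ ⟨w, hw⟩ (fun h => huw (congrArg Subtype.val h)) hsub
  have hg'sub : (⋃ u, (g' u : Set ℕ)) ⊆ A ∪ {x} := by
    intro z hz
    simp only [Set.mem_iUnion] at hz
    obtain ⟨u, hz⟩ := hz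
    by_cases hu : u = v
    · replace hu := hu.symm; subst hu; rw [hg'v] at hz; right; simpa using hz
    · rw [hg'u u hu] at hz
      exact Or.inl (Set.mem_iUnion.mpr ⟨⟨u, hu⟩, hz⟩)
  have hsize_g' : repSize g' ≤ pureOverlapNumber (G.induce s) + 1 := by
    have h1 : repSize g' ≤ (A ∪ {x}).ncard :=
      Set.ncard_le_ncard hg'sub (hAfin.union (Set.finite_singleton x))
    have h2 : (A ∪ ({x} : Set ℕ)).ncard ≤ A.ncard + ({x} : Set ℕ).ncard :=
      Set.ncard_union_le _ _
    have h3 : ({x} : Set ℕ).ncard = 1 := Set.ncard_singleton x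
    omega
  have := (pureOverlapNumber_le G g' pure_g').trans hsize_g'
  omega
end

section
/- If a graph G has a vertex v whose neighborhood is empty or equals the neighborhood of another vertex w ≠ v, then φ(G) = φ(G − v). -/
lemma sInf_eq_of_aux (A B : Set ℕ) (hBA : B ⊆ A) (hdom : ∀ n ∈ A, ∃ m ∈ B, m ≤ n) :
    sInf A = sInf B := by
  rcases A.eq_empty_or_nonempty with hA | hA
  · subst hA
    rw [Set.subset_empty_iff.mp hBA]
  · obtain ⟨m, hmB, hle⟩ := hdom _ (Nat.sInf_mem hA)
    exact le_antisymm (Nat.sInf_le (hBA (Nat.sInf_mem ⟨m, hmB⟩)))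
      (le_trans (Nat.sInf_le hmB) hle)

theorem stmt_11 {V : Type*} (G : SimpleGraph V) (v : V)
    (h : G.neighborSet v = ∅ ∨ ∃ w : V, w ≠ v ∧ G.neighborSet w = G.neighborSet v) :
    overlapNumber G = overlapNumber (G.induce {u : V | u ≠ v}) := by
  classical
  apply sInf_eq_of_aux
  · -- every size achievable for the induced graph is achievable for G
    rintro n ⟨g, hg, rfl⟩
    rcases h with hN | ⟨w, hw, hN⟩
    · -- v is isolated: extend with the empty set
      have hnadj : ∀ u, ¬ G.Adj v u := by
        intro u hu
        exact (Set.eq_empty_iff_forall_notMem.mp hN u) hu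
      refine ⟨fun u => if hu : u = v then ∅ else g ⟨u, hu⟩, ?_, ?_⟩
      · intro a b hab
        by_cases ha : a = v
        · subst ha
          simp only [dif_pos rfl]
          constructor
          · intro had; exact absurd had (hnadj b)
          · rintro ⟨⟨x, hx⟩, -⟩; simp at hx
        · by_cases hb : b = v
          · rw [hb]
            simp only [dif_pos rfl, dif_neg ha]
            constructor
            · intro had; exact absurd had.symm (hnadj a)
            · rintro ⟨⟨x, hx⟩, -⟩; simp at hx
          · simp only [dif_neg ha, dif_neg hb]
            have := hg ⟨a, ha⟩ ⟨b, hb⟩ (by simp [Subtype.ext_iff, hab])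
            exact this
      · unfold repSize
        congr 1
        apply Set.Subset.antisymm
        · refine Set.iUnion_subset fun u => ?_
          by_cases hu : u = v
          · simp [hu]
          · simp only [dif_neg hu]
            exact Set.subset_iUnion (fun x : {u : V | u ≠ v} => ((g x : Set ℕ))) ⟨u, hu⟩
        · refine Set.iUnion_subset fun x => ?_
          have : ((g x : Set ℕ)) = ((if hu : (x : V) = v then (∅ : Finset ℕ) else g ⟨x, hu⟩ : Finset ℕ) : Set ℕ) := by
            rw [dif_neg x.2]
          rw [this]
          exact Set.subset_iUnion (fun u : V => (((if hu : u = v then (∅ : Finset ℕ) else g ⟨u, hu⟩) : Finset ℕ) : Set ℕ)) (x : V)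
    · -- v has a twin w: extend with g w
      have hadj : ∀ u, G.Adj v u ↔ G.Adj w u := by
        intro u
        rw [← SimpleGraph.mem_neighborSet, ← SimpleGraph.mem_neighborSet, hN]
      have hvw : ¬ G.Adj v w := by
        intro had
        have : G.Adj w w := (hadj w).mp had
        exact G.loopless.irrefl w this
      refine ⟨fun u => if hu : u = v then g ⟨w, hw⟩ else g ⟨u, hu⟩, ?_, ?_⟩
      · intro a b hab
        by_cases ha : a = v
        · have hb : b ≠ v := fun hbv => hab (ha.trans hbv.symm)
          rw [ha]
          simp only [dif_pos rfl, dif_neg hb]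
          by_cases hbw : b = w
          · have hgb : g ⟨b, hb⟩ = g ⟨w, hw⟩ := by
              congr 1
              exact Subtype.ext hbw
            rw [hgb]
            constructor
            · intro had; exact (hvw (hbw ▸ had)).elim
            · rintro ⟨-, hsub, -⟩; exact absurd (subset_refl _) hsub
          · rw [hadj b]
            have := hg ⟨w, hw⟩ ⟨b, hb⟩ (by simp [Subtype.ext_iff]; exact fun e => hbw e.symm)
            exact this
        · by_cases hb : b = v
          · rw [hb]
            simp only [dif_pos rfl, dif_neg ha]
            by_cases haw : a = w
            · have hga : g ⟨a, ha⟩ = g ⟨w, hw⟩ := by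
                congr 1
                exact Subtype.ext haw
              rw [hga]
              constructor
              · intro had; exact (hvw (haw ▸ had.symm)).elim
              · rintro ⟨-, hsub, -⟩; exact absurd (subset_refl _) hsub
            · rw [G.adj_comm, hadj a, G.adj_comm]
              have := hg ⟨a, ha⟩ ⟨w, hw⟩ (by simp [Subtype.ext_iff]; exact haw)
              exact this
          · simp only [dif_neg ha, dif_neg hb]
            exact hg ⟨a, ha⟩ ⟨b, hb⟩ (by simp [Subtype.ext_iff, hab])
      · unfold repSize
        congr 1
        apply Set.Subset.antisymm
        · refine Set.iUnion_subset fun u => ?_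
          by_cases hu : u = v
          · simp only [dif_pos hu]
            exact Set.subset_iUnion (fun x : {u : V | u ≠ v} => ((g x : Set ℕ))) ⟨w, hw⟩
          · simp only [dif_neg hu]
            exact Set.subset_iUnion (fun x : {u : V | u ≠ v} => ((g x : Set ℕ))) ⟨u, hu⟩
        · refine Set.iUnion_subset fun x => ?_
          have : ((g x : Set ℕ)) = ((if hu : (x : V) = v then g ⟨w, hw⟩ else g ⟨x, hu⟩ : Finset ℕ) : Set ℕ) := by
            rw [dif_neg x.2]
          rw [this]
          exact Set.subset_iUnion (fun u : V => (((if hu : u = v then g ⟨w, hw⟩ else g ⟨u, hu⟩) : Finset ℕ) : Set ℕ)) (x : V)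
  · -- restriction of a representation of G
    rintro n ⟨f, hf, rfl⟩
    refine ⟨repSize (fun x : {u : V | u ≠ v} => f x), ⟨_, ?_, rfl⟩, ?_⟩
    · intro a b hab
      exact hf a b (fun e => hab (Subtype.ext e))
    · unfold repSize
      set S : Set ℕ := ⋃ u, (f u : Set ℕ) with hS
      set T : Set ℕ := ⋃ x : {u : V | u ≠ v}, (f x : Set ℕ) with hT
      have hTS : T ⊆ S := Set.iUnion_subset fun x => Set.subset_iUnion (fun u => ((f u : Set ℕ))) (x : V)
      have hST : S ⊆ T ∪ (f v : Set ℕ) := by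
        refine Set.iUnion_subset fun u => ?_
        by_cases hu : u = v
        · subst hu; exact Set.subset_union_right
        · exact Set.subset_union_of_subset_left
            (Set.subset_iUnion (fun x : {u : V | u ≠ v} => ((f x : Set ℕ))) ⟨u, hu⟩) _
      by_cases hfin : S.Finite
      · exact Set.ncard_le_ncard hTS hfin
      · have hTinf : T.Infinite := by
          intro hTfin
          exact hfin ((hTfin.union (f v).finite_toSet).subset hST)
        rw [Set.Infinite.ncard hTinf, Set.Infinite.ncard hfin]
end

section
/- For n ≥ 3, the n-book B_n (the union of n−2 triangles sharing a common edge) has overlap number φ(B_n) = 3. -/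
/-- The `n`-book: two "hub" vertices adjacent to everything, forming `n - 2`
triangles sharing a common edge. -/
def book (n : ℕ) : SimpleGraph (Fin n) :=
  SimpleGraph.fromRel (fun u v => (u : ℕ) < 2 ∨ (v : ℕ) < 2)

private lemma book_aux (n : ℕ) (u v : Fin n) (hne : (u:ℕ) ≠ (v:ℕ))
    (f : Fin n → Finset ℕ)
    (hf : f = fun w : Fin n =>
      if (w:ℕ) = 0 then ({0,1} : Finset ℕ) else if (w:ℕ) = 1 then {1,2} else {0,2}) :
    (((u:ℕ) < 2 ∨ (v:ℕ) < 2) ↔ ((f u ∩ f v).Nonempty ∧ ¬ f u ⊆ f v ∧ ¬ f v ⊆ f u)) := by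
  by_cases hu0 : (u:ℕ) = 0 <;> by_cases hu1 : (u:ℕ) = 1 <;>
    by_cases hv0 : (v:ℕ) = 0 <;> by_cases hv1 : (v:ℕ) = 1 <;>
    simp_all [hf] <;> first | decide | omega

theorem stmt_12 (n : ℕ) (hn : 3 ≤ n) : overlapNumber (book n) = 3 := by
  classical
  set f : Fin n → Finset ℕ :=
    fun w : Fin n =>
      if (w:ℕ) = 0 then ({0,1} : Finset ℕ) else if (w:ℕ) = 1 then {1,2} else {0,2} with hf
  have hrep : IsOverlapRep (book n) f := by
    intro u v huv
    have hne : (u:ℕ) ≠ (v:ℕ) := fun h => huv (Fin.ext h)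
    have hadj : (book n).Adj u v ↔ ((u:ℕ) < 2 ∨ (v:ℕ) < 2) := by
      simp only [book, SimpleGraph.fromRel_adj, ne_eq, huv, not_false_iff, true_and]
      tauto
    rw [hadj]
    exact book_aux n u v hne f hf
  have hsize : repSize f = 3 := by
    have hU : (⋃ v, (f v : Set ℕ)) = ({0,1,2} : Set ℕ) := by
      apply Set.Subset.antisymm
      · intro x hx
        simp only [Set.mem_iUnion] at hx
        obtain ⟨v, hv⟩ := hx
        simp only [hf] at hv
        split_ifs at hv <;> simp_all <;> tauto
      · intro x hx
        simp only [Set.mem_iUnion]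
        rcases hx with h | h | h
        · exact ⟨⟨0, by omega⟩, by simp [hf, h]⟩
        · exact ⟨⟨0, by omega⟩, by simp [hf, h]⟩
        · exact ⟨⟨1, by omega⟩, by simp [hf, h]⟩
    rw [repSize, hU]
    rw [show ({0,1,2} : Set ℕ) = (↑({0,1,2} : Finset ℕ) : Set ℕ) by simp]
    rw [Set.ncard_coe_finset]
    decide
  have hmem : 3 ∈ {m | ∃ f : Fin n → Finset ℕ, IsOverlapRep (book n) f ∧ repSize f = m} :=
    ⟨f, hrep, hsize⟩
  refine le_antisymm (Nat.sInf_le hmem) ?_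
  apply le_csInf ⟨3, hmem⟩
  rintro m ⟨g, hg, rfl⟩
  set u0 : Fin n := ⟨0, by omega⟩
  set u1 : Fin n := ⟨1, by omega⟩
  have hne : u0 ≠ u1 := by simp [u0, u1, Fin.ext_iff]
  have hadj : (book n).Adj u0 u1 := by
    simp [book, SimpleGraph.fromRel_adj, hne, u0, u1]
  obtain ⟨⟨x, hx⟩, hab, hba⟩ := (hg u0 u1 hne).mp hadj
  obtain ⟨a, ha0, ha1⟩ := Finset.not_subset.mp hab
  obtain ⟨b, hb1, hb0⟩ := Finset.not_subset.mp hba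
  rw [Finset.mem_inter] at hx
  have hax : a ≠ x := fun h => ha1 (h ▸ hx.2)
  have hbx : b ≠ x := fun h => hb0 (h ▸ hx.1)
  have hba' : b ≠ a := fun h => hb0 (h ▸ ha0)
  have hsub : (↑({x,a,b} : Finset ℕ) : Set ℕ) ⊆ ⋃ v, (g v : Set ℕ) := by
    intro y hy
    simp only [Finset.coe_insert, Finset.coe_singleton, Set.mem_insert_iff,
      Set.mem_singleton_iff] at hy
    rcases hy with rfl | rfl | rfl
    · exact Set.mem_iUnion.mpr ⟨u0, hx.1⟩
    · exact Set.mem_iUnion.mpr ⟨u0, ha0⟩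
    · exact Set.mem_iUnion.mpr ⟨u1, hb1⟩
  have hfin : (⋃ v, (g v : Set ℕ)).Finite := Set.finite_iUnion (fun v => (g v).finite_toSet)
  have hcard : ({x,a,b} : Finset ℕ).card = 3 := by
    rw [Finset.card_insert_of_notMem (by simp [hax.symm, hbx.symm, hba']),
      Finset.card_insert_of_notMem (by simp [hba'.symm])]
    rfl
  calc 3 = (↑({x,a,b} : Finset ℕ) : Set ℕ).ncard := by rw [Set.ncard_coe_finset, hcard]
    _ ≤ repSize g := Set.ncard_le_ncard hsub hfin
end

section
/- Let f be an overlap representation of a connected graph G that has no star-cutset. Then any two vertices that are both nonminimal in f (each assigned a set properly containing some other assigned set) are adjacent. -/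
/-- `G` has a star-cutset: a set `S` containing a vertex adjacent to all the rest of `S`,
whose removal disconnects `G`. -/
def HasStarCutset {V : Type*} (G : SimpleGraph V) : Prop :=
  ∃ S : Set V, (∃ x ∈ S, ∀ y ∈ S, y ≠ x → G.Adj x y) ∧
    ¬ (G.induce (Sᶜ)).Preconnected


lemma key_lemma {V : Type*} (G : SimpleGraph V)
    (hsc : ¬ HasStarCutset G) (f : V → Finset ℕ) (hf : IsOverlapRep G f)
    (u v : V) (hvu : v ≠ u) (hadj : ¬ G.Adj u v)
    (x : V) (hxu : x ≠ u) (hx : f x ⊂ f u) : f v ⊂ f u := by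
  set S : Set V := {w | w = u ∨ G.Adj u w} with hS
  have hpre : (G.induce Sᶜ).Preconnected := by
    by_contra h
    exact hsc ⟨S, ⟨u, Or.inl rfl, fun y hy hyu => hy.resolve_left hyu⟩, h⟩
  have hxS : x ∈ Sᶜ := by
    intro h
    rcases h with h | h
    · exact hxu h
    · exact ((hf u x (Ne.symm hxu)).mp h).2.2 hx.subset
  have hvS : v ∈ Sᶜ := by
    intro h
    rcases h with h | h
    · exact hvu h
    · exact hadj h
  obtain ⟨w⟩ := hpre ⟨x, hxS⟩ ⟨v, hvS⟩
  have main : ∀ {a b : ↥(Sᶜ)} (_ : (G.induce Sᶜ).Walk a b),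
      f a.val ⊂ f u → f b.val ⊂ f u := by
    intro a b w
    induction w with
    | nil => exact id
    | @cons a c b h p ih =>
      intro ha
      apply ih
      have hadj' : G.Adj a.val c.val := h
      have hne : a.val ≠ c.val := hadj'.ne
      obtain ⟨hint, hns1, hns2⟩ := (hf a.val c.val hne).mp hadj'
      have hcu : c.val ≠ u := fun h' => c.prop (Or.inl h')
      have hnadj : ¬ G.Adj u c.val := fun h' => c.prop (Or.inr h')
      have hint' : (f u ∩ f c.val).Nonempty := by
        obtain ⟨t, ht⟩ := hint
        rw [Finset.mem_inter] at ht
        exact ⟨t, Finset.mem_inter.mpr ⟨ha.subset ht.1, ht.2⟩⟩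
      have hnot := (hf u c.val (Ne.symm hcu)).not.mp hnadj
      push_neg at hnot
      have hsub : ¬ f u ⊆ f c.val := fun h' => hns1 (ha.subset.trans h')
      exact Finset.ssubset_def.mpr ⟨hnot hint' hsub, hsub⟩
  exact main w hx

theorem stmt_14 {V : Type*} (G : SimpleGraph V) (hconn : G.Connected)
    (hsc : ¬ HasStarCutset G) (f : V → Finset ℕ) (hf : IsOverlapRep G f) :
    ∀ u v : V, u ≠ v → (∃ x : V, x ≠ u ∧ f x ⊂ f u) → (∃ x : V, x ≠ v ∧ f x ⊂ f v) →
      G.Adj u v := by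
  intro u v hne h1 h2
  by_contra hadj
  obtain ⟨x, hxu, hx⟩ := h1
  obtain ⟨y, hyv, hy⟩ := h2
  have h3 : f v ⊂ f u := key_lemma G hsc f hf u v hne.symm hadj x hxu hx
  have h4 : f u ⊂ f v := key_lemma G hsc f hf v u hne (fun h => hadj h.symm) y hyv hy
  exact (Finset.ssubset_def.mp h4).2 h3.subset
end

section
/- If G is an n-vertex triangle-free graph without a star-cutset and with two distinct vertices u, v satisfying N(u) = N(v), then G = K_{2,n−2} with n ≤ 4. -/
private lemma isolated_not_reachable {W : Type*} (H : SimpleGraph W) (x z : W)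
    (hxz : x ≠ z) (h : ∀ y, ¬ H.Adj x y) : ¬ H.Reachable x z := by
  rintro ⟨p⟩
  cases p with
  | nil => exact hxz rfl
  | cons ha _ => exact h _ ha

theorem stmt_15 {V : Type*} [Fintype V] (G : SimpleGraph V)
    (hfree : G.CliqueFree 3) (hsc : ¬ HasStarCutset G)
    (u v : V) (huv : u ≠ v) (hnbr : G.neighborSet u = G.neighborSet v) :
    Fintype.card V ≤ 4 ∧
    Nonempty (G ≃g completeBipartiteGraph (Fin 2) (Fin (Fintype.card V - 2))) := by
  classical
  have hNuv : ∀ a : V, G.Adj u a ↔ G.Adj v a := by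
    intro a
    have := Set.ext_iff.1 hnbr a
    simpa [SimpleGraph.mem_neighborSet] using this
  have hvu : ¬ G.Adj u v := by
    intro h
    exact G.irrefl ((hNuv v).1 h)
  have hindep : ∀ a b, G.Adj u a → G.Adj u b → a ≠ b → ¬ G.Adj a b := by
    intro a b ha hb hab h
    exact hfree {u, a, b} (SimpleGraph.is3Clique_triple_iff.2 ⟨ha, hb, h⟩)
  -- every vertex is u, v, or a neighbor of u
  have hV : ∀ w : V, w = u ∨ w = v ∨ G.Adj u w := by
    intro w
    by_contra hw
    push_neg at hw
    obtain ⟨hwu, hwv, hwa⟩ := hw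
    apply hsc
    refine ⟨insert u (G.neighborSet u), ⟨u, Set.mem_insert _ _, ?_⟩, ?_⟩
    · rintro y (rfl | hy) hyu
      · exact absurd rfl hyu
      · exact hy
    · intro hpre
      have hv' : v ∈ (insert u (G.neighborSet u))ᶜ := by
        simp only [Set.mem_compl_iff, Set.mem_insert_iff, SimpleGraph.mem_neighborSet]
        push_neg
        exact ⟨huv.symm, hvu⟩
      have hw' : w ∈ (insert u (G.neighborSet u))ᶜ := by
        simp only [Set.mem_compl_iff, Set.mem_insert_iff, SimpleGraph.mem_neighborSet]
        push_neg
        exact ⟨hwu, hwa⟩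
      refine isolated_not_reachable _ (⟨v, hv'⟩ : _) ⟨w, hw'⟩ ?_ ?_ (hpre _ _)
      · intro h
        exact hwv (congrArg Subtype.val h).symm
      · rintro ⟨y, hy⟩ hadj
        have hadj' : G.Adj v y := by simpa using hadj
        have : G.Adj u y := (hNuv y).2 hadj'
        exact hy (Set.mem_insert_iff.2 (Or.inr this))
  -- the neighborhood of u as a finset
  let A : Finset V := G.neighborFinset u
  have hmemA : ∀ a, a ∈ A ↔ G.Adj u a := fun a => G.mem_neighborFinset u a
  have huA : u ∉ A := by simp [hmemA]
  have hvA : v ∉ A := by simp [hmemA, G.adj_comm, hvu]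
  -- |A| ≤ 2
  have hAcard : A.card ≤ 2 := by
    by_contra h
    push_neg at h
    obtain ⟨a, b, c, ha, hb, hc, hab, hac, hbc⟩ := Finset.two_lt_card_iff.1 h
    apply hsc
    refine ⟨{a, u, v}, ⟨a, Set.mem_insert _ _, ?_⟩, ?_⟩
    · rintro y (rfl | rfl | rfl) hy
      · exact absurd rfl hy
      · exact ((hmemA a).1 ha).symm
      · exact ((hNuv a).1 ((hmemA a).1 ha)).symm
    · intro hpre
      have hmem : ∀ x, x ∈ A → x ≠ a → x ∈ ({a, u, v} : Set V)ᶜ := by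
        intro x hx hxa
        simp only [Set.mem_compl_iff, Set.mem_insert_iff, Set.mem_singleton_iff]
        push_neg
        refine ⟨hxa, ?_, ?_⟩
        · rintro rfl; exact huA hx
        · rintro rfl; exact hvA hx
      refine isolated_not_reachable _
        (⟨b, hmem b hb (fun h => hab h.symm)⟩ : _) ⟨c, hmem c hc (fun h => hac h.symm)⟩
        ?_ ?_ (hpre _ _)
      · intro h
        exact hbc (congrArg Subtype.val h)
      · rintro ⟨y, hy⟩ hadj
        have hadj' : G.Adj b y := by simpa using hadj
        rcases hV y with rfl | rfl | hyA
        · exact hy (Or.inr (Or.inl rfl))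
        · exact hy (Or.inr (Or.inr rfl))
        · exact hindep b y ((hmemA b).1 hb) hyA hadj'.ne hadj'
  have hadj_ua : ∀ a ∈ A, G.Adj u a := fun a ha => (hmemA a).1 ha
  have hadj_va : ∀ a ∈ A, G.Adj v a := fun a ha => (hNuv a).1 (hadj_ua a ha)
  -- the bijection
  set m := A.card with hm
  let ψ : Fin 2 ⊕ Fin m → V :=
    Sum.elim (fun i => if i = 0 then u else v) (fun i => (A.equivFin.symm i : V))
  have hψinj : Function.Injective ψ := by
    rintro (i | i) (j | j) h
    · simp only [ψ, Sum.elim_inl] at h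
      fin_cases i <;> fin_cases j <;> simp_all
    · exfalso
      simp only [ψ, Sum.elim_inl, Sum.elim_inr] at h
      split_ifs at h
      · exact huA (h ▸ (A.equivFin.symm j).2)
      · exact hvA (h ▸ (A.equivFin.symm j).2)
    · exfalso
      simp only [ψ, Sum.elim_inl, Sum.elim_inr] at h
      split_ifs at h
      · exact huA (h ▸ (A.equivFin.symm i).2)
      · exact hvA (h ▸ (A.equivFin.symm i).2)
    · simp only [ψ, Sum.elim_inr] at h
      have := A.equivFin.symm.injective (Subtype.val_injective h)
      exact congrArg Sum.inr this
  have hψsurj : Function.Surjective ψ := by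
    intro w
    rcases hV w with rfl | rfl | hw
    · exact ⟨Sum.inl 0, by simp [ψ]⟩
    · exact ⟨Sum.inl 1, by simp [ψ]⟩
    · refine ⟨Sum.inr (A.equivFin ⟨w, (hmemA w).2 hw⟩), ?_⟩
      simp [ψ]
  let E : (Fin 2 ⊕ Fin m) ≃ V := Equiv.ofBijective ψ ⟨hψinj, hψsurj⟩
  have hcard : Fintype.card V = m + 2 := by
    rw [← Fintype.card_congr E, Fintype.card_sum, Fintype.card_fin, Fintype.card_fin]
    omega
  have hrel : ∀ x y, G.Adj (ψ x) (ψ y) ↔ (completeBipartiteGraph (Fin 2) (Fin m)).Adj x y := by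
    have hψA : ∀ i : Fin m, ψ (Sum.inr i) ∈ A := fun i => (A.equivFin.symm i).2
    rintro (i | i) (j | j)
    · constructor
      · intro h
        exfalso
        simp only [ψ, Sum.elim_inl] at h
        fin_cases i <;> fin_cases j <;> simp only [if_true, if_false,
          Fin.mk_zero, Fin.mk_one, reduceIte] at h
        · exact G.irrefl h
        · exact hvu h
        · exact hvu h.symm
        · exact G.irrefl h
      · rintro (⟨h1, h2⟩ | ⟨h1, h2⟩) <;> simp_all
    · have hA := hψA j
      constructor
      · intro _
        exact Or.inl ⟨rfl, rfl⟩
      · intro _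
        show G.Adj (if i = 0 then u else v) _
        split_ifs
        · exact hadj_ua _ hA
        · exact hadj_va _ hA
    · have hA := hψA i
      constructor
      · intro _
        exact Or.inr ⟨rfl, rfl⟩
      · intro _
        show G.Adj _ (if j = 0 then u else v)
        split_ifs
        · exact (hadj_ua _ hA).symm
        · exact (hadj_va _ hA).symm
    · constructor
      · intro h
        exfalso
        by_cases hij : (ψ (Sum.inr i) : V) = ψ (Sum.inr j)
        · rw [hij] at h
          exact G.irrefl h
        · exact hindep _ _ (hadj_ua _ (hψA i)) (hadj_ua _ (hψA j)) hij h
      · rintro (⟨h1, h2⟩ | ⟨h1, h2⟩) <;> simp_all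
  refine ⟨by omega, ?_⟩
  have hc2 : Fintype.card V - 2 = m := by omega
  rw [hc2]
  exact ⟨(RelIso.mk E (fun {a b} => hrel a b) :
    completeBipartiteGraph (Fin 2) (Fin m) ≃g G).symm⟩
end

section
/- If G is a triangle-free graph with no star-cutset, then every overlap representation of G has size at least |E(G)| − 1, i.e., φ(G) ≥ |E(G)| − 1. -/
namespace OverlapAux

variable {V : Type*}

/-- A vertex `c` is a *center* for the representation `f` if every vertex
distinct from and non-adjacent to `c` has its set strictly contained in `f c`. -/
def Center (G : SimpleGraph V) (f : V → Finset ℕ) (c : V) : Prop :=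
  ∀ x : V, x ≠ c → ¬ G.Adj c x → f x ⊂ f c

open Classical in
/-- Symmetric price function used to label edges. -/
noncomputable def price (G : SimpleGraph V) (f : V → Finset ℕ) (u v : V) : Finset ℕ :=
  if Center G f u then (if Center G f v then ∅ else f v \ f u)
  else (if Center G f v then f u \ f v else f u ∩ f v)

lemma price_symm (G : SimpleGraph V) (f : V → Finset ℕ) (u v : V) :
    price G f u v = price G f v u := by
  classical
  by_cases hu : Center G f u <;> by_cases hv : Center G f v <;>
    simp [price, hu, hv, Finset.inter_comm]

/-- Edge-label function on unordered pairs. -/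
noncomputable def F (G : SimpleGraph V) (f : V → Finset ℕ) : Sym2 V → Finset ℕ :=
  Sym2.lift ⟨price G f, price_symm G f⟩

open Classical in
noncomputable def phi (G : SimpleGraph V) (f : V → Finset ℕ) (e : Sym2 V) : ℕ :=
  if h : (F G f e).Nonempty then (F G f e).min' h else 0

/-- "Both endpoints are centers" as a symmetric predicate. -/
def BothC (G : SimpleGraph V) (f : V → Finset ℕ) : Sym2 V → Prop :=
  Sym2.lift ⟨fun u v => Center G f u ∧ Center G f v, fun _ _ => propext and_comm⟩

lemma no_star_cutset_pre {G : SimpleGraph V} (hsc : ¬ HasStarCutset G) (S : Set V)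
    (hstar : ∃ x ∈ S, ∀ y ∈ S, y ≠ x → G.Adj x y) : (G.induce (Sᶜ)).Preconnected := by
  by_contra h
  exact hsc ⟨S, hstar, h⟩

/-- Every "top" of a strict nesting is a center. -/
lemma top_is_center {G : SimpleGraph V} {f : V → Finset ℕ}
    (hrep : IsOverlapRep G f) (hsc : ¬ HasStarCutset G)
    {u w : V} (hne : u ≠ w) (hsub : f u ⊂ f w) : Center G f w := by
  intro x hxw hxadj
  -- star set S = N[w]
  set S : Set V := insert w (G.neighborSet w) with hS
  have hpre : (G.induce (Sᶜ)).Preconnected := by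
    refine no_star_cutset_pre hsc S ⟨w, by simp [hS], ?_⟩
    intro y hy hyw
    rcases hy with h | h
    · exact absurd h hyw
    · exact h
  have hmemS : ∀ z : V, z ≠ w → ¬ G.Adj w z → z ∈ Sᶜ := by
    intro z h1 h2
    simp only [hS, Set.mem_compl_iff, Set.mem_insert_iff, SimpleGraph.mem_neighborSet]
    push_neg
    exact ⟨h1, h2⟩
  have huadj : ¬ G.Adj w u := by
    intro h
    exact ((hrep w u hne.symm).mp h).2.2 hsub.subset
  have hu : u ∈ Sᶜ := hmemS u hne huadj
  have hx : x ∈ Sᶜ := hmemS x hxw hxadj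
  -- invariant along walks in G - N[w]
  have key : ∀ (a b : (Sᶜ : Set V)), (G.induce (Sᶜ)).Walk a b → f (a : V) ⊂ f w →
      f (b : V) ⊂ f w := by
    intro a b p
    induction p with
    | nil => exact id
    | @cons a b c hab p ih =>
      intro ha
      refine ih ?_
      have hGab : G.Adj (a : V) (b : V) := hab
      have hbne : (b : V) ≠ (a : V) := hGab.ne'
      have hrab := (hrep (a : V) (b : V) hGab.ne).mp hGab
      -- f b meets f w
      obtain ⟨t, ht⟩ := hrab.1
      have htb : t ∈ f (b : V) ∩ f w := by
        simp only [Finset.mem_inter] at ht ⊢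
        exact ⟨ht.2, ha.subset ht.1⟩
      -- b is not adjacent to w and b ≠ w
      have hbS : (b : V) ∈ Sᶜ := b.2
      simp only [hS, Set.mem_compl_iff, Set.mem_insert_iff, SimpleGraph.mem_neighborSet] at hbS
      push_neg at hbS
      have hnadj : ¬ G.Adj (b : V) w := fun h => hbS.2 h.symm
      have hrbw := hrep (b : V) w hbS.1
      have hnot : ¬ ((f (b:V) ∩ f w).Nonempty ∧ ¬ f (b:V) ⊆ f w ∧ ¬ f w ⊆ f (b:V)) :=
        fun h => hnadj (hrbw.mpr h)
      push_neg at hnot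
      have hsub2 : f (b : V) ⊆ f w ∨ f w ⊆ f (b : V) := by
        by_cases hbw : f (b : V) ⊆ f w
        · exact Or.inl hbw
        · exact Or.inr (hnot ⟨t, htb⟩ hbw)
      rcases hsub2 with h | h
      · refine ⟨h, fun hcon => ?_⟩
        -- if f w ⊆ f b then f a ⊆ f b, contradicting adjacency
        exact hrab.2.1 (ha.subset.trans hcon)
      · exact absurd (ha.subset.trans h) hrab.2.1
  have hru : (G.induce (Sᶜ)).Reachable ⟨u, hu⟩ ⟨x, hx⟩ := hpre ⟨u, hu⟩ ⟨x, hx⟩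
  exact hru.elim fun p => key ⟨u, hu⟩ ⟨x, hx⟩ p hsub

lemma centers_adj {G : SimpleGraph V} {f : V → Finset ℕ}
    {c c' : V} (hne : c ≠ c') (hc : Center G f c) (hc' : Center G f c') :
    G.Adj c c' := by
  by_contra h
  have h1 : f c' ⊂ f c := hc c' hne.symm h
  have h2 : f c ⊂ f c' := hc' c hne (fun hadj => h hadj.symm)
  exact (lt_irrefl _ (h1.trans h2)).elim

lemma no_triangle {G : SimpleGraph V} (hfree : G.CliqueFree 3)
    {a b c : V} (hab : G.Adj a b) (hac : G.Adj a c) (hbc : G.Adj b c) : False := by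
  classical
  exact hfree {a, b, c} (SimpleGraph.is3Clique_triple_iff.mpr ⟨hab, hac, hbc⟩)

/-- Core adjacency lemma: distinct non-centers with intersecting sets are adjacent. -/
lemma adj_of_meet {G : SimpleGraph V} {f : V → Finset ℕ}
    (hrep : IsOverlapRep G f) (hsc : ¬ HasStarCutset G)
    (heq : ∀ u v : V, u ≠ v → f u ≠ f v)
    {x y : V} (hne : x ≠ y) (hcx : ¬ Center G f x) (hcy : ¬ Center G f y)
    (hmeet : (f x ∩ f y).Nonempty) : G.Adj x y := by
  by_contra h
  have hnot : ¬ ((f x ∩ f y).Nonempty ∧ ¬ f x ⊆ f y ∧ ¬ f y ⊆ f x) :=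
    fun hcon => h ((hrep x y hne).mpr hcon)
  push_neg at hnot
  by_cases hs : f x ⊆ f y
  · exact hcy (top_is_center hrep hsc hne (hs.ssubset_of_ne (heq x y hne)))
  · exact hcx (top_is_center hrep hsc hne.symm
      ((hnot hmeet hs).ssubset_of_ne (heq y x hne.symm)))

lemma phi_mem {G : SimpleGraph V} {f : V → Finset ℕ} {e : Sym2 V}
    (h : (F G f e).Nonempty) : phi G f e ∈ F G f e := by
  classical
  rw [phi, dif_pos h]
  exact Finset.min'_mem _ _

lemma F_mk (G : SimpleGraph V) (f : V → Finset ℕ) (u v : V) :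
    F G f s(u, v) = price G f u v := Sym2.lift_mk _ _ _

lemma BothC_mk (G : SimpleGraph V) (f : V → Finset ℕ) (u v : V) :
    BothC G f s(u, v) ↔ (Center G f u ∧ Center G f v) := Iff.rfl

/-- Structure of the chosen label on a non-(center-center) edge. -/
lemma shape {G : SimpleGraph V} {f : V → Finset ℕ} (hrep : IsOverlapRep G f)
    (e : Sym2 V) (he : e ∈ G.edgeSet) (hb : ¬ BothC G f e) :
    (∃ u v, e = s(u, v) ∧ G.Adj u v ∧ ¬ Center G f u ∧ ¬ Center G f v ∧
      phi G f e ∈ f u ∩ f v) ∨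
    (∃ c y, e = s(c, y) ∧ G.Adj c y ∧ Center G f c ∧ ¬ Center G f y ∧
      phi G f e ∈ f y \ f c) := by
  classical
  induction e with
  | _ u v =>
    have hadj : G.Adj u v := he
    have hb' : ¬ (Center G f u ∧ Center G f v) := hb
    have hr := (hrep u v hadj.ne).mp hadj
    by_cases hu : Center G f u <;> by_cases hv : Center G f v
    · exact absurd ⟨hu, hv⟩ hb'
    · -- u center, v not
      have hF : F G f s(u, v) = f v \ f u := by
        rw [F_mk, price]; simp [hu, hv]
      have hne : (F G f s(u, v)).Nonempty := by
        rw [hF]; exact Finset.sdiff_nonempty.mpr hr.2.2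
      refine Or.inr ⟨u, v, rfl, hadj, hu, hv, ?_⟩
      have := phi_mem hne
      rwa [hF] at this
    · -- v center, u not
      have hF : F G f s(u, v) = f u \ f v := by
        rw [F_mk, price]; simp [hu, hv]
      have hne : (F G f s(u, v)).Nonempty := by
        rw [hF]; exact Finset.sdiff_nonempty.mpr hr.2.1
      refine Or.inr ⟨v, u, Sym2.eq_swap, hadj.symm, hv, hu, ?_⟩
      have := phi_mem hne
      rwa [hF] at this
    · -- neither
      have hF : F G f s(u, v) = f u ∩ f v := by
        rw [F_mk, price]; simp [hu, hv]
      have hne : (F G f s(u, v)).Nonempty := by rw [hF]; exact hr.1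
      refine Or.inl ⟨u, v, rfl, hadj, hu, hv, ?_⟩
      have := phi_mem hne
      rwa [hF] at this

lemma pick_new {u v u' v' : V} (hne : s(u, v) ≠ s(u', v')) (h' : u' ≠ v') :
    (u' ≠ u ∧ u' ≠ v) ∨ (v' ≠ u ∧ v' ≠ v) := by
  by_cases h1 : u' = u
  · subst h1
    right
    constructor
    · intro h; exact h' (h.symm ▸ rfl)
    · intro h; subst h; exact hne rfl
  · by_cases h2 : u' = v
    · subst h2
      right
      constructor
      · intro h; subst h; exact hne Sym2.eq_swap.symm
      · intro h; exact h' h.symm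
    · exact Or.inl ⟨h1, h2⟩

/-- Collision between a non-center edge and a center edge is impossible. -/
lemma collide_LR {G : SimpleGraph V} {f : V → Finset ℕ}
    (hfree : G.CliqueFree 3)
    {u v c y : V} (huv : G.Adj u v) (hcy : G.Adj c y)
    (hcu : ¬ Center G f u) (hcv : ¬ Center G f v) (hc : Center G f c)
    {α : ℕ} (hα1 : α ∈ f u ∩ f v) (hα2 : α ∈ f y \ f c) : False := by
  have hnc : ¬ (G.Adj u c ∧ G.Adj v c) := by
    rintro ⟨h1, h2⟩
    exact no_triangle hfree huv h1 h2
  have key : ∀ x : V, ¬ Center G f x → α ∈ f x → ¬ G.Adj x c → False := by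
    intro x hx hαx hnadj
    have hxc : x ≠ c := fun h => hx (h ▸ hc)
    have : f x ⊂ f c := hc x hxc (fun h => hnadj h.symm)
    have : α ∈ f c := this.subset hαx
    exact (Finset.mem_sdiff.mp hα2).2 this
  simp only [Finset.mem_inter] at hα1
  by_cases h1 : G.Adj u c
  · have h2 : ¬ G.Adj v c := fun h => hnc ⟨h1, h⟩
    exact key v hcv hα1.2 h2
  · exact key u hcu hα1.1 h1

/-- Injectivity of the labelling on non-(center-center) edges. -/
lemma phi_injOn {G : SimpleGraph V} {f : V → Finset ℕ}
    (hrep : IsOverlapRep G f) (hfree : G.CliqueFree 3) (hsc : ¬ HasStarCutset G)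
    (heqv : ∀ u v : V, u ≠ v → f u ≠ f v) :
    Set.InjOn (phi G f) {e ∈ G.edgeSet | ¬ BothC G f e} := by
  classical
  intro e he e' he' hphieq
  obtain ⟨he, hbe⟩ := he
  obtain ⟨he', hbe'⟩ := he'
  rcases shape hrep e he hbe with ⟨u, v, rfl, huv, hcu, hcv, hα⟩ |
      ⟨c, y, rfl, hcy, hc, hncy, hα⟩ <;>
    rcases shape hrep e' he' hbe' with ⟨u', v', rfl, huv', hcu', hcv', hα'⟩ |
      ⟨c', y', rfl, hcy', hc', hncy', hα'⟩
  · -- both non-center edges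
    by_contra hne2
    rw [hphieq] at hα
    simp only [Finset.mem_inter] at hα hα'
    have main : ∀ w : V, ¬ Center G f w → w ≠ u → w ≠ v →
        phi G f s(u', v') ∈ f w → False := by
      intro w hcw hwu hwv hαw
      have h1 : G.Adj w u := adj_of_meet hrep hsc heqv hwu hcw hcu
        ⟨_, Finset.mem_inter.mpr ⟨hαw, hα.1⟩⟩
      have h2 : G.Adj w v := adj_of_meet hrep hsc heqv hwv hcw hcv
        ⟨_, Finset.mem_inter.mpr ⟨hαw, hα.2⟩⟩
      exact no_triangle hfree h1 h2 huv
    rcases pick_new hne2 huv'.ne with ⟨h1, h2⟩ | ⟨h1, h2⟩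
    · exact main u' hcu' h1 h2 hα'.1
    · exact main v' hcv' h1 h2 hα'.2
  · exact absurd (collide_LR hfree huv hcy' hcu hcv hc'
      hα (hphieq ▸ hα')) id
  · exact absurd (collide_LR hfree huv' hcy hcu' hcv' hc
      (hphieq ▸ hα') hα) id
  · -- both center edges
    by_cases hcc : c = c'
    · subst hcc
      suffices hyy : y = y' by rw [hyy]
      by_contra hyy
      have hmeet : (f y ∩ f y').Nonempty := by
        refine ⟨phi G f s(c, y), Finset.mem_inter.mpr ⟨(Finset.mem_sdiff.mp hα).1, ?_⟩⟩
        rw [hphieq]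
        exact (Finset.mem_sdiff.mp hα').1
      have hadj : G.Adj y y' := adj_of_meet hrep hsc heqv hyy hncy hncy' hmeet
      exact no_triangle hfree hcy hcy' hadj
    · have hadjcc : G.Adj c c' := centers_adj hcc hc hc'
      have hyc' : y ≠ c' := fun h => hncy (h ▸ hc')
      have hnadj : ¬ G.Adj c' y := fun h => no_triangle hfree hadjcc hcy h
      have hsub : f y ⊂ f c' := hc' y hyc' hnadj
      have : phi G f s(c, y) ∈ f c' := hsub.subset (Finset.mem_sdiff.mp hα).1
      rw [hphieq] at this
      exact absurd this (Finset.mem_sdiff.mp hα').2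

/-- The main counting bound. -/
lemma count_main [Fintype V] {G : SimpleGraph V} {f : V → Finset ℕ}
    (hrep : IsOverlapRep G f) (hfree : G.CliqueFree 3) (hsc : ¬ HasStarCutset G) :
    G.edgeSet.ncard - 1 ≤ repSize f := by
  classical
  set U : Set ℕ := ⋃ v, ((f v : Set ℕ)) with hU
  have hrepU : repSize f = U.ncard := by rw [hU]; rfl
  have hUfin : U.Finite := by
    rw [hU]; exact Set.finite_iUnion fun v => (f v).finite_toSet
  have hEfin : G.edgeSet.Finite := Set.toFinite _
  have hmemU : ∀ (w : V) (t : ℕ), t ∈ f w → t ∈ U := by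
    intro w t ht
    rw [hU]
    exact Set.mem_iUnion.mpr ⟨w, Finset.mem_coe.mpr ht⟩
  by_cases heqex : ∃ u v : V, u ≠ v ∧ f u = f v
  · -- degenerate case: two vertices share the same set
    obtain ⟨u₀, v₀, hne0, hEq⟩ := heqex
    have hnadj0 : ¬ G.Adj u₀ v₀ := by
      intro h
      exact ((hrep u₀ v₀ hne0).mp h).2.1 (by rw [hEq])
    have htrans : ∀ z, z ≠ u₀ → z ≠ v₀ → (G.Adj u₀ z ↔ G.Adj v₀ z) := by
      intro z h1 h2
      rw [hrep u₀ z (Ne.symm h1), hrep v₀ z (Ne.symm h2), hEq]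
    have hSmall : ∀ x, x ≠ u₀ → ¬ G.Adj u₀ x → x = v₀ := by
      intro x hx hax
      by_contra hxv
      set S : Set V := insert u₀ (G.neighborSet u₀) with hS
      have hpre : (G.induce (Sᶜ)).Preconnected := by
        refine no_star_cutset_pre hsc S ⟨u₀, Set.mem_insert _ _, ?_⟩
        intro y hy hyne
        rcases hy with h | h
        · exact absurd h hyne
        · exact h
      have hv₀S : v₀ ∈ Sᶜ := by
        simp only [hS, Set.mem_compl_iff, Set.mem_insert_iff, SimpleGraph.mem_neighborSet]
        push_neg
        exact ⟨hne0.symm, hnadj0⟩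
      have hxS : x ∈ Sᶜ := by
        simp only [hS, Set.mem_compl_iff, Set.mem_insert_iff, SimpleGraph.mem_neighborSet]
        push_neg
        exact ⟨hx, hax⟩
      have key : ∀ a b : (Sᶜ : Set V), (G.induce (Sᶜ)).Walk a b → (a : V) = v₀ →
          (b : V) = v₀ := by
        intro a b p
        induction p with
        | nil => exact id
        | @cons a b c hab p ih =>
          intro ha
          have hGab : G.Adj (a : V) (b : V) := hab
          rw [ha] at hGab
          have hbv : (b : V) ≠ v₀ := by
            intro h
            rw [h] at hGab
            exact G.irrefl hGab
          have hbS := b.2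
          simp only [hS, Set.mem_compl_iff, Set.mem_insert_iff,
            SimpleGraph.mem_neighborSet] at hbS
          push_neg at hbS
          exact absurd ((htrans (b : V) hbS.1 hbv).mpr hGab) hbS.2
      exact hxv ((hpre ⟨v₀, hv₀S⟩ ⟨x, hxS⟩).elim fun p => key _ _ p rfl)
    have hNoTriple : ¬ ∃ z1 z2 z3 : V, G.Adj u₀ z1 ∧ G.Adj u₀ z2 ∧ G.Adj u₀ z3 ∧
        z1 ≠ z2 ∧ z1 ≠ z3 ∧ z2 ≠ z3 := by
      rintro ⟨z1, z2, z3, h1, h2, h3, h12, h13, h23⟩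
      have hzu : ∀ z, G.Adj u₀ z → z ≠ u₀ := fun z h => h.ne'
      have hzv : ∀ z, G.Adj u₀ z → z ≠ v₀ := fun z h hv => hnadj0 (hv ▸ h)
      set S' : Set V := {z1, u₀, v₀} with hS'
      have hpre : (G.induce (S'ᶜ)).Preconnected := by
        refine no_star_cutset_pre hsc S' ⟨z1, by simp [hS'], ?_⟩
        intro y hy hyne
        simp only [hS', Set.mem_insert_iff, Set.mem_singleton_iff] at hy
        rcases hy with h | h | h
        · exact absurd h hyne
        · rw [h]; exact h1.symm
        · rw [h]; exact ((htrans z1 (hzu z1 h1) (hzv z1 h1)).mp h1).symm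
      have hmem : ∀ z, G.Adj u₀ z → z ≠ z1 → z ∈ S'ᶜ := by
        intro z hz hzz1
        simp only [hS', Set.mem_compl_iff, Set.mem_insert_iff, Set.mem_singleton_iff]
        push_neg
        exact ⟨hzz1, hzu z hz, hzv z hz⟩
      have key2 : ∀ a b : (S'ᶜ : Set V), (G.induce (S'ᶜ)).Walk a b → (a : V) = z2 →
          (b : V) = z2 := by
        intro a b p
        induction p with
        | nil => exact id
        | @cons a b c hab p ih =>
          intro ha
          have hGab : G.Adj (a : V) (b : V) := hab
          rw [ha] at hGab
          have hbS := b.2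
          simp only [hS', Set.mem_compl_iff, Set.mem_insert_iff,
            Set.mem_singleton_iff] at hbS
          push_neg at hbS
          have hbu : G.Adj u₀ (b : V) := by
            by_contra hno
            exact hbS.2.2 (hSmall _ hbS.2.1 hno)
          exact (no_triangle hfree h2 hbu hGab).elim
      have := (hpre ⟨z2, hmem z2 h2 h12.symm⟩ ⟨z3, hmem z3 h3 h13.symm⟩).elim
        fun p => key2 _ _ p rfl
      exact h23 this.symm
    by_cases hE0 : G.edgeSet = ∅
    · simp [hE0]
    · obtain ⟨e₀, he₀⟩ := Set.nonempty_iff_ne_empty.mpr hE0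
      have hxyex : ∃ x y : V, G.Adj x y := by
        induction e₀ with
        | _ x y => exact ⟨x, y, he₀⟩
      obtain ⟨x, y, hxy⟩ := hxyex
      -- at least three elements
      have hr := (hrep x y hxy.ne).mp hxy
      obtain ⟨a, ha⟩ := hr.1
      obtain ⟨b, hbx, hby⟩ := Finset.not_subset.mp hr.2.1
      obtain ⟨c, hcy, hcx⟩ := Finset.not_subset.mp hr.2.2
      rw [Finset.mem_inter] at ha
      have hU3 : 3 ≤ U.ncard := by
        have h3 : ({a, b, c} : Set ℕ).ncard = 3 := by
          refine Set.ncard_eq_three.mpr ⟨a, b, c, ?_, ?_, ?_, rfl⟩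
          · intro h; exact hby (h ▸ ha.2)
          · intro h; exact hcx (h ▸ ha.1)
          · intro h; exact hcx (h ▸ hbx)
        have hsub3 : ({a, b, c} : Set ℕ) ⊆ U := by
          intro t ht
          rcases ht with h | h | h
          · exact h ▸ hmemU x a ha.1
          · exact h ▸ hmemU x b hbx
          · exact h ▸ hmemU y c hcy
        calc 3 = ({a, b, c} : Set ℕ).ncard := h3.symm
          _ ≤ U.ncard := Set.ncard_le_ncard hsub3 hUfin
      -- at most four edges
      have hclass : ∀ w, w ≠ u₀ → w ≠ v₀ → G.Adj u₀ w := by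
        intro w h1 h2
        by_contra hno
        exact h2 (hSmall w h1 hno)
      have hzex : ∃ z, G.Adj u₀ z := by
        by_cases hx1 : x = u₀
        · exact ⟨y, hx1 ▸ hxy⟩
        · by_cases hx2 : x = v₀
          · have hadj' : G.Adj v₀ y := hx2 ▸ hxy
            have hyu : y ≠ u₀ := fun h => hnadj0 (h ▸ hadj').symm
            have hyv : y ≠ v₀ := hadj'.ne'
            exact ⟨y, (htrans y hyu hyv).mpr hadj'⟩
          · exact ⟨x, hclass x hx1 hx2⟩
      obtain ⟨z1, hz1⟩ := hzex
      by_cases hz2ex : ∃ z, G.Adj u₀ z ∧ z ≠ z1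
      case pos =>
        obtain ⟨z2, hz2, hz2ne⟩ := hz2ex
        have hcover : ∀ z, G.Adj u₀ z → z = z1 ∨ z = z2 := by
          intro z hz
          by_contra hcon
          push_neg at hcon
          exact hNoTriple ⟨z1, z2, z, hz1, hz2, hz, hz2ne.symm, Ne.symm hcon.1,
            Ne.symm hcon.2⟩
        have hesub : G.edgeSet ⊆
            {s(u₀, z1), s(u₀, z2), s(v₀, z1), s(v₀, z2)} := by
          intro e he
          induction e with
          | _ p q =>
            have hpq : G.Adj p q := he
            by_cases hpu : p = u₀
            · rw [hpu] at hpq ⊢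
              have hqu : q ≠ u₀ := hpq.ne'
              have hqv : q ≠ v₀ := fun h => hnadj0 (h ▸ hpq)
              rcases hcover q (hclass q hqu hqv) with rfl | rfl
              · simp
              · simp
            · by_cases hpv : p = v₀
              · rw [hpv] at hpq ⊢
                have hqu : q ≠ u₀ := fun h => hnadj0 (h ▸ hpq).symm
                have hqv : q ≠ v₀ := hpq.ne'
                have : G.Adj u₀ q := (htrans q hqu hqv).mpr hpq
                rcases hcover q this with rfl | rfl
                · simp
                · simp
              · have hpu' : G.Adj u₀ p := hclass p hpu hpv
                by_cases hqu : q = u₀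
                · rw [hqu, Sym2.eq_swap]
                  rcases hcover p hpu' with rfl | rfl
                  · simp
                  · simp
                · by_cases hqv : q = v₀
                  · rw [hqv, Sym2.eq_swap]
                    rcases hcover p hpu' with rfl | rfl
                    · simp
                    · simp
                  · exact (no_triangle hfree hpu' (hclass q hqu hqv) hpq).elim
        have hm4 : G.edgeSet.ncard ≤ 4 := by
          have hfin4 : ({s(u₀, z1), s(u₀, z2), s(v₀, z1), s(v₀, z2)} :
              Set (Sym2 V)).Finite := by
            exact (Set.finite_singleton _).insert _ |>.insert _ |>.insert _
          have h0 := Set.ncard_le_ncard hesub hfin4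
          have h4 := Set.ncard_insert_le s(u₀, z1)
            ({s(u₀, z2), s(v₀, z1), s(v₀, z2)} : Set (Sym2 V))
          have h5 := Set.ncard_insert_le s(u₀, z2)
            ({s(v₀, z1), s(v₀, z2)} : Set (Sym2 V))
          have h6 := Set.ncard_insert_le s(v₀, z1) ({s(v₀, z2)} : Set (Sym2 V))
          have h7 : ({s(v₀, z2)} : Set (Sym2 V)).ncard = 1 := Set.ncard_singleton _
          omega
        omega
      case neg =>
        push_neg at hz2ex
        have hcover : ∀ z, G.Adj u₀ z → z = z1 := fun z hz => hz2ex z hz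
        have hesub : G.edgeSet ⊆ {s(u₀, z1), s(v₀, z1)} := by
          intro e he
          induction e with
          | _ p q =>
            have hpq : G.Adj p q := he
            by_cases hpu : p = u₀
            · rw [hpu] at hpq ⊢
              have hqu : q ≠ u₀ := hpq.ne'
              have hqv : q ≠ v₀ := fun h => hnadj0 (h ▸ hpq)
              rw [hcover q (hclass q hqu hqv)]
              simp
            · by_cases hpv : p = v₀
              · rw [hpv] at hpq ⊢
                have hqu : q ≠ u₀ := fun h => hnadj0 (h ▸ hpq).symm
                have hqv : q ≠ v₀ := hpq.ne'
                rw [hcover q ((htrans q hqu hqv).mpr hpq)]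
                simp
              · have hpu' : G.Adj u₀ p := hclass p hpu hpv
                by_cases hqu : q = u₀
                · rw [hqu, Sym2.eq_swap, hcover p hpu']
                  simp
                · by_cases hqv : q = v₀
                  · rw [hqv, Sym2.eq_swap, hcover p hpu']
                    simp
                  · exact (no_triangle hfree hpu' (hclass q hqu hqv) hpq).elim
        have hm2 : G.edgeSet.ncard ≤ 2 := by
          have hfin2 : ({s(u₀, z1), s(v₀, z1)} : Set (Sym2 V)).Finite :=
            (Set.finite_singleton _).insert _
          have h0 := Set.ncard_le_ncard hesub hfin2
          have h4 := Set.ncard_insert_le s(u₀, z1) ({s(v₀, z1)} : Set (Sym2 V))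
          have h7 : ({s(v₀, z1)} : Set (Sym2 V)).ncard = 1 := Set.ncard_singleton _
          omega
        have hU1 : 1 ≤ U.ncard := by
          have : a ∈ U := hmemU x a ha.1
          have := Set.ncard_le_ncard (Set.singleton_subset_iff.mpr this) hUfin
          simp only [Set.ncard_singleton] at this
          omega
        omega
  · -- main case: all sets distinct
    push_neg at heqex
    have heqv : ∀ u v : V, u ≠ v → f u ≠ f v := heqex
    set E' : Set (Sym2 V) := {e ∈ G.edgeSet | ¬ BothC G f e} with hE'
    have hE'fin : E'.Finite := hEfin.subset (Set.sep_subset _ _)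
    have hmap : ∀ e ∈ E', phi G f e ∈ U := by
      rintro e ⟨he, hb⟩
      rcases shape hrep e he hb with ⟨u, v, rfl, _, _, _, hα⟩ |
          ⟨c, y, rfl, _, _, _, hα⟩
      · exact hmemU u _ (Finset.mem_inter.mp hα).1
      · exact hmemU y _ (Finset.mem_sdiff.mp hα).1
    have h2 : E'.ncard ≤ U.ncard :=
      Set.ncard_le_ncard_of_injOn (phi G f) hmap
        (phi_injOn hrep hfree hsc heqv) hUfin
    have h1 : G.edgeSet.ncard ≤ E'.ncard + 1 := by
      by_cases h2c : ∃ c c' : V, c ≠ c' ∧ Center G f c ∧ Center G f c'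
      · obtain ⟨c, c', hnecc, hc, hc'⟩ := h2c
        have hsubE : G.edgeSet ⊆ insert s(c, c') E' := by
          intro e he
          by_cases hb : BothC G f e
          · have : e = s(c, c') := by
              induction e with
              | _ p q =>
                have hpq : G.Adj p q := he
                have hbc : Center G f p ∧ Center G f q := hb
                have hp : p = c ∨ p = c' := by
                  by_contra h
                  push_neg at h
                  exact no_triangle hfree (centers_adj hnecc hc hc')
                    (centers_adj (Ne.symm h.1) hc hbc.1)
                    (centers_adj (Ne.symm h.2) hc' hbc.1)
                have hq : q = c ∨ q = c' := by
                  by_contra h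
                  push_neg at h
                  exact no_triangle hfree (centers_adj hnecc hc hc')
                    (centers_adj (Ne.symm h.1) hc hbc.2)
                    (centers_adj (Ne.symm h.2) hc' hbc.2)
                rcases hp with rfl | rfl <;> rcases hq with rfl | rfl
                · exact absurd rfl hpq.ne
                · rfl
                · exact Sym2.eq_swap
                · exact absurd rfl hpq.ne
            exact this ▸ Set.mem_insert _ _
          · exact Set.mem_insert_of_mem _ ⟨he, hb⟩
        calc G.edgeSet.ncard ≤ (insert s(c, c') E').ncard :=
              Set.ncard_le_ncard hsubE (hE'fin.insert _)
          _ ≤ E'.ncard + 1 := Set.ncard_insert_le _ _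
      · have hEeq : E' = G.edgeSet := by
          refine Set.Subset.antisymm (Set.sep_subset _ _) ?_
          intro e he
          refine ⟨he, fun hb => ?_⟩
          have : ∃ p q : V, p ≠ q ∧ Center G f p ∧ Center G f q := by
            induction e with
            | _ p q =>
              have hpq : G.Adj p q := he
              have hbc : Center G f p ∧ Center G f q := hb
              exact ⟨p, q, hpq.ne, hbc.1, hbc.2⟩
          obtain ⟨p, q, h1, h2, h3⟩ := this
          exact h2c ⟨p, q, h1, h2, h3⟩
        rw [hEeq] at h2 ⊢
        omega
    omega

/-- Every finite graph has an overlap representation. -/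
lemma exists_rep [Fintype V] (G : SimpleGraph V) : ∃ f : V → Finset ℕ, IsOverlapRep G f := by
  classical
  let gV : V ↪ ℕ := (Fintype.equivFin V).toEmbedding.trans (Fin.valEmbedding)
  let gE : Sym2 V ↪ ℕ := (Fintype.equivFin (Sym2 V)).toEmbedding.trans (Fin.valEmbedding)
  set f : V → Finset ℕ := fun v =>
    ((Finset.univ.filter (fun u => G.Adj v u)).image (fun u => 2 * gE s(v, u))) ∪
      {2 * gV v + 1} with hf
  have hmem_iff : ∀ v t, t ∈ f v ↔
      ((∃ u, G.Adj v u ∧ t = 2 * gE s(v, u)) ∨ t = 2 * gV v + 1) := by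
    intro v t
    simp only [hf, Finset.mem_union, Finset.mem_image, Finset.mem_filter,
      Finset.mem_univ, true_and, Finset.mem_singleton]
    constructor
    · rintro (⟨u, hu, rfl⟩ | h)
      · exact Or.inl ⟨u, hu, rfl⟩
      · exact Or.inr h
    · rintro (⟨u, hu, rfl⟩ | h)
      · exact Or.inl ⟨u, hu, rfl⟩
      · exact Or.inr h
  have htag : ∀ u v : V, (2 * gV u + 1) ∈ f v → u = v := by
    intro u v h
    rcases (hmem_iff v _).mp h with ⟨w, _, hw⟩ | h
    · omega
    · have : gV u = gV v := by omega
      exact gV.injective this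
  refine ⟨f, ?_⟩
  intro u v huv
  constructor
  · intro hadj
    refine ⟨⟨2 * gE s(u, v), ?_⟩, ?_, ?_⟩
    · rw [Finset.mem_inter]
      constructor
      · exact (hmem_iff u _).mpr (Or.inl ⟨v, hadj, rfl⟩)
      · refine (hmem_iff v _).mpr (Or.inl ⟨u, hadj.symm, ?_⟩)
        rw [Sym2.eq_swap]
    · intro hsub
      exact huv (htag u v (hsub ((hmem_iff u _).mpr (Or.inr rfl))))
    · intro hsub
      exact huv.symm (htag v u (hsub ((hmem_iff v _).mpr (Or.inr rfl))))
  · rintro ⟨⟨t, ht⟩, -, -⟩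
    rw [Finset.mem_inter] at ht
    rcases (hmem_iff u t).mp ht.1 with ⟨a, ha, hta⟩ | hta <;>
      rcases (hmem_iff v t).mp ht.2 with ⟨b, hb, htb⟩ | htb
    · have : gE s(u, a) = gE s(v, b) := by omega
      have hEq : s(u, a) = s(v, b) := gE.injective this
      rcases Sym2.eq_iff.mp hEq with ⟨h1, _⟩ | ⟨_, h2⟩
      · exact absurd h1 huv
      · rw [h2] at ha
        exact ha
    · omega
    · omega
    · have : gV u = gV v := by omega
      exact absurd (gV.injective this) huv

end OverlapAux

theorem stmt_16 {V : Type*} [Fintype V] (G : SimpleGraph V)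
    (hfree : G.CliqueFree 3) (hsc : ¬ HasStarCutset G) :
    (∀ f : V → Finset ℕ, IsOverlapRep G f → G.edgeSet.ncard - 1 ≤ repSize f) ∧
    G.edgeSet.ncard - 1 ≤ overlapNumber G := by
  have h1 : ∀ f : V → Finset ℕ, IsOverlapRep G f → G.edgeSet.ncard - 1 ≤ repSize f :=
    fun f hf => OverlapAux.count_main hf hfree hsc
  refine ⟨h1, ?_⟩
  obtain ⟨f₀, hf₀⟩ := OverlapAux.exists_rep G
  have hne : {n | ∃ f : V → Finset ℕ, IsOverlapRep G f ∧ repSize f = n}.Nonempty :=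
    ⟨repSize f₀, f₀, hf₀, rfl⟩
  obtain ⟨f₁, hf₁, hsize⟩ := Nat.sInf_mem hne
  rw [overlapNumber, ← hsize]
  exact h1 f₁ hf₁
end

section
/- If v is a leaf (degree-1 vertex) in a graph G and G − v has at least one edge, then φ(G) ≤ φ(G − v) + 2. -/
namespace Ov17

def sh (s : Finset ℕ) : Finset ℕ := s.image (· + 3)

lemma add3_inj : Function.Injective (· + 3 : ℕ → ℕ) := add_left_injective 3

lemma mem_sh {s : Finset ℕ} {m : ℕ} : m ∈ sh s ↔ ∃ a ∈ s, a + 3 = m := Finset.mem_image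

lemma sh_ge {s : Finset ℕ} {m : ℕ} (h : m ∈ sh s) : 3 ≤ m := by
  obtain ⟨a, -, rfl⟩ := mem_sh.mp h; omega

lemma sh_nonempty {s : Finset ℕ} : (sh s).Nonempty ↔ s.Nonempty := Finset.image_nonempty

lemma nonempty_iff {s t E F : Finset ℕ} (hE : ∀ m ∈ E, m < 3) (hF : ∀ m ∈ F, m < 3) :
    ((sh s ∪ E) ∩ (sh t ∪ F)).Nonempty ↔ ((s ∩ t).Nonempty ∨ (E ∩ F).Nonempty) := by
  constructor
  · rintro ⟨m, hm⟩
    simp only [Finset.mem_inter, Finset.mem_union] at hm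
    obtain ⟨h1 | h1, h2 | h2⟩ := hm
    · obtain ⟨a, ha, rfl⟩ := mem_sh.mp h1
      obtain ⟨b, hb, hba⟩ := mem_sh.mp h2
      exact Or.inl ⟨a, Finset.mem_inter.mpr ⟨ha, by rwa [add3_inj hba] at hb⟩⟩
    · exact absurd (hF m h2) (by have := sh_ge h1; omega)
    · exact absurd (hE m h1) (by have := sh_ge h2; omega)
    · exact Or.inr ⟨m, Finset.mem_inter.mpr ⟨h1, h2⟩⟩
  · rintro (⟨a, ha⟩ | ⟨m, hm⟩)
    · rw [Finset.mem_inter] at ha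
      exact ⟨a + 3, Finset.mem_inter.mpr ⟨Finset.mem_union_left _ (mem_sh.mpr ⟨a, ha.1, rfl⟩),
        Finset.mem_union_left _ (mem_sh.mpr ⟨a, ha.2, rfl⟩)⟩⟩
    · rw [Finset.mem_inter] at hm
      exact ⟨m, Finset.mem_inter.mpr ⟨Finset.mem_union_right _ hm.1,
        Finset.mem_union_right _ hm.2⟩⟩

lemma subset_iff {s t E F : Finset ℕ} (hE : ∀ m ∈ E, m < 3) (hF : ∀ m ∈ F, m < 3) :
    (sh s ∪ E) ⊆ (sh t ∪ F) ↔ (s ⊆ t ∧ E ⊆ F) := by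
  constructor
  · intro h
    constructor
    · intro a ha
      have := h (Finset.mem_union_left _ (mem_sh.mpr ⟨a, ha, rfl⟩))
      rcases Finset.mem_union.mp this with h1 | h1
      · obtain ⟨b, hb, hba⟩ := mem_sh.mp h1
        rwa [← add3_inj hba]
      · exact absurd (hF _ h1) (by omega)
    · intro m hm
      have := h (Finset.mem_union_right _ hm)
      rcases Finset.mem_union.mp this with h1 | h1
      · exact absurd (hE m hm) (by have := sh_ge h1; omega)
      · exact h1
  · rintro ⟨h1, h2⟩ m hm
    rcases Finset.mem_union.mp hm with h | h
    · obtain ⟨a, ha, rfl⟩ := mem_sh.mp h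
      exact Finset.mem_union_left _ (mem_sh.mpr ⟨a, h1 ha, rfl⟩)
    · exact Finset.mem_union_right _ (h2 h)

lemma rep_of_scheme {V : Type*} (G : SimpleGraph V) (F E : V → Finset ℕ)
    (hLow : ∀ u, ∀ m ∈ E u, m < 3)
    (hiff : ∀ u u', u ≠ u' → (G.Adj u u' ↔
      (((F u ∩ F u').Nonempty ∨ (E u ∩ E u').Nonempty) ∧
        ¬(F u ⊆ F u' ∧ E u ⊆ E u') ∧ ¬(F u' ⊆ F u ∧ E u' ⊆ E u)))) :
    IsOverlapRep G (fun u => sh (F u) ∪ E u) := by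
  intro u u' huu
  rw [hiff u u' huu, nonempty_iff (hLow u) (hLow u'), subset_iff (hLow u) (hLow u'),
    subset_iff (hLow u') (hLow u)]

lemma union_scheme_subset {V : Type*} (F E : V → Finset ℕ)
    (hE : ∀ u, E u ⊆ ({0, 1} : Finset ℕ)) :
    (⋃ u, ((sh (F u) ∪ E u : Finset ℕ) : Set ℕ)) ⊆
      ((· + 3) '' (⋃ u, (F u : Set ℕ))) ∪ {0, 1} := by
  rintro m hm
  simp only [Set.mem_iUnion, Finset.coe_union, Set.mem_union, Finset.mem_coe] at hm
  obtain ⟨u, h | h⟩ := hm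
  · obtain ⟨a, ha, rfl⟩ := mem_sh.mp h
    exact Or.inl ⟨a, Set.mem_iUnion.mpr ⟨u, ha⟩, rfl⟩
  · have := hE u h
    simp only [Finset.mem_insert, Finset.mem_singleton] at this
    rcases this with rfl | rfl <;> simp

lemma union_scheme_supset {V : Type*} (F E : V → Finset ℕ) :
    ((· + 3) '' (⋃ u, (F u : Set ℕ))) ⊆ (⋃ u, ((sh (F u) ∪ E u : Finset ℕ) : Set ℕ)) := by
  rintro m ⟨a, ha, rfl⟩
  obtain ⟨u, hu⟩ := Set.mem_iUnion.mp ha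
  exact Set.mem_iUnion.mpr ⟨u, by
    simp only [Finset.coe_union, Set.mem_union, Finset.mem_coe]
    exact Or.inl (mem_sh.mpr ⟨a, hu, rfl⟩)⟩

lemma size_scheme_le {V : Type*} (F E : V → Finset ℕ)
    (hE : ∀ u, E u ⊆ ({0, 1} : Finset ℕ)) :
    repSize (fun u => sh (F u) ∪ E u) ≤ (⋃ u, (F u : Set ℕ)).ncard + 2 := by
  set U := (⋃ u, (F u : Set ℕ))
  by_cases hfin : U.Finite
  · calc repSize (fun u => sh (F u) ∪ E u)
        ≤ (((· + 3) '' U) ∪ {0, 1}).ncard := by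
          exact Set.ncard_le_ncard (union_scheme_subset F E hE)
            ((hfin.image _).union (Set.toFinite _))
      _ ≤ ((· + 3) '' U).ncard + ({0, 1} : Set ℕ).ncard := Set.ncard_union_le _ _
      _ = U.ncard + 2 := by
          rw [Set.ncard_image_of_injective _ add3_inj, Set.ncard_pair (by omega : (0:ℕ) ≠ 1)]
  · have : (⋃ u, ((sh (F u) ∪ E u : Finset ℕ) : Set ℕ)).Infinite :=
      ((Set.Infinite.image (Set.injOn_of_injective add3_inj) hfin)).mono
        (union_scheme_supset F E)
    rw [repSize, this.ncard]
    exact Nat.zero_le _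

lemma size_scheme_zero {V : Type*} (F E : V → Finset ℕ)
    (hinf : (⋃ u, (F u : Set ℕ)).Infinite) :
    repSize (fun u => sh (F u) ∪ E u) = 0 := by
  have : (⋃ u, ((sh (F u) ∪ E u : Finset ℕ) : Set ℕ)).Infinite :=
    ((Set.Infinite.image (Set.injOn_of_injective add3_inj) hinf)).mono
      (union_scheme_supset F E)
  rw [repSize, this.ncard]



lemma buildA {V : Type*} (G : SimpleGraph V) (v w : V)
    (hvu : ∀ u, G.Adj v u ↔ u = w) (hwv : w ≠ v)
    (F : V → Finset ℕ) (hFv : F v = ∅) (hFw : (F w).Nonempty)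
    (hGadj : ∀ u u', u ≠ v → u' ≠ v → u ≠ u' →
      (G.Adj u u' ↔ ((F u ∩ F u').Nonempty ∧ ¬ F u ⊆ F u' ∧ ¬ F u' ⊆ F u))) :
    ∃ g : V → Finset ℕ, IsOverlapRep G g ∧
      repSize g ≤ (⋃ u, (F u : Set ℕ)).ncard + 2 := by
  classical
  set E : V → Finset ℕ := fun u =>
    if u = v then {0,1} else if u = w then {0} else
      if F w ⊆ F u then {0,1} else ∅ with hE
  have hEsub : ∀ u, E u ⊆ ({0,1} : Finset ℕ) := by
    intro u
    simp only [hE]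
    split_ifs <;> first | exact Finset.Subset.refl _ | exact Finset.singleton_subset_iff.mpr (by decide) | exact Finset.empty_subset _
  have hLow : ∀ u, ∀ m ∈ E u, m < 3 := by
    intro u m hm
    have := hEsub u hm
    simp only [Finset.mem_insert, Finset.mem_singleton] at this
    omega
  have Ev : E v = {0,1} := by simp [hE]
  have Ew : E w = {0} := by simp [hE, hwv]
  have ET : ∀ u, u ≠ v → u ≠ w → F w ⊆ F u → E u = {0,1} := by
    intro u h1 h2 h3; simp [hE, h1, h2, h3]
  have EP : ∀ u, u ≠ v → u ≠ w → ¬ F w ⊆ F u → E u = ∅ := by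
    intro u h1 h2 h3; simp [hE, h1, h2, h3]
  have hFwv : ¬ F w ⊆ F v := fun h => hFw.ne_empty (Finset.subset_empty.mp (hFv ▸ h))
  have e01 : ((({0,1} : Finset ℕ)) ∩ {0}).Nonempty := ⟨0, by decide⟩
  have e10 : ((({0} : Finset ℕ)) ∩ {0,1}).Nonempty := ⟨0, by decide⟩
  have e11 : ((({0,1} : Finset ℕ)) ∩ {0,1}).Nonempty := ⟨0, by decide⟩
  have n01 : ¬ (({0,1} : Finset ℕ) ⊆ {0}) := by decide
  have n0e : ¬ (({0} : Finset ℕ) ⊆ ∅) := by decide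
  have n1e : ¬ (({0,1} : Finset ℕ) ⊆ ∅) := by decide
  refine ⟨fun u => sh (F u) ∪ E u, rep_of_scheme G F E hLow ?_, size_scheme_le F E hEsub⟩
  intro u u' huu
  by_cases hu : u = v
  · subst hu
    by_cases hu' : u' = w
    · subst hu'
      rw [Ev, Ew]
      constructor
      · intro _
        exact ⟨Or.inr e01, fun h => n01 h.2, fun h => hFwv h.1⟩
      · intro _
        exact (hvu u').mpr rfl
    · -- u' ≠ w : Adj v u' is false
      rw [Ev, hvu u']
      constructor
      · intro h; exact absurd h hu'
      · by_cases hT : F w ⊆ F u'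
        · rw [ET u' (Ne.symm huu) hu' hT]
          rintro ⟨-, h2, -⟩
          exact absurd ⟨hFv ▸ Finset.empty_subset _, subset_rfl⟩ h2
        · rw [EP u' (Ne.symm huu) hu' hT]
          rintro ⟨h1 | h1, -, -⟩
          · rw [hFv] at h1; simp at h1
          · simp at h1
  · by_cases hu' : u' = v
    · subst hu'
      by_cases huw : u = w
      · subst huw
        rw [Ev, Ew]
        constructor
        · intro _
          exact ⟨Or.inr e10, fun h => hFwv h.1, fun h => n01 h.2⟩
        · intro _
          exact ((G.adj_comm _ _).mp ((hvu u).mpr rfl))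
      · rw [G.adj_comm, hvu u, Ev]
        constructor
        · intro h; exact absurd h huw
        · by_cases hT : F w ⊆ F u
          · rw [ET u hu huw hT]
            rintro ⟨-, -, h3⟩
            exact absurd ⟨hFv ▸ Finset.empty_subset _, subset_rfl⟩ h3
          · rw [EP u hu huw hT]
            rintro ⟨h1 | h1, -, -⟩
            · rw [hFv] at h1; simp at h1
            · simp at h1
    · -- both ≠ v
      rw [hGadj u u' hu hu' huu]
      by_cases huw : u = w
      · subst huw
        rw [Ew]
        by_cases hT : F u ⊆ F u'
        · rw [ET u' hu' (Ne.symm huu) hT]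
          constructor
          · rintro ⟨-, h2, -⟩; exact absurd hT h2
          · rintro ⟨-, h2, -⟩
            exact absurd ⟨hT, by decide⟩ h2
        · rw [EP u' hu' (Ne.symm huu) hT]
          constructor
          · rintro ⟨h1, h2, h3⟩
            exact ⟨Or.inl h1, fun h => n0e h.2, fun h => h3 h.1⟩
          · rintro ⟨h1 | h1, -, h3⟩
            · exact ⟨h1, hT, fun hc => h3 ⟨hc, Finset.empty_subset _⟩⟩
            · simp at h1
      · by_cases hu'w : u' = w
        · subst hu'w
          rw [Ew]
          by_cases hT : F u' ⊆ F u
          · rw [ET u hu huw hT]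
            constructor
            · rintro ⟨-, -, h3⟩; exact absurd hT h3
            · rintro ⟨-, -, h3⟩
              exact absurd ⟨hT, by decide⟩ h3
          · rw [EP u hu huw hT]
            constructor
            · rintro ⟨h1, h2, h3⟩
              exact ⟨Or.inl h1, fun h => h2 h.1, fun h => n0e h.2⟩
            · rintro ⟨h1 | h1, h2, -⟩
              · exact ⟨h1, fun hc => h2 ⟨hc, Finset.empty_subset _⟩, hT⟩
              · simp at h1
        · -- neither is v or w
          by_cases hTu : F w ⊆ F u <;> by_cases hTu' : F w ⊆ F u'
          · rw [ET u hu huw hTu, ET u' hu' hu'w hTu']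
            obtain ⟨a, ha⟩ := hFw
            have hin : (F u ∩ F u').Nonempty :=
              ⟨a, Finset.mem_inter.mpr ⟨hTu ha, hTu' ha⟩⟩
            constructor
            · rintro ⟨-, h2, h3⟩
              exact ⟨Or.inl hin, fun h => h2 h.1, fun h => h3 h.1⟩
            · rintro ⟨-, h2, h3⟩
              exact ⟨hin, fun h => h2 ⟨h, subset_rfl⟩, fun h => h3 ⟨h, subset_rfl⟩⟩
          · rw [ET u hu huw hTu, EP u' hu' hu'w hTu']
            have hnuu' : ¬ F u ⊆ F u' := fun h => hTu' (hTu.trans h)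
            constructor
            · rintro ⟨h1, -, h3⟩
              exact ⟨Or.inl h1, fun h => n1e h.2, fun h => h3 h.1⟩
            · rintro ⟨h1 | h1, -, h3⟩
              · exact ⟨h1, hnuu', fun hc => h3 ⟨hc, Finset.empty_subset _⟩⟩
              · simp at h1
          · rw [EP u hu huw hTu, ET u' hu' hu'w hTu']
            have hnuu' : ¬ F u' ⊆ F u := fun h => hTu (hTu'.trans h)
            constructor
            · rintro ⟨h1, h2, -⟩
              exact ⟨Or.inl h1, fun h => h2 h.1, fun h => n1e h.2⟩
            · rintro ⟨h1 | h1, h2, -⟩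
              · exact ⟨h1, fun hc => h2 ⟨hc, Finset.empty_subset _⟩, hnuu'⟩
              · simp at h1
          · rw [EP u hu huw hTu, EP u' hu' hu'w hTu']
            constructor
            · rintro ⟨h1, h2, h3⟩
              exact ⟨Or.inl h1, fun h => h2 h.1, fun h => h3 h.1⟩
            · rintro ⟨h1 | h1, h2, h3⟩
              · exact ⟨h1, fun h => h2 ⟨h, subset_rfl⟩, fun h => h3 ⟨h, subset_rfl⟩⟩
              · simp at h1

lemma buildC {V : Type*} (G : SimpleGraph V) (v w : V)
    (hvu : ∀ u, G.Adj v u ↔ u = w) (hwv : w ≠ v)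
    (F : V → Finset ℕ) (hFv : F v = ∅) (hFw : F w = ∅)
    (hGadj : ∀ u u', u ≠ v → u' ≠ v → u ≠ u' →
      (G.Adj u u' ↔ ((F u ∩ F u').Nonempty ∧ ¬ F u ⊆ F u' ∧ ¬ F u' ⊆ F u)))
    (hinf : (⋃ u, (F u : Set ℕ)).Infinite) :
    ∃ g : V → Finset ℕ, IsOverlapRep G g ∧ repSize g = 0 := by
  classical
  set E : V → Finset ℕ := fun u =>
    if u = v then {0,1} else if u = w then {0,2} else ∅ with hE
  have hLow : ∀ u, ∀ m ∈ E u, m < 3 := by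
    intro u m hm
    simp only [hE] at hm
    split_ifs at hm <;>
      simp only [Finset.mem_insert, Finset.mem_singleton, Finset.notMem_empty] at hm <;>
      omega
  have Ev : E v = {0,1} := by simp [hE]
  have Ew : E w = {0,2} := by simp [hE, hwv]
  have EP : ∀ u, u ≠ v → u ≠ w → E u = ∅ := by
    intro u h1 h2; simp [hE, h1, h2]
  refine ⟨fun u => sh (F u) ∪ E u, rep_of_scheme G F E hLow ?_, size_scheme_zero F E hinf⟩
  intro u u' huu
  by_cases hu : u = v
  · subst hu
    by_cases hu' : u' = w
    · subst hu'
      rw [Ev, Ew]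
      constructor
      · intro _
        refine ⟨Or.inr ⟨0, by decide⟩, fun h => ?_, fun h => ?_⟩
        · exact (by decide : ¬ (({0,1} : Finset ℕ) ⊆ {0,2})) h.2
        · exact (by decide : ¬ (({0,2} : Finset ℕ) ⊆ {0,1})) h.2
      · intro _
        exact (hvu u').mpr rfl
    · rw [Ev, hvu u', EP u' (Ne.symm huu) hu']
      constructor
      · intro h; exact absurd h hu'
      · rintro ⟨h1 | h1, -, -⟩
        · rw [hFv] at h1; simp at h1
        · simp at h1
  · by_cases hu' : u' = v
    · subst hu'
      by_cases huw : u = w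
      · subst huw
        rw [Ev, Ew]
        constructor
        · intro _
          refine ⟨Or.inr ⟨0, by decide⟩, fun h => ?_, fun h => ?_⟩
          · exact (by decide : ¬ (({0,2} : Finset ℕ) ⊆ {0,1})) h.2
          · exact (by decide : ¬ (({0,1} : Finset ℕ) ⊆ {0,2})) h.2
        · intro _
          exact ((G.adj_comm _ _).mp ((hvu u).mpr rfl))
      · rw [G.adj_comm, hvu u, Ev, EP u hu huw]
        constructor
        · intro h; exact absurd h huw
        · rintro ⟨h1 | h1, -, -⟩
          · rw [hFv] at h1; simp at h1
          · simp at h1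
    · rw [hGadj u u' hu hu' huu]
      by_cases huw : u = w
      · subst huw
        rw [Ew, EP u' hu' (Ne.symm huu)]
        constructor
        · rintro ⟨h1, -, -⟩
          rw [hFw] at h1; simp at h1
        · rintro ⟨h1 | h1, -, -⟩
          · rw [hFw] at h1; simp at h1
          · simp at h1
      · by_cases hu'w : u' = w
        · subst hu'w
          rw [Ew, EP u hu huw]
          constructor
          · rintro ⟨h1, -, -⟩
            rw [hFw] at h1; simp at h1
          · rintro ⟨h1 | h1, -, -⟩
            · rw [hFw] at h1; simp at h1
            · simp at h1
        · rw [EP u hu huw, EP u' hu' hu'w]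
          constructor
          · rintro ⟨h1, h2, h3⟩
            exact ⟨Or.inl h1, fun h => h2 h.1, fun h => h3 h.1⟩
          · rintro ⟨h1 | h1, h2, h3⟩
            · exact ⟨h1, fun h => h2 ⟨h, subset_rfl⟩, fun h => h3 ⟨h, subset_rfl⟩⟩
            · simp at h1

lemma pad {W : Type*} (H : SimpleGraph W) (f : W → Finset ℕ) (hf : IsOverlapRep H f)
    (w : W) (hw : f w = ∅) (hfin : (⋃ x, (f x : Set ℕ)).Finite)
    (hne : (⋃ x, (f x : Set ℕ)).Nonempty) :
    ∃ f' : W → Finset ℕ, IsOverlapRep H f' ∧ repSize f' = repSize f ∧ (f' w).Nonempty := by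
  classical
  set U := hfin.toFinset with hU
  have hsub : ∀ x, f x ⊆ U := by
    intro x m hm
    rw [hU, Set.Finite.mem_toFinset]
    exact Set.mem_iUnion.mpr ⟨x, hm⟩
  refine ⟨Function.update f w U, ?_, ?_, ?_⟩
  · intro a b hab
    rcases eq_or_ne a w with rfl | ha
    · have hnadj : ¬ H.Adj a b := by
        rw [hf a b hab, hw]
        rintro ⟨h1, -⟩
        simp at h1
      rw [Function.update_self, Function.update_of_ne (Ne.symm hab)]
      exact iff_of_false hnadj (by rintro ⟨-, -, h3⟩; exact h3 (hsub b))
    · rcases eq_or_ne b w with rfl | hb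
      · have hnadj : ¬ H.Adj a b := by
          rw [hf a b hab, hw]
          rintro ⟨h1, -⟩
          simp at h1
        rw [Function.update_self, Function.update_of_ne ha]
        exact iff_of_false hnadj (by rintro ⟨-, h2, -⟩; exact h2 (hsub a))
      · rw [Function.update_of_ne ha, Function.update_of_ne hb]
        exact hf a b hab
  · have : (⋃ x, ((Function.update f w U x : Finset ℕ) : Set ℕ)) = ⋃ x, (f x : Set ℕ) := by
      apply Set.Subset.antisymm
      · apply Set.iUnion_subset
        intro x
        rcases eq_or_ne x w with rfl | hx
        · rw [Function.update_self, hU, Set.Finite.coe_toFinset]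
        · rw [Function.update_of_ne hx]
          exact Set.subset_iUnion (fun x => ((f x : Set ℕ))) x
      · apply Set.iUnion_subset
        intro x
        rcases eq_or_ne x w with rfl | hx
        · rw [hw]; simp
        · refine le_trans ?_ (Set.subset_iUnion (fun x => ((Function.update f w U x : Finset ℕ) : Set ℕ)) x)
          rw [Function.update_of_ne hx]
    rw [repSize, repSize, this]
  · rw [Function.update_self]
    obtain ⟨m, hm⟩ := hne
    exact ⟨m, by rwa [hU, Set.Finite.mem_toFinset]⟩

open Classical in
noncomputable def extFun {V : Type*} (v : V) (f : ↥{u : V | u ≠ v} → Finset ℕ) :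
    V → Finset ℕ :=
  fun u => if h : u ≠ v then f ⟨u, h⟩ else ∅

lemma extFun_v {V : Type*} (v : V) (f : ↥{u : V | u ≠ v} → Finset ℕ) :
    extFun v f v = ∅ := by
  simp [extFun]

lemma extFun_pos {V : Type*} (v : V) (f : ↥{u : V | u ≠ v} → Finset ℕ)
    (u : V) (h : u ≠ v) : extFun v f u = f ⟨u, h⟩ := by
  unfold extFun
  exact dif_pos h

lemma extFun_coe {V : Type*} (v : V) (f : ↥{u : V | u ≠ v} → Finset ℕ)
    (x : ↥{u : V | u ≠ v}) : extFun v f ↑x = f x := by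
  rcases x with ⟨a, ha⟩
  unfold extFun
  exact dif_pos ha

lemma bridge {V : Type*} (G : SimpleGraph V) (v : V)
    (f : ↥{u : V | u ≠ v} → Finset ℕ)
    (hf : IsOverlapRep (G.induce {u : V | u ≠ v}) f) :
    ∃ F : V → Finset ℕ, F v = ∅ ∧ (∀ x : ↥{u : V | u ≠ v}, F ↑x = f x) ∧
      (∀ u u', u ≠ v → u' ≠ v → u ≠ u' →
        (G.Adj u u' ↔ ((F u ∩ F u').Nonempty ∧ ¬ F u ⊆ F u' ∧ ¬ F u' ⊆ F u))) ∧
      (⋃ u, (F u : Set ℕ)) = ⋃ x, (f x : Set ℕ) := by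
  classical
  refine ⟨extFun v f, extFun_v v f, extFun_coe v f, ?_, ?_⟩
  · intro u u' hu hu' huu
    have h := hf ⟨u, hu⟩ ⟨u', hu'⟩ (fun h => huu (congrArg Subtype.val h))
    rw [extFun_pos v f u hu, extFun_pos v f u' hu']
    exact h
  · apply Set.Subset.antisymm
    · apply Set.iUnion_subset
      intro u
      by_cases hu : u ≠ v
      · rw [extFun_pos v f u hu]
        exact Set.subset_iUnion (fun x : ↥{u : V | u ≠ v} => ((f x : Set ℕ))) ⟨u, hu⟩
      · rw [not_ne_iff.mp hu, extFun_v]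
        simp
    · apply Set.iUnion_subset
      intro x
      refine le_trans ?_ (Set.subset_iUnion (fun u => ((extFun v f u : Set ℕ))) ↑x)
      rw [extFun_coe]

end Ov17

open Ov17 in
theorem stmt_17 {V : Type*} (G : SimpleGraph V) (v : V)
    (hleaf : (G.neighborSet v).ncard = 1)
    (hedge : ((G.induce {u : V | u ≠ v}).edgeSet).Nonempty) :
    overlapNumber G ≤ overlapNumber (G.induce {u : V | u ≠ v}) + 2 := by
  classical
  obtain ⟨w, hw⟩ := Set.ncard_eq_one.mp hleaf
  have hvu : ∀ u, G.Adj v u ↔ u = w := by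
    intro u
    rw [show G.Adj v u ↔ u ∈ G.neighborSet v from Iff.rfl, hw, Set.mem_singleton_iff]
  have hadjvw : G.Adj v w := (hvu w).mpr rfl
  have hwv : w ≠ v := hadjvw.ne'
  by_cases hS : {n | ∃ f : ↥{u : V | u ≠ v} → Finset ℕ,
      IsOverlapRep (G.induce {u : V | u ≠ v}) f ∧ repSize f = n}.Nonempty
  · obtain ⟨f, hf, hfsize⟩ := Nat.sInf_mem hS
    have hfsize' : repSize f = overlapNumber (G.induce {u : V | u ≠ v}) := hfsize
    obtain ⟨F, hFv, hFx, hGadj, hUeq⟩ := bridge G v f hf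
    have hW : (w : V) ∈ {u : V | u ≠ v} := hwv
    have hrep : ∃ g : V → Finset ℕ, IsOverlapRep G g ∧
        repSize g ≤ overlapNumber (G.induce {u : V | u ≠ v}) + 2 := by
      by_cases hwne : (f ⟨w, hW⟩).Nonempty
      · have hFw : (F w).Nonempty := by rw [hFx ⟨w, hW⟩]; exact hwne
        obtain ⟨g, hg, hgs⟩ := buildA G v w hvu hwv F hFv hFw hGadj
        refine ⟨g, hg, ?_⟩
        rw [hUeq] at hgs
        rw [← hfsize']
        exact hgs
      · have hfw : f ⟨w, hW⟩ = ∅ := Finset.not_nonempty_iff_eq_empty.mp hwne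
        by_cases hfin : (⋃ x, (f x : Set ℕ)).Finite
        · have hUne : (⋃ x, (f x : Set ℕ)).Nonempty := by
            obtain ⟨e, he⟩ := hedge
            have hab : ∃ a b : ↥{u : V | u ≠ v}, (G.induce {u : V | u ≠ v}).Adj a b := by
              induction e using Sym2.ind with
              | _ a b => exact ⟨a, b, he⟩
            obtain ⟨a, b, hab⟩ := hab
            obtain ⟨m, hm⟩ := ((hf a b hab.ne).mp hab).1
            exact ⟨m, Set.mem_iUnion.mpr ⟨a, (Finset.mem_inter.mp hm).1⟩⟩
          obtain ⟨f', hf', hsize', hne'⟩ := pad _ f hf ⟨w, hW⟩ hfw hfin hUne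
          obtain ⟨F', hFv', hFx', hGadj', hUeq'⟩ := bridge G v f' hf'
          have hFw' : (F' w).Nonempty := by rw [hFx' ⟨w, hW⟩]; exact hne'
          obtain ⟨g, hg, hgs⟩ := buildA G v w hvu hwv F' hFv' hFw' hGadj'
          refine ⟨g, hg, ?_⟩
          rw [hUeq'] at hgs
          have : (⋃ x, ((f' x : Finset ℕ) : Set ℕ)).ncard = repSize f := hsize'
          rw [this, hfsize'] at hgs
          exact hgs
        · have hFinf : (⋃ u, (F u : Set ℕ)).Infinite := by
            rw [hUeq]
            exact hfin
          have hFw0 : F w = ∅ := by rw [hFx ⟨w, hW⟩]; exact hfw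
          obtain ⟨g, hg, hgs⟩ := buildC G v w hvu hwv F hFv hFw0 hGadj hFinf
          exact ⟨g, hg, by rw [hgs]; exact Nat.zero_le _⟩
    obtain ⟨g, hg, hgs⟩ := hrep
    exact le_trans (Nat.sInf_le ⟨g, hg, rfl⟩) hgs
  · have hG : {n | ∃ g : V → Finset ℕ, IsOverlapRep G g ∧ repSize g = n} = ∅ := by
      rw [Set.eq_empty_iff_forall_notMem]
      rintro n ⟨g, hg, -⟩
      apply hS
      refine ⟨repSize (fun x : ↥{u : V | u ≠ v} => g ↑x),
        fun x => g ↑x, ?_, rfl⟩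
      intro a b hab
      exact hg ↑a ↑b (fun h => hab (Subtype.ext h))
    show sInf {n | ∃ g : V → Finset ℕ, IsOverlapRep G g ∧ repSize g = n} ≤ _
    rw [hG]
    simp [Nat.sInf_empty]
end

section
/- For n ≥ 2, the path P_n satisfies Φ(P_n) = n + 1, and for n ≥ 3, the cycle C_n satisfies Φ(C_n) = n. -/
noncomputable def pick (s : Finset ℕ) : ℕ := if h : s.Nonempty then s.min' h else 0

lemma pick_mem {s : Finset ℕ} (h : s.Nonempty) : pick s ∈ s := by
  rw [pick, dif_pos h]; exact s.min'_mem h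

lemma repSize_eq_card {V : Type*} [Fintype V] (f : V → Finset ℕ) :
    repSize f = (Finset.univ.biUnion f).card := by
  rw [repSize, ← Set.ncard_coe_finset]
  congr 1; ext x; simp [Finset.mem_biUnion]

lemma path_lower (n : ℕ) (hn : 2 ≤ n) (f : Fin n → Finset ℕ)
    (h : IsPureOverlapRep (SimpleGraph.pathGraph n) f) : n + 1 ≤ repSize f := by
  obtain ⟨hadj, hanti⟩ := h
  set a : ℕ → Fin n := fun k => ⟨k % n, Nat.mod_lt _ (by omega)⟩ with ha
  have haval : ∀ k, k < n → (a k).val = k := fun k hk => Nat.mod_eq_of_lt hk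
  have hane : ∀ k l, k < n → l < n → k ≠ l → a k ≠ a l := by
    intro k l hk hl hkl hcon
    have := congrArg Fin.val hcon
    rw [haval k hk, haval l hl] at this
    exact hkl this
  have hnadj : ∀ k l, k < n → l < n → k + 1 ≠ l → l + 1 ≠ k →
      ¬ (SimpleGraph.pathGraph n).Adj (a k) (a l) := by
    intro k l hk hl h1 h2 hA
    rw [SimpleGraph.pathGraph_adj, haval k hk, haval l hl] at hA
    omega
  have hdiff : ∀ (i j : Fin n), i ≠ j → pick (f i \ f j) ∈ f i ∧ pick (f i \ f j) ∉ f j := by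
    intro i j hij
    exact Finset.mem_sdiff.mp (pick_mem (Finset.sdiff_nonempty.mpr (hanti i j hij)))
  have hdisj : ∀ (i j : Fin n), i ≠ j → ¬ (SimpleGraph.pathGraph n).Adj i j →
      ∀ x, x ∈ f i → x ∉ f j := by
    intro i j hij hna x hxi hxj
    exact hna ((hadj i j hij).mpr ⟨x, Finset.mem_inter.mpr ⟨hxi, hxj⟩⟩)
  set g : ℕ → ℕ := fun k =>
    if k + 1 < n then pick (f (a k) \ f (a (k+1)))
    else if k + 1 = n then pick (f (a (n-1)) \ f (a (n-2)))
    else pick (f (a (n-2)) ∩ f (a (n-1))) with hg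
  have hg1 : ∀ k, k + 1 < n → g k = pick (f (a k) \ f (a (k+1))) := by
    intro k hk; simp only [hg]; rw [if_pos hk]
  have hg2 : ∀ k, k + 1 = n → g k = pick (f (a (n-1)) \ f (a (n-2))) := by
    intro k hk; simp only [hg]; rw [if_neg (by omega), if_pos hk]
  have hg3 : ∀ k, n < k + 1 → g k = pick (f (a (n-2)) ∩ f (a (n-1))) := by
    intro k hk; simp only [hg]; rw [if_neg (by omega), if_neg (by omega)]
  have hne12 : a (n-2) ≠ a (n-1) := hane _ _ (by omega) (by omega) (by omega)
  have hX : pick (f (a (n-2)) ∩ f (a (n-1))) ∈ f (a (n-2)) ∧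
      pick (f (a (n-2)) ∩ f (a (n-1))) ∈ f (a (n-1)) := by
    have hA : (SimpleGraph.pathGraph n).Adj (a (n-2)) (a (n-1)) := by
      rw [SimpleGraph.pathGraph_adj, haval _ (by omega), haval _ (by omega)]
      omega
    exact Finset.mem_inter.mp (pick_mem ((hadj _ _ hne12).mp hA))
  have hq : pick (f (a (n-1)) \ f (a (n-2))) ∈ f (a (n-1)) ∧
      pick (f (a (n-1)) \ f (a (n-2))) ∉ f (a (n-2)) := hdiff _ _ hne12.symm
  have hgk : ∀ k, k + 1 < n → g k ∈ f (a k) ∧ g k ∉ f (a (k+1)) := by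
    intro k hk
    rw [hg1 k hk]
    exact hdiff _ _ (hane _ _ (by omega) (by omega) (by omega))
  have claim : ∀ k₁ k₂, k₁ < k₂ → k₂ ≤ n → g k₁ ≠ g k₂ := by
    intro k₁ k₂ h12 h2n heq
    rcases Nat.lt_trichotomy (k₂ + 1) n with hc | hc | hc
    · -- both in first branch
      obtain ⟨m1, n1⟩ := hgk k₁ (by omega)
      obtain ⟨m2, n2⟩ := hgk k₂ hc
      rw [heq] at m1 n1
      by_cases hk : k₂ = k₁ + 1
      · subst hk; exact n1 m2
      · exact hdisj (a k₁) (a k₂) (hane k₁ k₂ (by omega) (by omega) (by omega))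
          (hnadj k₁ k₂ (by omega) (by omega) (by omega) (by omega)) _ m1 m2
    · -- k₂ = n - 1
      obtain ⟨m1, n1⟩ := hgk k₁ (by omega)
      rw [heq, hg2 k₂ hc] at m1 n1
      by_cases hk : k₁ = n - 2
      · rw [show k₁ + 1 = n - 1 by omega] at n1
        exact n1 hq.1
      · exact hdisj (a k₁) (a (n-1)) (hane k₁ (n-1) (by omega) (by omega) (by omega))
          (hnadj k₁ (n-1) (by omega) (by omega) (by omega) (by omega)) _ m1 hq.1
    · -- k₂ = n
      have hk2 : k₂ = n := by omega
      rw [hg3 k₂ (by omega)] at heq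
      rcases Nat.lt_trichotomy (k₁ + 1) n with hd | hd | hd
      · obtain ⟨m1, n1⟩ := hgk k₁ hd
        rw [heq] at m1 n1
        by_cases hk : k₁ = n - 2
        · rw [show k₁ + 1 = n - 1 by omega] at n1
          exact n1 hX.2
        · exact hdisj (a k₁) (a (n-1)) (hane k₁ (n-1) (by omega) (by omega) (by omega))
            (hnadj k₁ (n-1) (by omega) (by omega) (by omega) (by omega)) _ m1 hX.2
      · rw [hg2 k₁ hd] at heq
        rw [← heq] at hX
        exact hq.2 hX.1
      · omega
  rw [repSize_eq_card]
  have hsub : (Finset.range (n+1)).image g ⊆ Finset.univ.biUnion f := by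
    intro x hx
    obtain ⟨k, hk, rfl⟩ := Finset.mem_image.mp hx
    rw [Finset.mem_range] at hk
    rcases Nat.lt_trichotomy (k + 1) n with hc | hc | hc
    · exact Finset.mem_biUnion.mpr ⟨a k, Finset.mem_univ _, (hgk k hc).1⟩
    · rw [hg2 k hc]
      exact Finset.mem_biUnion.mpr ⟨a (n-1), Finset.mem_univ _, hq.1⟩
    · rw [hg3 k hc]
      exact Finset.mem_biUnion.mpr ⟨a (n-2), Finset.mem_univ _, hX.1⟩
  have hcard : ((Finset.range (n+1)).image g).card = n + 1 := by
    rw [Finset.card_image_of_injOn, Finset.card_range]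
    intro k₁ h1 k₂ h2 heq
    rw [Finset.coe_range, Set.mem_Iio] at h1 h2
    by_contra hne
    rcases lt_trichotomy k₁ k₂ with h' | h' | h'
    · exact claim k₁ k₂ h' (by omega) heq
    · exact hne h'
    · exact claim k₂ k₁ h' (by omega) heq.symm
  calc n + 1 = ((Finset.range (n+1)).image g).card := hcard.symm
    _ ≤ (Finset.univ.biUnion f).card := Finset.card_le_card hsub

lemma succ_mod (n k : ℕ) (h : k < n) : (k+1) % n = k+1 ∨ ((k+1) % n = 0 ∧ k + 1 = n) := by
  rcases Nat.lt_or_ge (k+1) n with h'|h'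
  · exact Or.inl (Nat.mod_eq_of_lt h')
  · have hk : k + 1 = n := by omega
    subst hk
    exact Or.inr ⟨Nat.mod_self _, rfl⟩

lemma cycleGraph_adj_val {n : ℕ} (hn : 2 ≤ n) {u v : Fin n} :
    (SimpleGraph.cycleGraph n).Adj u v ↔
      (u.val + 1) % n = v.val ∨ (v.val + 1) % n = u.val := by
  haveI : NeZero n := ⟨by omega⟩
  rw [SimpleGraph.cycleGraph_adj']
  have h1 : (1 : Fin n).val = 1 := by
    rw [Fin.val_one']; exact Nat.mod_eq_of_lt hn
  have key : ∀ a b : Fin n, (a - b).val = 1 ↔ (b.val + 1) % n = a.val := by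
    intro a b
    rw [show ((a - b).val = 1 ↔ a - b = 1) from by rw [Fin.ext_iff, h1]]
    rw [sub_eq_iff_eq_add, Fin.ext_iff, Fin.val_add, h1, add_comm]
    exact eq_comm
  rw [key, key]
  tauto

lemma path_upper (n : ℕ) (hn : 2 ≤ n) :
    ∃ f : Fin n → Finset ℕ, IsPureOverlapRep (SimpleGraph.pathGraph n) f ∧ repSize f = n + 1 := by
  refine ⟨fun i => {i.val, i.val + 1}, ⟨?_, ?_⟩, ?_⟩
  · intro u v huv
    have hne : u.val ≠ v.val := fun h => huv (Fin.ext h)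
    rw [SimpleGraph.pathGraph_adj]
    constructor
    · rintro (h | h)
      · exact ⟨u.val + 1, by simp [h]⟩
      · exact ⟨v.val + 1, by simp [h]⟩
    · rintro ⟨x, hx⟩
      simp only [Finset.mem_inter, Finset.mem_insert, Finset.mem_singleton] at hx
      omega
  · intro u v huv hsub
    have hne : u.val ≠ v.val := fun h => huv (Fin.ext h)
    have h1 := hsub (Finset.mem_insert_self _ _)
    have h2 := hsub (by simp : u.val + 1 ∈ ({u.val, u.val + 1} : Finset ℕ))
    simp only [Finset.mem_insert, Finset.mem_singleton] at h1 h2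
    omega
  · rw [repSize_eq_card]
    have : (Finset.univ.biUnion fun i : Fin n => ({i.val, i.val + 1} : Finset ℕ))
        = Finset.range (n + 1) := by
      ext x
      simp only [Finset.mem_biUnion, Finset.mem_univ, true_and, Finset.mem_insert,
        Finset.mem_singleton, Finset.mem_range]
      constructor
      · rintro ⟨i, h | h⟩ <;> have := i.isLt <;> omega
      · intro hx
        by_cases h : x < n
        · exact ⟨⟨x, h⟩, Or.inl rfl⟩
        · exact ⟨⟨n - 1, by omega⟩, Or.inr (by simp; omega)⟩
    rw [this, Finset.card_range]

lemma cycle_upper (n : ℕ) (hn : 3 ≤ n) :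
    ∃ f : Fin n → Finset ℕ, IsPureOverlapRep (SimpleGraph.cycleGraph n) f ∧ repSize f = n := by
  refine ⟨fun i => {i.val, (i.val + 1) % n}, ⟨?_, ?_⟩, ?_⟩
  · intro u v huv
    have hne : u.val ≠ v.val := fun h => huv (Fin.ext h)
    rw [cycleGraph_adj_val (by omega)]
    constructor
    · rintro (h | h)
      · exact ⟨v.val, Finset.mem_inter.mpr ⟨by simp [← h], by simp⟩⟩
      · exact ⟨u.val, Finset.mem_inter.mpr ⟨by simp, by simp [← h]⟩⟩
    · rintro ⟨x, hx⟩
      simp only [Finset.mem_inter, Finset.mem_insert, Finset.mem_singleton] at hx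
      rcases succ_mod n u.val u.isLt with hu | ⟨hu, hu'⟩ <;>
        rcases succ_mod n v.val v.isLt with hv | ⟨hv, hv'⟩ <;>
        rw [hu, hv] at hx ⊢ <;> omega
  · intro u v huv hsub
    have hne : u.val ≠ v.val := fun h => huv (Fin.ext h)
    have h1 := hsub (Finset.mem_insert_self _ _)
    have h2 := hsub (by simp : (u.val + 1) % n ∈ ({u.val, (u.val + 1) % n} : Finset ℕ))
    simp only [Finset.mem_insert, Finset.mem_singleton] at h1 h2
    have hu2 := u.isLt
    have hv2 := v.isLt
    rcases succ_mod n u.val u.isLt with hu | ⟨hu, hu'⟩ <;>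
      rcases succ_mod n v.val v.isLt with hv | ⟨hv, hv'⟩ <;>
      rw [hv] at h1 <;> rw [hu, hv] at h2 <;> omega
  · rw [repSize_eq_card]
    have : (Finset.univ.biUnion fun i : Fin n => ({i.val, (i.val + 1) % n} : Finset ℕ))
        = Finset.range n := by
      ext x
      simp only [Finset.mem_biUnion, Finset.mem_univ, true_and, Finset.mem_insert,
        Finset.mem_singleton, Finset.mem_range]
      constructor
      · rintro ⟨i, h | h⟩
        · have := i.isLt; omega
        · have := Nat.mod_lt (i.val + 1) (show 0 < n by omega); omega
      · intro hx
        exact ⟨⟨x, hx⟩, Or.inl rfl⟩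
    rw [this, Finset.card_range]

lemma cycle_lower (n : ℕ) (hn : 3 ≤ n) (f : Fin n → Finset ℕ)
    (h : IsPureOverlapRep (SimpleGraph.cycleGraph n) f) : n ≤ repSize f := by
  obtain ⟨hadj, hanti⟩ := h
  set a : ℕ → Fin n := fun k => ⟨k % n, Nat.mod_lt _ (by omega)⟩ with ha
  have haval : ∀ k, k < n → (a k).val = k := fun k hk => Nat.mod_eq_of_lt hk
  have hane : ∀ k l, k < n → l < n → k ≠ l → a k ≠ a l := by
    intro k l hk hl hkl hcon
    have := congrArg Fin.val hcon
    rw [haval k hk, haval l hl] at this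
    exact hkl this
  have hdiff : ∀ (i j : Fin n), i ≠ j → pick (f i \ f j) ∈ f i ∧ pick (f i \ f j) ∉ f j := by
    intro i j hij
    have := pick_mem (Finset.sdiff_nonempty.mpr (hanti i j hij))
    exact Finset.mem_sdiff.mp this
  have hdisj : ∀ (i j : Fin n), i ≠ j → ¬ (SimpleGraph.cycleGraph n).Adj i j →
      ∀ x, x ∈ f i → x ∉ f j := by
    intro i j hij hna x hxi hxj
    exact hna ((hadj i j hij).mpr ⟨x, Finset.mem_inter.mpr ⟨hxi, hxj⟩⟩)
  set g : ℕ → ℕ := fun k => pick (f (a k) \ f (a ((k+1) % n))) with hg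
  have hmodlt : ∀ k, (k+1) % n < n := fun k => Nat.mod_lt _ (by omega)
  have hgk : ∀ k, k < n → g k ∈ f (a k) ∧ g k ∉ f (a ((k+1)%n)) := by
    intro k hk
    apply hdiff
    apply hane k _ hk (hmodlt k)
    rcases succ_mod n k hk with h' | ⟨h', h''⟩ <;> omega
  have claim : ∀ k₁ k₂, k₁ < k₂ → k₂ < n → g k₁ ≠ g k₂ := by
    intro k₁ k₂ h12 h2 heq
    obtain ⟨m1, n1⟩ := hgk k₁ (by omega)
    obtain ⟨m2, n2⟩ := hgk k₂ h2
    rw [heq] at m1 n1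
    have hne : a k₁ ≠ a k₂ := hane _ _ (by omega) h2 (by omega)
    by_cases hA : (SimpleGraph.cycleGraph n).Adj (a k₁) (a k₂)
    · rw [cycleGraph_adj_val (by omega), haval k₁ (by omega), haval k₂ h2] at hA
      rcases hA with h' | h'
      · have : a ((k₁+1) % n) = a k₂ := by
          apply Fin.ext
          rw [haval _ (hmodlt k₁), haval _ h2, h']
        rw [this] at n1
        exact n1 m2
      · have : a ((k₂+1) % n) = a k₁ := by
          apply Fin.ext
          rw [haval _ (hmodlt k₂), haval _ (by omega : k₁ < n), h']
        rw [this] at n2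
        exact n2 m1
    · exact hdisj _ _ hne hA _ m1 m2
  rw [repSize_eq_card]
  have hsub : (Finset.range n).image g ⊆ Finset.univ.biUnion f := by
    intro x hx
    obtain ⟨k, hk, rfl⟩ := Finset.mem_image.mp hx
    rw [Finset.mem_range] at hk
    exact Finset.mem_biUnion.mpr ⟨a k, Finset.mem_univ _, (hgk k hk).1⟩
  have hcard : ((Finset.range n).image g).card = n := by
    rw [Finset.card_image_of_injOn, Finset.card_range]
    intro k₁ h1 k₂ h2 heq
    rw [Finset.coe_range, Set.mem_Iio] at h1 h2
    by_contra hne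
    rcases lt_trichotomy k₁ k₂ with h' | h' | h'
    · exact claim k₁ k₂ h' h2 heq
    · exact hne h'
    · exact claim k₂ k₁ h' h1 heq.symm
  calc n = ((Finset.range n).image g).card := hcard.symm
    _ ≤ (Finset.univ.biUnion f).card := Finset.card_le_card hsub

theorem stmt_18 :
    (∀ n : ℕ, 2 ≤ n → pureOverlapNumber (SimpleGraph.pathGraph n) = n + 1) ∧
    (∀ n : ℕ, 3 ≤ n → pureOverlapNumber (SimpleGraph.cycleGraph n) = n) := by
  constructor
  · intro n hn
    obtain ⟨f, hf, hs⟩ := path_upper n hn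
    have hmem : (n + 1) ∈ {m | ∃ f : Fin n → Finset ℕ,
        IsPureOverlapRep (SimpleGraph.pathGraph n) f ∧ repSize f = m} := ⟨f, hf, hs⟩
    refine le_antisymm (Nat.sInf_le hmem) (le_csInf ⟨_, hmem⟩ ?_)
    rintro m ⟨f', hf', rfl⟩
    exact path_lower n hn f' hf'
  · intro n hn
    obtain ⟨f, hf, hs⟩ := cycle_upper n hn
    have hmem : n ∈ {m | ∃ f : Fin n → Finset ℕ,
        IsPureOverlapRep (SimpleGraph.cycleGraph n) f ∧ repSize f = m} := ⟨f, hf, hs⟩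
    refine le_antisymm (Nat.sInf_le hmem) (le_csInf ⟨_, hmem⟩ ?_)
    rintro m ⟨f', hf', rfl⟩
    exact cycle_lower n hn f' hf'
end
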